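/- arXiv:math/0009036 — 8 statements merged into one kernel-verified Lean document; each statement's English description precedes it below -/
import Mathlib

section
/- Euler's pentagonal number theorem: in the ring of formal power series in q with integer coefficients, the infinite product (q)_∞ = ∏_{k=1}^∞ (1 − q^k) equals 1 + Σ_{r=1}^∞ (−1)^r (q^{r(3r−1)/2} + q^{r(3r+1)/2}). -/
open PowerSeries Finset

/-- The finite product `(q)_n = ∏_{k=1}^n (1 - q^k)` in `ℤ⟦q⟧`. -/
noncomputable def qPoch (n : ℕ) : PowerSeries ℤ :=
  ∏ k ∈ Finset.range n, (1 - (PowerSeries.X : PowerSeries ℤ) ^ (k + 1))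

/-- The infinite product `(q)_∞ = ∏_{k=1}^∞ (1 - q^k)` in `ℤ⟦q⟧`: its coefficient of
`q^N` is determined by the finite product `∏_{k=1}^N (1 - q^k)`, since the remaining
factors only contribute in degrees `> N`. -/
noncomputable def eulerProd : PowerSeries ℤ :=
  PowerSeries.mk fun N => PowerSeries.coeff N (qPoch N)

/-- The series `Σ_{r=1}^∞ (-1)^r (q^{r(3r-1)/2} + q^{r(3r+1)/2})`, defined
coefficient-wise: only the terms with `r ≤ N` can contribute to the coefficient of
`q^N` (since `r(3r∓1)/2 ≥ r` for `r ≥ 1`). -/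
noncomputable def pentagonalSeries : PowerSeries ℤ :=
  PowerSeries.mk fun N => ∑ r ∈ Finset.Icc 1 N,
    (-1 : ℤ) ^ r * ((if 2 * N = 3 * r * r - r then 1 else 0) +
                    (if 2 * N = 3 * r * r + r then 1 else 0))

/-! ### Auxiliary development: Shanks' finite form of the pentagonal number theorem -/

/-- Triangular numbers. -/
def tri (i : ℕ) : ℕ := i * (i + 1) / 2

lemma tri_succ (i : ℕ) : tri (i + 1) = tri i + (i + 1) := by
  unfold tri
  obtain ⟨k, hk⟩ := Nat.even_mul_succ_self i
  have h : (i + 1) * (i + 1 + 1) = i * (i + 1) + 2 * (i + 1) := by ring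
  rw [hk] at h
  rw [hk, h]
  omega

lemma tri_pos (i : ℕ) : 1 ≤ tri (i + 1) := by
  rw [tri_succ]; omega

/-- Exponent identity for the lower pentagonal number. -/
lemma exp_low (n : ℕ) : tri n + (n * n + (2 * n + 1)) = (n + 1) * (3 * n + 2) / 2 := by
  unfold tri
  obtain ⟨k, hk⟩ := Nat.even_mul_succ_self n
  have h : (n + 1) * (3 * n + 2) = n * (n + 1) + 2 * (n * n + (2 * n + 1)) := by ring
  rw [hk] at h
  rw [hk, h]
  generalize n * n = m at *
  omega

/-- Exponent identity for the upper pentagonal number. -/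
lemma exp_high (n : ℕ) :
    tri (n + 1) + (n + 1) * (n + 1) = (n + 1) * (3 * n + 4) / 2 := by
  unfold tri
  obtain ⟨k, hk⟩ := Nat.even_mul_succ_self (n + 1)
  have h : (n + 1) * (3 * n + 4) = (n + 1) * (n + 1 + 1) + 2 * ((n + 1) * (n + 1)) := by ring
  rw [hk] at h
  rw [hk, h]
  generalize (n + 1) * (n + 1) = m at *
  omega

lemma pent_low_iff (r N : ℕ) (hr : 1 ≤ r) : N = r * (3 * r - 1) / 2 ↔ 2 * N = 3 * r * r - r := by
  obtain ⟨m, rfl⟩ := Nat.exists_eq_add_of_le hr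
  have h3 : (1 + m) * (3 * (1 + m) - 1) = (m + 1) * (3 * m + 2) := by
    congr 1
    · ring
    · omega
  rw [h3]
  obtain ⟨k, hk⟩ := Nat.even_mul_succ_self m
  have h : (m + 1) * (3 * m + 2) = m * (m + 1) + 2 * ((m + 1) * (m + 1)) := by ring
  rw [hk] at h
  have h2 : 3 * (1 + m) * (1 + m) - (1 + m) = m * (m + 1) + 2 * ((m + 1) * (m + 1)) := by
    have : 3 * (1 + m) * (1 + m) = (1 + m) + (m * (m + 1) + 2 * ((m + 1) * (m + 1))) := by ring
    omega
  rw [h, h2]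
  generalize (m + 1) * (m + 1) = p at *
  omega

lemma pent_high_iff (r N : ℕ) (hr : 1 ≤ r) : N = r * (3 * r + 1) / 2 ↔ 2 * N = 3 * r * r + r := by
  obtain ⟨m, rfl⟩ := Nat.exists_eq_add_of_le hr
  obtain ⟨k, hk⟩ := Nat.even_mul_succ_self m
  have h : (1 + m) * (3 * (1 + m) + 1) = m * (m + 1) + 2 * ((m + 1) * (m + 2)) := by ring
  have h2 : 3 * (1 + m) * (1 + m) + (1 + m) = m * (m + 1) + 2 * ((m + 1) * (m + 2)) := by ring
  rw [hk] at h h2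
  rw [h, h2]
  generalize (m + 1) * (m + 2) = p at *
  omega

/-- The partial product `∏_{k=i+1}^{n} (1 - X^k)`. -/
noncomputable def g (i n : ℕ) : PowerSeries ℤ :=
  ∏ k ∈ Finset.Ico (i + 1) (n + 1), (1 - (PowerSeries.X : PowerSeries ℤ) ^ k)

lemma g_self (n : ℕ) : g n n = 1 := by
  unfold g; rw [Finset.Ico_self, Finset.prod_empty]

lemma g_succ_top (i n : ℕ) (h : i ≤ n) : g i (n + 1) = g i n * (1 - X ^ (n + 1)) := by
  unfold g
  rw [Finset.prod_Ico_succ_top (by omega)]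

lemma g_succ_bot (i n : ℕ) (h : i + 1 ≤ n) :
    g i n = (1 - (X : PowerSeries ℤ) ^ (i + 1)) * g (i + 1) n := by
  unfold g
  rw [Finset.prod_eq_prod_Ico_succ_bot (by omega)]

/-- Summand in Shanks' identity. -/
noncomputable def u (n i : ℕ) : PowerSeries ℤ :=
  (-1) ^ i * X ^ (tri i + n * i) * g i n

/-- Shanks' partial sum. -/
noncomputable def shank (n : ℕ) : PowerSeries ℤ := ∑ i ∈ Finset.range (n + 1), u n i

noncomputable def A (n i : ℕ) : PowerSeries ℤ :=
  (-1) ^ (i + 1) * X ^ (tri i + n * i) * ((1 - X ^ i) * g i n)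

noncomputable def B (n i : ℕ) : PowerSeries ℤ :=
  (-1) ^ (i + 1) * X ^ (tri i + n * i + (n + 1 + i)) * g i n

lemma u_split (n i : ℕ) (h : i ≤ n) : u (n + 1) i = u n i + (A n i + B n i) := by
  unfold u A B
  rw [g_succ_top i n h]
  have he : tri i + (n + 1) * i = tri i + n * i + i := by ring
  rw [he]
  generalize tri i + n * i = e
  rw [pow_add, pow_add, pow_add, pow_succ]
  ring

lemma A_zero (n : ℕ) : A n 0 = 0 := by
  unfold A; simp

lemma B_eq_neg_A_succ (n i : ℕ) (h : i + 1 ≤ n) : B n i = -A n (i + 1) := by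
  unfold A B
  rw [← g_succ_bot i n h]
  have he : tri (i + 1) + n * (i + 1) = tri i + n * i + (n + 1 + i) := by
    rw [tri_succ]; ring
  rw [he, pow_succ, pow_succ]
  ring

lemma B_top (n : ℕ) : B n n = (-1) ^ (n + 1) * X ^ ((n + 1) * (3 * n + 2) / 2) := by
  unfold B
  rw [g_self, mul_one]
  congr 2
  rw [← exp_low n]
  ring

lemma u_top (n : ℕ) :
    u (n + 1) (n + 1) = (-1) ^ (n + 1) * X ^ ((n + 1) * (3 * n + 4) / 2) := by
  unfold u
  rw [g_self, mul_one]
  congr 2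
  rw [← exp_high n]

lemma shank_succ (n : ℕ) :
    shank (n + 1) = shank n +
      ((-1) ^ (n + 1) * X ^ ((n + 1) * (3 * n + 2) / 2) +
       (-1) ^ (n + 1) * X ^ ((n + 1) * (3 * n + 4) / 2)) := by
  unfold shank
  rw [Finset.sum_range_succ (u (n + 1)) (n + 1)]
  have h1 : ∑ i ∈ Finset.range (n + 1), u (n + 1) i
      = ∑ i ∈ Finset.range (n + 1), (u n i + (A n i + B n i)) := by
    refine Finset.sum_congr rfl fun i hi => ?_
    exact u_split n i (by simpa using Nat.lt_succ_iff.mp (Finset.mem_range.mp hi))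
  rw [h1, Finset.sum_add_distrib, Finset.sum_add_distrib]
  have h2 : ∑ i ∈ Finset.range (n + 1), B n i
      = ∑ i ∈ Finset.range n, B n i + B n n := Finset.sum_range_succ _ _
  have h3 : ∑ i ∈ Finset.range n, B n i = -∑ i ∈ Finset.range n, A n (i + 1) := by
    rw [← Finset.sum_neg_distrib]
    refine Finset.sum_congr rfl fun i hi => ?_
    exact B_eq_neg_A_succ n i (Finset.mem_range.mp hi)
  have h4 : ∑ i ∈ Finset.range (n + 1), A n i = ∑ i ∈ Finset.range n, A n (i + 1) := by
    rw [Finset.sum_range_succ' (A n) n, A_zero, add_zero]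
  rw [h2, h3, h4, B_top, u_top]
  ring

/-- Shanks' closed form. -/
lemma shank_closed (n : ℕ) :
    shank n = 1 + ∑ j ∈ Finset.Icc 1 n,
      (-1) ^ j * ((X : PowerSeries ℤ) ^ (j * (3 * j - 1) / 2) + X ^ (j * (3 * j + 1) / 2)) := by
  induction n with
  | zero =>
      unfold shank u
      simp [g_self, tri]
  | succ n ih =>
      rw [shank_succ, ih, Finset.sum_Icc_succ_top (by omega : 1 ≤ n + 1)]
      have e1 : (n + 1) * (3 * (n + 1) - 1) / 2 = (n + 1) * (3 * n + 2) / 2 := by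
        congr 2
      have e2 : (n + 1) * (3 * (n + 1) + 1) / 2 = (n + 1) * (3 * n + 4) / 2 := by
        congr 2
      rw [e1, e2]
      ring

lemma u_zero (n : ℕ) : u n 0 = qPoch n := by
  unfold u g qPoch
  have ht : tri 0 + n * 0 = 0 := by simp [tri]
  rw [ht, pow_zero, pow_zero, one_mul, one_mul,
    Finset.prod_Ico_eq_prod_range]
  refine Finset.prod_congr rfl fun k _ => ?_
  rw [Nat.add_comm 1 k]

lemma coeff_u_high (N i : ℕ) : (PowerSeries.coeff N) (u N (i + 1)) = 0 := by
  have hdvd : (X : PowerSeries ℤ) ^ (tri (i + 1) + N * (i + 1)) ∣ u N (i + 1) :=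
    ⟨(-1) ^ (i + 1) * g (i + 1) N, by unfold u; ring⟩
  have hbig : N < tri (i + 1) + N * (i + 1) := by
    have h1 := tri_pos i
    have h2 : N ≤ N * (i + 1) := Nat.le_mul_of_pos_right N (by omega)
    omega
  exact PowerSeries.X_pow_dvd_iff.mp hdvd N hbig

/-- Euler's pentagonal number theorem:
`(q)_∞ = 1 + Σ_{r=1}^∞ (-1)^r (q^{r(3r-1)/2} + q^{r(3r+1)/2})`. -/
theorem pentagonal_number_theorem : eulerProd = 1 + _root_.pentagonalSeries := by
  ext N
  have hL : (PowerSeries.coeff N) eulerProd = (PowerSeries.coeff N) (shank N) := by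
    rw [eulerProd, PowerSeries.coeff_mk]
    unfold shank
    rw [Finset.sum_range_succ' (u N) N]
    rw [map_add, map_sum]
    rw [Finset.sum_eq_zero fun i _ => coeff_u_high N i, zero_add, u_zero]
  rw [hL, shank_closed, map_add, map_add]
  congr 1
  rw [map_sum, _root_.pentagonalSeries, PowerSeries.coeff_mk]
  refine Finset.sum_congr rfl fun r hr => ?_
  have hr1 : 1 ≤ r := (Finset.mem_Icc.mp hr).1
  have hC : ((-1 : PowerSeries ℤ) ^ r) = PowerSeries.C ((-1) ^ r) := by
    rw [map_pow, map_neg, map_one]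
  rw [hC, PowerSeries.coeff_C_mul, map_add, PowerSeries.coeff_X_pow,
    PowerSeries.coeff_X_pow]
  simp only [pent_low_iff r N hr1, pent_high_iff r N hr1]
end

section
/- Franklin's theorem: for every nonnegative integer N, let d_e(N) (respectively d_o(N)) be the number of partitions of N into an even (respectively odd) number of distinct parts. Then d_e(N) − d_o(N) = (−1)^r if N = r(3r−1)/2 or N = r(3r+1)/2 for some positive integer r, and d_e(N) − d_o(N) = 0 otherwise (for N ≥ 1; for N = 0 the difference is 1, coming from the empty partition). -/
open Finset

/-- The partitions of `N` into distinct parts, encoded as finsets of positive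
integers summing to `N` (a finite strictly decreasing sequence of positive integers
is the same thing as a finite set of positive integers). All parts are at most `N`,
so every such partition is a subset of `{1, …, N}`. -/
def distinctPartitions (N : ℕ) : Finset (Finset ℕ) :=
  (Finset.Icc 1 N).powerset.filter fun s => s.sum id = N

/-- `d_e(N)`: the number of partitions of `N` into an even number of distinct parts. -/
def dEven (N : ℕ) : ℕ := ((distinctPartitions N).filter fun s => Even s.card).card

/-- `d_o(N)`: the number of partitions of `N` into an odd number of distinct parts. -/
def dOdd (N : ℕ) : ℕ := ((distinctPartitions N).filter fun s => Odd s.card).card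

namespace Franklin

/-- The largest part. -/
def MP (s : Finset ℕ) : ℕ := if h : s.Nonempty then s.max' h else 0

/-- The smallest part. -/
def mP (s : Finset ℕ) : ℕ := if h : s.Nonempty then s.min' h else 0

/-- The length of the "staircase" at the top. -/
noncomputable def tP (s : Finset ℕ) : ℕ := sInf {j | 0 < j ∧ MP s - j ∉ s}

/-- Franklin's involution. -/
noncomputable def fP (s : Finset ℕ) : Finset ℕ :=
  if mP s ≤ tP s then insert (MP s + 1) ((s.erase (mP s)).erase (MP s - mP s + 1))
  else insert (tP s) (insert (MP s - tP s) (s.erase (MP s)))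

/-- Non-exceptional (non-pentagonal) partitions. -/
def Good (s : Finset ℕ) : Prop :=
  (mP s ≤ tP s → MP s + 1 ≠ 2 * mP s) ∧ (tP s < mP s → MP s ≠ 2 * tP s)

variable {s : Finset ℕ} {x a j : ℕ}

lemma MP_mem (h : s.Nonempty) : MP s ∈ s := by
  rw [MP, dif_pos h]; exact s.max'_mem h

lemma le_MP (h : x ∈ s) : x ≤ MP s := by
  rw [MP, dif_pos ⟨x, h⟩]; exact s.le_max' x h

lemma mP_mem (h : s.Nonempty) : mP s ∈ s := by
  rw [mP, dif_pos h]; exact s.min'_mem h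

lemma mP_le (h : x ∈ s) : mP s ≤ x := by
  rw [mP, dif_pos ⟨x, h⟩]; exact s.min'_le x h

lemma MP_eq (h1 : a ∈ s) (h2 : ∀ x ∈ s, x ≤ a) : MP s = a :=
  le_antisymm (by rw [MP, dif_pos ⟨a, h1⟩]; exact max'_le _ _ _ h2) (le_MP h1)

lemma mP_eq (h1 : a ∈ s) (h2 : ∀ x ∈ s, a ≤ x) : mP s = a :=
  le_antisymm (mP_le h1) (by rw [mP, dif_pos ⟨a, h1⟩]; exact le_min' _ _ _ h2)

lemma tP_spec (hne : s.Nonempty) (hpos : ∀ x ∈ s, 0 < x) :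
    0 < tP s ∧ MP s - tP s ∉ s ∧ tP s ≤ MP s := by
  have hM : MP s ∈ {j | 0 < j ∧ MP s - j ∉ s} := by
    refine ⟨hpos _ (MP_mem hne), ?_⟩
    rw [Nat.sub_self]
    intro h0
    exact absurd (hpos 0 h0) (lt_irrefl 0)
  have h1 := Nat.sInf_mem (⟨MP s, hM⟩ : Set.Nonempty {j | 0 < j ∧ MP s - j ∉ s})
  exact ⟨h1.1, h1.2, Nat.sInf_le hM⟩

lemma stair (hne : s.Nonempty) (hpos : ∀ x ∈ s, 0 < x) (hj : j < tP s) :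
    MP s - j ∈ s := by
  rcases Nat.eq_zero_or_pos j with rfl | hj0
  · simpa using MP_mem hne
  · rw [tP] at hj
    have h := Nat.notMem_of_lt_sInf hj
    by_contra hn
    exact h ⟨hj0, hn⟩

lemma le_tP (hne : s.Nonempty) (hpos : ∀ x ∈ s, 0 < x)
    (h : ∀ j, 0 < j → j < a → MP s - j ∈ s) : a ≤ tP s := by
  by_contra hlt
  push_neg at hlt
  obtain ⟨h1, h2, _⟩ := tP_spec hne hpos
  exact h2 (h _ h1 hlt)

lemma tP_eq (hne : s.Nonempty) (hpos : ∀ x ∈ s, 0 < x) (h0 : 0 < a)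
    (h1 : MP s - a ∉ s) (h2 : ∀ j, 0 < j → j < a → MP s - j ∈ s) : tP s = a :=
  le_antisymm (Nat.sInf_le ⟨h0, h1⟩) (le_tP hne hpos h2)

lemma fP_of_le (h : mP s ≤ tP s) :
    fP s = insert (MP s + 1) ((s.erase (mP s)).erase (MP s - mP s + 1)) := by
  rw [fP, if_pos h]

lemma fP_of_lt (h : tP s < mP s) :
    fP s = insert (tP s) (insert (MP s - tP s) (s.erase (MP s))) := by
  rw [fP, if_neg (not_le.2 h)]

lemma caseA (hne : s.Nonempty) (hpos : ∀ x ∈ s, 0 < x)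
    (hmt : mP s ≤ tP s) (hexc : MP s + 1 ≠ 2 * mP s) :
    (fP s).sum id = s.sum id ∧ (fP s).card + 1 = s.card ∧
    (∀ x ∈ fP s, 0 < x) ∧ Good (fP s) ∧ fP (fP s) = s := by
  classical
  set m := mP s with hm
  set M := MP s with hM
  set t := tP s with ht
  have hm1 : 0 < m := hpos _ (mP_mem hne)
  have hmem_M : M ∈ s := MP_mem hne
  have hmM : m ≤ M := mP_le hmem_M
  have hb : M - (m - 1) ∈ s := stair hne hpos (by omega)
  have hb1 : M - m + 1 = M - (m - 1) := by omega
  have hge : m ≤ M - (m - 1) := mP_le hb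
  have h2m : 2 * m ≤ M := by omega
  have hbmem : M - m + 1 ∈ s.erase m := by
    rw [mem_erase]
    exact ⟨by omega, by rw [hb1]; exact hb⟩
  have hMnot : M + 1 ∉ (s.erase m).erase (M - m + 1) := by
    intro hx
    have := le_MP (mem_of_mem_erase (mem_of_mem_erase hx))
    omega
  have hfs : fP s = insert (M + 1) ((s.erase m).erase (M - m + 1)) := fP_of_le hmt
  -- sum
  have e1 : ((s.erase m).erase (M - m + 1)).sum id + (M - m + 1) = (s.erase m).sum id :=
    Finset.sum_erase_add _ _ hbmem
  have e2 : (s.erase m).sum id + m = s.sum id := Finset.sum_erase_add _ _ (mP_mem hne)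
  have e3 : (fP s).sum id = (M + 1) + ((s.erase m).erase (M - m + 1)).sum id := by
    rw [hfs, Finset.sum_insert hMnot]; rfl
  have hsum : (fP s).sum id = s.sum id := by omega
  -- card
  have c1 : ((s.erase m).erase (M - m + 1)).card + 1 = (s.erase m).card :=
    Finset.card_erase_add_one hbmem
  have c2 : (s.erase m).card + 1 = s.card := Finset.card_erase_add_one (mP_mem hne)
  have c3 : (fP s).card = ((s.erase m).erase (M - m + 1)).card + 1 := by
    rw [hfs, Finset.card_insert_of_notMem hMnot]
  have hcard : (fP s).card + 1 = s.card := by omega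
  -- positivity
  have hpos' : ∀ x ∈ fP s, 0 < x := by
    intro x hx
    rw [hfs, mem_insert] at hx
    rcases hx with rfl | hx
    · omega
    · exact hpos _ (mem_of_mem_erase (mem_of_mem_erase hx))
  -- structure of fP s
  have hne' : (fP s).Nonempty := ⟨M + 1, by rw [hfs]; exact mem_insert_self _ _⟩
  have hub : ∀ x ∈ fP s, x ≤ M + 1 := by
    intro x hx
    rw [hfs, mem_insert] at hx
    rcases hx with rfl | hx
    · exact le_refl _
    · have := le_MP (mem_of_mem_erase (mem_of_mem_erase hx)); omega
  have hMP' : MP (fP s) = M + 1 := MP_eq (by rw [hfs]; exact mem_insert_self _ _) hub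
  have hlow : ∀ x ∈ fP s, m < x := by
    intro x hx
    rw [hfs, mem_insert] at hx
    rcases hx with rfl | hx
    · omega
    · obtain ⟨hxb, hx2⟩ := mem_erase.1 hx
      obtain ⟨hxm, hxs⟩ := mem_erase.1 hx2
      have := mP_le hxs
      omega
  have htP' : tP (fP s) = m := by
    apply tP_eq hne' hpos' hm1
    · rw [hMP', show M + 1 - m = M - m + 1 by omega, hfs]
      intro hmm
      rcases mem_insert.1 hmm with heq | hmm2
      · omega
      · exact (mem_erase.1 hmm2).1 rfl
    · intro j hj0 hjm
      rw [hMP']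
      have hin : M - (j - 1) ∈ s := stair hne hpos (by omega)
      rw [show M + 1 - j = M - (j - 1) by omega, hfs]
      apply mem_insert_of_mem
      rw [mem_erase]
      refine ⟨by omega, ?_⟩
      rw [mem_erase]
      exact ⟨by omega, hin⟩
  have hmgt : tP (fP s) < mP (fP s) := by
    rw [htP']
    exact hlow _ (mP_mem hne')
  have hgood' : Good (fP s) := by
    constructor
    · intro hle; omega
    · intro _
      rw [hMP', htP']
      omega
  have hff : fP (fP s) = s := by
    rw [fP_of_lt hmgt, hMP', htP']
    have h1 : (fP s).erase (M + 1) = (s.erase m).erase (M - m + 1) := by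
      rw [hfs]; exact erase_insert hMnot
    rw [h1, show M + 1 - m = M - m + 1 by omega, insert_erase hbmem,
      insert_erase (mP_mem hne)]
  exact ⟨hsum, hcard, hpos', hgood', hff⟩

lemma caseB (hne : s.Nonempty) (hpos : ∀ x ∈ s, 0 < x)
    (hmt : tP s < mP s) (hexc : MP s ≠ 2 * tP s) :
    (fP s).sum id = s.sum id ∧ (fP s).card = s.card + 1 ∧
    (∀ x ∈ fP s, 0 < x) ∧ Good (fP s) ∧ fP (fP s) = s := by
  classical
  set m := mP s with hm
  set M := MP s with hM
  set t := tP s with ht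
  obtain ⟨ht1, htM, htle⟩ := tP_spec hne hpos
  have hmem_M : M ∈ s := MP_mem hne
  have hs1 : M - (t - 1) ∈ s := stair hne hpos (by omega)
  have hmle : m ≤ M - (t - 1) := mP_le hs1
  have h2t : 2 * t < M := by omega
  have htnotin : t ∉ s := fun h => absurd (mP_le h) (by omega)
  have ht_ne : t ∉ insert (M - t) (s.erase M) := by
    simp only [mem_insert, not_or]
    exact ⟨by omega, fun h => htnotin (mem_of_mem_erase h)⟩
  have hMt_ne : M - t ∉ s.erase M := fun h => htM (mem_of_mem_erase h)
  have hfs : fP s = insert t (insert (M - t) (s.erase M)) := fP_of_lt hmt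
  -- sum
  have e1 : (s.erase M).sum id + M = s.sum id := Finset.sum_erase_add _ _ hmem_M
  have e2 : (insert (M - t) (s.erase M)).sum id = (M - t) + (s.erase M).sum id := by
    rw [Finset.sum_insert hMt_ne]; rfl
  have e3 : (fP s).sum id = t + (insert (M - t) (s.erase M)).sum id := by
    rw [hfs, Finset.sum_insert ht_ne]; rfl
  have hsum : (fP s).sum id = s.sum id := by omega
  -- card
  have c1 : (s.erase M).card + 1 = s.card := Finset.card_erase_add_one hmem_M
  have c2 : (fP s).card = (insert (M - t) (s.erase M)).card + 1 := by
    rw [hfs, Finset.card_insert_of_notMem ht_ne]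
  have c3 : (insert (M - t) (s.erase M)).card = (s.erase M).card + 1 :=
    Finset.card_insert_of_notMem hMt_ne
  have hcard : (fP s).card = s.card + 1 := by omega
  -- positivity
  have hpos' : ∀ x ∈ fP s, 0 < x := by
    intro x hx
    rw [hfs, mem_insert] at hx
    rcases hx with rfl | hx
    · omega
    rcases mem_insert.1 hx with rfl | hx
    · omega
    · exact hpos _ (mem_of_mem_erase hx)
  have hne' : (fP s).Nonempty := ⟨t, by rw [hfs]; exact mem_insert_self _ _⟩
  have hM1 : M - 1 ∈ fP s := by
    rw [hfs]
    rcases eq_or_lt_of_le (Nat.succ_le_of_lt ht1) with h1 | h1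
    · apply mem_insert_of_mem
      rw [show M - 1 = M - t by omega]
      exact mem_insert_self _ _
    · have hin : M - 1 ∈ s := stair hne hpos (by omega)
      exact mem_insert_of_mem (mem_insert_of_mem (mem_erase.2 ⟨by omega, hin⟩))
  have hub : ∀ x ∈ fP s, x ≤ M - 1 := by
    intro x hx
    rw [hfs] at hx
    rcases mem_insert.1 hx with rfl | hx
    · omega
    rcases mem_insert.1 hx with rfl | hx
    · omega
    · have h1 := le_MP (mem_of_mem_erase hx)
      have h2 := (mem_erase.1 hx).1
      omega
  have hMP' : MP (fP s) = M - 1 := MP_eq hM1 hub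
  have hmP' : mP (fP s) = t := by
    apply mP_eq (by rw [hfs]; exact mem_insert_self _ _)
    intro x hx
    rw [hfs] at hx
    rcases mem_insert.1 hx with rfl | hx
    · exact le_refl _
    rcases mem_insert.1 hx with rfl | hx
    · omega
    · have := mP_le (mem_of_mem_erase hx); omega
  have hstair' : ∀ j, 0 < j → j < t → MP (fP s) - j ∈ fP s := by
    intro j h0 hj
    rw [hMP', hfs]
    rcases eq_or_lt_of_le (show j + 1 ≤ t by omega) with h1 | h1
    · rw [show M - 1 - j = M - t by omega]
      exact mem_insert_of_mem (mem_insert_self _ _)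
    · have hin : M - (j + 1) ∈ s := stair hne hpos h1
      rw [show M - 1 - j = M - (j + 1) by omega]
      exact mem_insert_of_mem (mem_insert_of_mem (mem_erase.2 ⟨by omega, hin⟩))
  have hA' : mP (fP s) ≤ tP (fP s) := by
    rw [hmP']
    exact le_tP hne' hpos' hstair'
  have hgood' : Good (fP s) := by
    constructor
    · intro _
      rw [hMP', hmP']
      omega
    · intro hcon; omega
  have hff : fP (fP s) = s := by
    rw [fP_of_le hA', hMP', hmP', show M - 1 + 1 = M by omega,
      show M - 1 - t + 1 = M - t by omega, hfs, erase_insert ht_ne,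
      erase_insert hMt_ne, insert_erase hmem_M]
  exact ⟨hsum, hcard, hpos', hgood', hff⟩

lemma good_step (hne : s.Nonempty) (hpos : ∀ x ∈ s, 0 < x) (hgood : Good s) :
    (fP s).sum id = s.sum id ∧ ((-1 : ℤ) ^ (fP s).card = -(-1 : ℤ) ^ s.card) ∧
    (∀ x ∈ fP s, 0 < x) ∧ Good (fP s) ∧ fP (fP s) = s ∧ fP s ≠ s := by
  rcases le_or_gt (mP s) (tP s) with h | h
  · obtain ⟨h1, h2, h3, h4, h5⟩ := caseA hne hpos h (hgood.1 h)
    refine ⟨h1, ?_, h3, h4, h5, ?_⟩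
    · rw [← h2, pow_succ]; ring
    · intro he
      have := congrArg Finset.card he
      omega
  · obtain ⟨h1, h2, h3, h4, h5⟩ := caseB hne hpos h (hgood.2 h)
    refine ⟨h1, ?_, h3, h4, h5, ?_⟩
    · rw [h2, pow_succ]; ring
    · intro he
      have := congrArg Finset.card he
      omega

lemma bad_struct (hne : s.Nonempty) (hpos : ∀ x ∈ s, 0 < x) (hbad : ¬Good s) :
    ∃ a, 0 < a ∧ (s = Icc a (2 * a - 1) ∨ s = Icc (a + 1) (2 * a)) := by
  rw [Good, not_and_or] at hbad
  have hm1 : 0 < mP s := hpos _ (mP_mem hne)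
  obtain ⟨ht1, htM, htle⟩ := tP_spec hne hpos
  rcases hbad with h | h
  · push_neg at h
    obtain ⟨hmt, hM2⟩ := h
    refine ⟨mP s, hm1, Or.inl ?_⟩
    apply Finset.Subset.antisymm
    · intro x hx
      rw [mem_Icc]
      have := le_MP hx
      exact ⟨mP_le hx, by omega⟩
    · intro x hx
      rw [mem_Icc] at hx
      have hxM : x ≤ MP s := by omega
      have : MP s - (MP s - x) = x := by omega
      rw [← this]
      exact stair hne hpos (by omega)
  · push_neg at h
    obtain ⟨hmt, hM2⟩ := h
    have hs1 : MP s - (tP s - 1) ∈ s := stair hne hpos (by omega)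
    have hmle : mP s ≤ MP s - (tP s - 1) := mP_le hs1
    refine ⟨tP s, ht1, Or.inr ?_⟩
    apply Finset.Subset.antisymm
    · intro x hx
      rw [mem_Icc]
      have h1 := mP_le hx
      have h2 := le_MP hx
      exact ⟨by omega, by omega⟩
    · intro x hx
      rw [mem_Icc] at hx
      have : MP s - (MP s - x) = x := by omega
      rw [← this]
      exact stair hne hpos (by omega)

lemma gauss (n : ℕ) : 2 * (range n).sum id = n * (n - 1) := by
  have h := Finset.sum_range_id_mul_two n
  have h2 : (range n).sum id = ∑ i ∈ range n, i := Finset.sum_congr rfl fun _ _ => rfl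
  rw [h2, mul_comm]
  exact h

lemma sum_split (a b : ℕ) (h : a ≤ b + 1) :
    (range a).sum id + (Icc a b).sum id = (range (b + 1)).sum id := by
  rw [Finset.range_eq_Ico, Finset.range_eq_Ico, ← Finset.Ico_add_one_right_eq_Icc]
  exact Finset.sum_Ico_consecutive id (Nat.zero_le a) h

lemma sumIccA (a : ℕ) (ha : 0 < a) :
    2 * (Icc a (2 * a - 1)).sum id + a = 3 * a * a := by
  obtain ⟨c, rfl⟩ : ∃ c, a = c + 1 := ⟨a - 1, by omega⟩
  have h := sum_split (c + 1) (2 * (c + 1) - 1) (by omega)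
  have g1 := gauss (c + 1)
  have g2 := gauss (2 * (c + 1) - 1 + 1)
  rw [show 2 * (c + 1) - 1 + 1 = 2 * c + 2 by omega] at g2 h
  rw [show 2 * (c + 1) - 1 = 2 * c + 1 by omega] at h ⊢
  rw [show c + 1 - 1 = c by omega] at g1
  rw [show 2 * c + 2 - 1 = 2 * c + 1 by omega] at g2
  zify at h g1 g2 ⊢
  linear_combination 2 * h - g1 + g2

lemma sumIccB (a : ℕ) (ha : 0 < a) :
    2 * (Icc (a + 1) (2 * a)).sum id = 3 * a * a + a := by
  have h := sum_split (a + 1) (2 * a) (by omega)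
  have g1 := gauss (a + 1)
  have g2 := gauss (2 * a + 1)
  rw [show a + 1 - 1 = a by omega] at g1
  rw [show 2 * a + 1 - 1 = 2 * a by omega] at g2
  zify at h g1 g2 ⊢
  linear_combination 2 * h - g1 + g2

lemma mem_dP {N : ℕ} {s : Finset ℕ} :
    s ∈ distinctPartitions N ↔ (∀ x ∈ s, 0 < x) ∧ s.sum id = N := by
  constructor
  · intro h
    rw [distinctPartitions, mem_filter, mem_powerset] at h
    refine ⟨fun x hx => ?_, h.2⟩
    have := h.1 hx
    rw [mem_Icc] at this
    omega
  · rintro ⟨h1, h2⟩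
    rw [distinctPartitions, mem_filter, mem_powerset]
    refine ⟨fun x hx => ?_, h2⟩
    rw [mem_Icc]
    refine ⟨h1 x hx, ?_⟩
    calc x = id x := rfl
      _ ≤ s.sum id := Finset.single_le_sum (fun i _ => Nat.zero_le _) hx
      _ = N := h2

lemma nonempty_of_mem {N : ℕ} (hN : 1 ≤ N) {s : Finset ℕ}
    (hs : s ∈ distinctPartitions N) : s.Nonempty := by
  rcases s.eq_empty_or_nonempty with rfl | h
  · have := (mem_dP.1 hs).2
    simp at this
    omega
  · exact h

lemma not_good_e1 {r : ℕ} (hr : 0 < r) : ¬Good (Icc r (2 * r - 1)) := by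
  have hmem : r ∈ Icc r (2 * r - 1) := by rw [mem_Icc]; omega
  have hne : (Icc r (2 * r - 1)).Nonempty := ⟨r, hmem⟩
  have hpos : ∀ x ∈ Icc r (2 * r - 1), 0 < x := by
    intro x hx; rw [mem_Icc] at hx; omega
  have hMP : MP (Icc r (2 * r - 1)) = 2 * r - 1 :=
    MP_eq (by rw [mem_Icc]; omega) (by intro x hx; rw [mem_Icc] at hx; omega)
  have hmP : mP (Icc r (2 * r - 1)) = r :=
    mP_eq hmem (by intro x hx; rw [mem_Icc] at hx; omega)
  have htP : tP (Icc r (2 * r - 1)) = r := by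
    apply tP_eq hne hpos hr
    · rw [hMP, mem_Icc]; omega
    · intro j h0 hj
      rw [hMP, mem_Icc]
      omega
  intro hg
  exact hg.1 (by rw [hmP, htP]) (by rw [hMP, hmP]; omega)

lemma not_good_e2 {r : ℕ} (hr : 0 < r) : ¬Good (Icc (r + 1) (2 * r)) := by
  have hmem : r + 1 ∈ Icc (r + 1) (2 * r) := by rw [mem_Icc]; omega
  have hne : (Icc (r + 1) (2 * r)).Nonempty := ⟨r + 1, hmem⟩
  have hpos : ∀ x ∈ Icc (r + 1) (2 * r), 0 < x := by
    intro x hx; rw [mem_Icc] at hx; omega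
  have hMP : MP (Icc (r + 1) (2 * r)) = 2 * r :=
    MP_eq (by rw [mem_Icc]; omega) (by intro x hx; rw [mem_Icc] at hx; omega)
  have hmP : mP (Icc (r + 1) (2 * r)) = r + 1 :=
    mP_eq hmem (by intro x hx; rw [mem_Icc] at hx; omega)
  have htP : tP (Icc (r + 1) (2 * r)) = r := by
    apply tP_eq hne hpos hr
    · rw [hMP, mem_Icc]; omega
    · intro j h0 hj
      rw [hMP, mem_Icc]
      omega
  intro hg
  exact hg.2 (by rw [hmP, htP]; omega) (by rw [hMP, htP])

lemma pent1 {N r s : ℕ} (hr : 0 < r) (hs : 0 < s)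
    (h1 : 2 * N + r = 3 * r * r) (h2 : 2 * N + s = 3 * s * s) : r = s := by
  have h1' : 2 * (N : ℤ) + r = 3 * r * r := by exact_mod_cast h1
  have h2' : 2 * (N : ℤ) + s = 3 * s * s := by exact_mod_cast h2
  have key : ((r : ℤ) - s) * (3 * r + 3 * s - 1) = 0 := by linear_combination h2' - h1'
  rcases mul_eq_zero.1 key with h | h <;> omega

lemma pent2 {N r s : ℕ} (hr : 0 < r) (hs : 0 < s)
    (h1 : 2 * N = 3 * r * r + r) (h2 : 2 * N = 3 * s * s + s) : r = s := by
  have h1' : 2 * (N : ℤ) = 3 * r * r + r := by exact_mod_cast h1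
  have h2' : 2 * (N : ℤ) = 3 * s * s + s := by exact_mod_cast h2
  have key : ((r : ℤ) - s) * (3 * r + 3 * s + 1) = 0 := by linear_combination h2' - h1'
  rcases mul_eq_zero.1 key with h | h <;> omega

lemma pent3 {N r s : ℕ} (hr : 0 < r) (hs : 0 < s)
    (h1 : 2 * N + r = 3 * r * r) (h2 : 2 * N = 3 * s * s + s) : False := by
  have h1' : 2 * (N : ℤ) + r = 3 * r * r := by exact_mod_cast h1
  have h2' : 2 * (N : ℤ) = 3 * s * s + s := by exact_mod_cast h2
  have key : ((r : ℤ) + s) * (3 * r - 3 * s - 1) = 0 := by linear_combination h2' - h1'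
  rcases mul_eq_zero.1 key with h | h <;> omega

lemma bad_mem {N : ℕ} {s : Finset ℕ} (hs : s ∈ distinctPartitions N)
    (hne : s.Nonempty) (hbad : ¬Good s) :
    ∃ a, 0 < a ∧ ((s = Icc a (2 * a - 1) ∧ 2 * N + a = 3 * a * a) ∨
      (s = Icc (a + 1) (2 * a) ∧ 2 * N = 3 * a * a + a)) := by
  have hpos := (mem_dP.1 hs).1
  have hsum := (mem_dP.1 hs).2
  obtain ⟨a, ha, hcase⟩ := bad_struct hne hpos hbad
  rcases hcase with h | h
  · refine ⟨a, ha, Or.inl ⟨h, ?_⟩⟩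
    have key := sumIccA a ha
    rw [h] at hsum
    rw [hsum] at key
    omega
  · refine ⟨a, ha, Or.inr ⟨h, ?_⟩⟩
    have key := sumIccB a ha
    rw [h] at hsum
    rw [hsum] at key
    omega

lemma sum_pent_gen (N r : ℕ) (hr : 0 < r) (hN : 1 ≤ N) (e : Finset ℕ)
    (he : e ∈ distinctPartitions N) (hecard : e.card = r) (hbad_e : ¬Good e)
    (huniq : ∀ s ∈ distinctPartitions N, ¬Good s → s = e) :
    ∑ s ∈ distinctPartitions N, (-1 : ℤ) ^ s.card = (-1) ^ r := by
  classical
  have key : ∀ a ∈ (distinctPartitions N).erase e,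
      a.Nonempty ∧ (∀ x ∈ a, 0 < x) ∧ Good a := by
    intro a ha
    obtain ⟨hane, hamem⟩ := mem_erase.1 ha
    refine ⟨nonempty_of_mem hN hamem, (mem_dP.1 hamem).1, ?_⟩
    by_contra hb
    exact hane (huniq a hamem hb)
  have h0 : ∑ s ∈ (distinctPartitions N).erase e, (-1 : ℤ) ^ s.card = 0 := by
    refine Finset.sum_involution (fun a _ => fP a) ?_ ?_ ?_ ?_
    · intro a ha
      obtain ⟨h1, h2, h3⟩ := key a ha
      rw [(good_step h1 h2 h3).2.1]
      ring
    · intro a ha _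
      obtain ⟨h1, h2, h3⟩ := key a ha
      exact (good_step h1 h2 h3).2.2.2.2.2
    · intro a ha
      obtain ⟨h1, h2, h3⟩ := key a ha
      obtain ⟨hsum, _, hpos, hgood, _, _⟩ := good_step h1 h2 h3
      rw [mem_erase]
      constructor
      · intro hcon
        have hcon' : fP a = e := hcon
        rw [hcon'] at hgood
        exact hbad_e hgood
      · have hamem := (mem_erase.1 ha).2
        exact mem_dP.2 ⟨hpos, by rw [hsum]; exact (mem_dP.1 hamem).2⟩
    · intro a ha
      obtain ⟨h1, h2, h3⟩ := key a ha
      exact (good_step h1 h2 h3).2.2.2.2.1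
  rw [← Finset.add_sum_erase _ _ he, h0, add_zero, hecard]

lemma sum_pent (N r : ℕ) (hr : 0 < r)
    (h : 2 * N + r = 3 * r * r ∨ 2 * N = 3 * r * r + r) :
    ∑ s ∈ distinctPartitions N, (-1 : ℤ) ^ s.card = (-1) ^ r := by
  have hrr : 3 * r ≤ 3 * r * r := Nat.le_mul_of_pos_right (3 * r) hr
  have hN : 1 ≤ N := by
    rcases h with h | h <;> omega
  rcases h with h | h
  · apply sum_pent_gen N r hr hN (Icc r (2 * r - 1)) ?_ ?_ (not_good_e1 hr)
    · intro s hs hbad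
      obtain ⟨a, ha, hcase⟩ := bad_mem hs (nonempty_of_mem hN hs) hbad
      rcases hcase with ⟨hset, heq⟩ | ⟨hset, heq⟩
      · rw [hset, pent1 ha hr heq h]
      · exact absurd (pent3 hr ha h heq) (fun x => x)
    · apply mem_dP.2
      refine ⟨fun x hx => by rw [mem_Icc] at hx; omega, ?_⟩
      have key := sumIccA r hr
      omega
    · rw [Nat.card_Icc]; omega
  · apply sum_pent_gen N r hr hN (Icc (r + 1) (2 * r)) ?_ ?_ (not_good_e2 hr)
    · intro s hs hbad
      obtain ⟨a, ha, hcase⟩ := bad_mem hs (nonempty_of_mem hN hs) hbad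
      rcases hcase with ⟨hset, heq⟩ | ⟨hset, heq⟩
      · exact absurd (pent3 ha hr heq h) (fun x => x)
      · rw [hset, pent2 ha hr heq h]
    · apply mem_dP.2
      refine ⟨fun x hx => by rw [mem_Icc] at hx; omega, ?_⟩
      have key := sumIccB r hr
      omega
    · rw [Nat.card_Icc]; omega

lemma sum_zero (N : ℕ) (hN : 1 ≤ N)
    (h : ∀ a : ℕ, 0 < a → ¬(2 * N + a = 3 * a * a ∨ 2 * N = 3 * a * a + a)) :
    ∑ s ∈ distinctPartitions N, (-1 : ℤ) ^ s.card = 0 := by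
  classical
  have key : ∀ a ∈ distinctPartitions N, a.Nonempty ∧ (∀ x ∈ a, 0 < x) ∧ Good a := by
    intro a ha
    refine ⟨nonempty_of_mem hN ha, (mem_dP.1 ha).1, ?_⟩
    by_contra hb
    obtain ⟨c, hc, hcase⟩ := bad_mem ha (nonempty_of_mem hN ha) hb
    rcases hcase with ⟨_, h2⟩ | ⟨_, h2⟩
    · exact h c hc (Or.inl h2)
    · exact h c hc (Or.inr h2)
  refine Finset.sum_involution (fun a _ => fP a) ?_ ?_ ?_ ?_
  · intro a ha
    obtain ⟨h1, h2, h3⟩ := key a ha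
    rw [(good_step h1 h2 h3).2.1]
    ring
  · intro a ha _
    obtain ⟨h1, h2, h3⟩ := key a ha
    exact (good_step h1 h2 h3).2.2.2.2.2
  · intro a ha
    obtain ⟨h1, h2, h3⟩ := key a ha
    obtain ⟨hsum, _, hpos, _, _, _⟩ := good_step h1 h2 h3
    exact mem_dP.2 ⟨hpos, by rw [hsum]; exact (mem_dP.1 ha).2⟩
  · intro a ha
    obtain ⟨h1, h2, h3⟩ := key a ha
    exact (good_step h1 h2 h3).2.2.2.2.1

lemma signed_eq (N : ℕ) :
    ∑ s ∈ distinctPartitions N, (-1 : ℤ) ^ s.card = (dEven N : ℤ) - (dOdd N : ℤ) := by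
  classical
  rw [← Finset.sum_filter_add_sum_filter_not (distinctPartitions N)
    (fun s => Even s.card) (fun s => (-1 : ℤ) ^ s.card)]
  have h1 : ∑ s ∈ (distinctPartitions N).filter (fun s => Even s.card),
      (-1 : ℤ) ^ s.card = (dEven N : ℤ) := by
    rw [Finset.sum_congr rfl (fun s hs => Even.neg_one_pow (mem_filter.1 hs).2)]
    simp [dEven]
  have h2 : ∑ s ∈ (distinctPartitions N).filter (fun s => ¬Even s.card),
      (-1 : ℤ) ^ s.card = -(dOdd N : ℤ) := by
    rw [Finset.sum_congr rfl
      (fun s hs => Odd.neg_one_pow (Nat.not_even_iff_odd.1 (mem_filter.1 hs).2))]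
    have : (distinctPartitions N).filter (fun s => ¬Even s.card) =
        (distinctPartitions N).filter (fun s => Odd s.card) :=
      Finset.filter_congr (fun s _ => by rw [Nat.not_even_iff_odd])
    rw [this]
    simp [dOdd]
  rw [h1, h2]
  ring

end Franklin

/-- Franklin's theorem: `d_e(N) - d_o(N) = (-1)^r` if `N = r(3r-1)/2` or
`N = r(3r+1)/2` for a positive integer `r` (stated as `2N = 3r² - r` or
`2N = 3r² + r`), `d_e(N) - d_o(N) = 0` for all other `N ≥ 1`, and the
difference is `1` for `N = 0` (the empty partition). -/
theorem franklin :
    (∀ N r : ℕ, 0 < r → (2 * N = 3 * r * r - r ∨ 2 * N = 3 * r * r + r) →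
      (dEven N : ℤ) - dOdd N = (-1) ^ r) ∧
    (∀ N : ℕ, 1 ≤ N →
      (∀ r : ℕ, 0 < r → ¬(2 * N = 3 * r * r - r ∨ 2 * N = 3 * r * r + r)) →
      (dEven N : ℤ) - dOdd N = 0) ∧
    ((dEven 0 : ℤ) - dOdd 0 = 1) := by
  refine ⟨?_, ?_, ?_⟩
  · intro N r hr h
    rw [← Franklin.signed_eq]
    apply Franklin.sum_pent N r hr
    have hrr : 3 * r ≤ 3 * r * r := Nat.le_mul_of_pos_right (3 * r) hr
    rcases h with h | h
    · left; omega
    · right; exact h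
  · intro N hN h
    rw [← Franklin.signed_eq]
    apply Franklin.sum_zero N hN
    intro a ha hcon
    apply h a ha
    have hrr : 3 * a ≤ 3 * a * a := Nat.le_mul_of_pos_right (3 * a) ha
    rcases hcon with h1 | h1
    · left; omega
    · right; exact h1
  · decide
end

section
/- Zagier's identity: in the ring of formal power series in q with integer coefficients, Σ_{n=0}^∞ [(q)_∞ − (q)_n] = (q)_∞ · Σ_{k=1}^∞ q^k/(1 − q^k) + Σ_{r=1}^∞ (−1)^r [(3r−1) q^{r(3r−1)/2} + 3r q^{r(3r+1)/2}]. (Both infinite sums are well defined as formal power series: the coefficient of q^N in (q)_∞ − (q)_n vanishes for n ≥ N, and each power of q receives only finitely many contributions on the right.) -/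
open PowerSeries Finset

/-- For `k ≥ 1`, the series `q^k/(1 - q^k) = Σ_{j=1}^∞ q^{jk}`: its coefficient of
`q^N` is `1` exactly when `N` is a positive multiple of `k`. -/
noncomputable def geomSeries (k : ℕ) : PowerSeries ℤ :=
  PowerSeries.mk fun N => if k ∣ N ∧ N ≠ 0 then 1 else 0

/-- The series `Σ_{k=1}^∞ q^k/(1 - q^k)`, defined coefficient-wise: only the terms
with `k ≤ N` contribute to the coefficient of `q^N`. -/
noncomputable def lambertSum : PowerSeries ℤ :=
  PowerSeries.mk fun N => ∑ k ∈ Finset.Icc 1 N, PowerSeries.coeff N (geomSeries k)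

/-- The series `Σ_{n=0}^∞ [(q)_∞ - (q)_n]`, defined coefficient-wise: the coefficient
of `q^N` in `(q)_∞ - (q)_n` vanishes for `n ≥ N`. -/
noncomputable def zagierLHS : PowerSeries ℤ :=
  PowerSeries.mk fun N =>
    ∑ n ∈ Finset.range N, PowerSeries.coeff N (eulerProd - qPoch n)

/-- The series `Σ_{r=1}^∞ (-1)^r [(3r-1) q^{r(3r-1)/2} + 3r q^{r(3r+1)/2}]`, defined
coefficient-wise: only the terms with `r ≤ N` contribute to the coefficient of `q^N`. -/
noncomputable def pentagonalDerivSeries : PowerSeries ℤ :=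
  PowerSeries.mk fun N => ∑ r ∈ Finset.Icc 1 N, (-1 : ℤ) ^ r *
    ((if 2 * N = 3 * r * r - r then 3 * (r : ℤ) - 1 else 0) +
     (if 2 * N = 3 * r * r + r then 3 * (r : ℤ) else 0))

namespace ZagierAux

local notation "K" => PowerSeries ℤ

lemma pow_eq (a b c : ℕ) (h : a = b + c) : (X : K) ^ a = X ^ b * X ^ c := by
  rw [h, pow_add]

lemma geom_rel (k : ℕ) (hk : 1 ≤ k) :
    (1 - (X : K) ^ k) * geomSeries k = X ^ k := by
  ext n
  rw [sub_mul, one_mul, map_sub, mul_comm, PowerSeries.coeff_mul_X_pow',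
    PowerSeries.coeff_X_pow]
  simp only [geomSeries, PowerSeries.coeff_mk]
  rcases Nat.lt_or_ge n k with h | h
  · have h2 : ¬ (k ≤ n) := by omega
    rw [if_neg h2,
      if_neg (fun hc : k ∣ n ∧ n ≠ 0 =>
        absurd (Nat.le_of_dvd (Nat.pos_of_ne_zero hc.2) hc.1) h2),
      if_neg (show ¬ n = k by omega)]
    ring
  · rw [if_pos h]
    rcases eq_or_ne n k with rfl | hne
    · rw [if_pos ⟨dvd_rfl, by omega⟩, if_neg (by simp), if_pos rfl]
      ring
    · have hiff : (k ∣ n ∧ n ≠ 0) ↔ (k ∣ n - k ∧ n - k ≠ 0) := by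
        constructor
        · rintro ⟨hd, -⟩
          refine ⟨Nat.dvd_sub hd dvd_rfl, ?_⟩
          intro h0
          exact hne (by omega)
        · rintro ⟨hd, h0⟩
          refine ⟨?_, by omega⟩
          have := Nat.dvd_add hd (dvd_refl k)
          rwa [Nat.sub_add_cancel h] at this
      rw [if_neg hne]
      by_cases hd : k ∣ n ∧ n ≠ 0
      · rw [if_pos hd, if_pos (hiff.1 hd)]; ring
      · rw [if_neg hd, if_neg (fun hc => hd (hiff.2 hc))]; ring

noncomputable def Qp (r s : ℕ) : K := ∏ j ∈ Finset.range s, (1 - (X : K) ^ (r + 1 + j))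

noncomputable def Gg (r s : ℕ) : K := ∑ j ∈ Finset.range s, geomSeries (r + 1 + j)

noncomputable def Aa (r M : ℕ) : K :=
  ∑ n ∈ Finset.range M, (X : K) ^ (n * (r + 1)) * Qp r (n + 1)

noncomputable def Bb (r M : ℕ) : K :=
  ∑ n ∈ Finset.range M, (X : K) ^ (n * (r + 1) + 1) * Qp r (n + 1) * (C (R := ℤ) n - Gg r (n + 1))

@[simp] lemma Qp_zero (r : ℕ) : Qp r 0 = 1 := by simp [Qp]
@[simp] lemma Gg_zero (r : ℕ) : Gg r 0 = 0 := by simp [Gg]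
@[simp] lemma Aa_zero (r : ℕ) : Aa r 0 = 0 := by simp [Aa]
@[simp] lemma Bb_zero (r : ℕ) : Bb r 0 = 0 := by simp [Bb]

lemma Qp_one (r : ℕ) : Qp r 1 = 1 - (X : K) ^ (r + 1) := by
  simp [Qp]

lemma Gg_one (r : ℕ) : Gg r 1 = geomSeries (r + 1) := by
  simp [Gg]

lemma Qp_succ (r s : ℕ) : Qp r (s + 1) = Qp r s * (1 - (X : K) ^ (r + 1 + s)) :=
  Finset.prod_range_succ _ s

lemma Qp_succ' (r s : ℕ) : Qp r (s + 1) = (1 - (X : K) ^ (r + 1)) * Qp (r + 1) s := by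
  have h : ∏ j ∈ Finset.range s, (1 - (X : K) ^ (r + 1 + 1 + j))
      = ∏ j ∈ Finset.range s, (1 - (X : K) ^ (r + 1 + (j + 1))) :=
    Finset.prod_congr rfl fun j _ => by rw [show r + 1 + 1 + j = r + 1 + (j + 1) by omega]
  unfold Qp
  rw [Finset.prod_range_succ', ← h, Nat.add_zero]
  exact mul_comm _ _

lemma Gg_succ (r s : ℕ) : Gg r (s + 1) = Gg r s + geomSeries (r + 1 + s) :=
  Finset.sum_range_succ _ s

lemma Gg_succ' (r s : ℕ) : Gg r (s + 1) = geomSeries (r + 1) + Gg (r + 1) s := by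
  have h : ∑ j ∈ Finset.range s, geomSeries (r + 1 + 1 + j)
      = ∑ j ∈ Finset.range s, geomSeries (r + 1 + (j + 1)) :=
    Finset.sum_congr rfl fun j _ => by rw [show r + 1 + 1 + j = r + 1 + (j + 1) by omega]
  unfold Gg
  rw [Finset.sum_range_succ', ← h, Nat.add_zero]
  exact add_comm _ _

lemma Aa_succ (r M : ℕ) :
    Aa r (M + 1) = Aa r M + (X : K) ^ (M * (r + 1)) * Qp r (M + 1) :=
  Finset.sum_range_succ _ M

lemma Bb_succ (r M : ℕ) :
    Bb r (M + 1) = Bb r M + (X : K) ^ (M * (r + 1) + 1) * Qp r (M + 1) * (C (R := ℤ) M - Gg r (M + 1)) :=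
  Finset.sum_range_succ _ M

lemma FE (r M : ℕ) :
    Aa r (M + 1) = 1 - (X : K) ^ (2 * r + 3) - X ^ (3 * r + 5) * Aa (r + 1) M
      - X ^ ((M + 1) * (r + 1)) * Qp (r + 1) (M + 1) := by
  induction M with
  | zero =>
    rw [Aa_succ, Aa_zero, Qp_one, Qp_one, Aa_zero]
    have e : (X : K) ^ (1 * (r + 1)) * X ^ (r + 1 + 1) = X ^ (2 * r + 3) :=
      (pow_eq (2 * r + 3) (1 * (r + 1)) (r + 1 + 1) (by ring)).symm
    linear_combination - e
  | succ M ih =>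
    rw [Aa_succ, ih, Aa_succ (r + 1) M, Qp_succ' r (M + 1),
      show Qp (r + 1) (M + 1 + 1) = Qp (r + 1) (M + 1) * (1 - (X : K) ^ (M + r + 3)) by
        rw [Qp_succ]; congr 3; omega]
    have e1 : (X : K) ^ (3 * r + 5) * X ^ (M * (r + 1 + 1))
        = X ^ ((M + 1) * (r + 1)) * (X ^ (r + 1) * X ^ (M + r + 3)) := by
      rw [← pow_add, ← pow_add, ← pow_add]
      congr 1
      ring
    have e2 : (X : K) ^ ((M + 1 + 1) * (r + 1)) = X ^ ((M + 1) * (r + 1)) * X ^ (r + 1) :=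
      pow_eq _ _ _ (by ring)
    linear_combination (Qp (r + 1) (M + 1)) * e1 - (Qp (r + 1) (M + 1)) * (1 - (X : K) ^ (M + r + 3)) * e2


lemma dFE (r M : ℕ) :
    Bb r (M + 1) = -(2 : K) * X ^ (2 * r + 4) - 3 * (X ^ (3 * r + 6) * Aa (r + 1) M)
      - X ^ (3 * r + 5) * Bb (r + 1) M
      + X ^ ((M + 1) * (r + 1) + 1) * Qp (r + 1) (M + 1) * (Gg (r + 1) (M + 1) - C (R := ℤ) (M + 1)) := by
  induction M with
  | zero =>
    rw [Bb_succ, Bb_zero, Aa_zero, Bb_zero, Qp_one, Qp_one, Gg_one, Gg_one]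
    simp only [Nat.cast_zero, map_zero, Nat.cast_one, map_one, zero_mul, one_mul, zero_add,
      mul_zero, sub_zero, pow_one]
    have h1 : (1 - (X : K) ^ (r + 1)) * geomSeries (r + 1) = X ^ (r + 1) :=
      geom_rel (r + 1) (by omega)
    have h2 : (1 - (X : K) ^ (r + 1 + 1)) * geomSeries (r + 1 + 1) = X ^ (r + 1 + 1) :=
      geom_rel (r + 1 + 1) (by omega)
    have e0 : (X : K) * X ^ (r + 1) = X ^ (r + 1 + 1) := by
      rw [pow_eq (r + 1 + 1) 1 (r + 1) (by ring), pow_one]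
    have e1 : (X : K) ^ (r + 1 + 1) * X ^ (r + 1 + 1) = X ^ (2 * r + 4) := by
      rw [← pow_add]; congr 1; ring
    linear_combination (-(X : K)) * h1 - (X : K) ^ (r + 1 + 1) * h2 - e0 - 2 * e1
  | succ M ih =>
    rw [Bb_succ r (M + 1), ih, Aa_succ (r + 1) M, Bb_succ (r + 1) M, Qp_succ' r (M + 1),
      Gg_succ' r (M + 1),
      show Qp (r + 1) (M + 1 + 1) = Qp (r + 1) (M + 1) * (1 - (X : K) ^ (M + r + 3)) by
        rw [Qp_succ, show r + 1 + 1 + (M + 1) = M + r + 3 by omega],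
      show Gg (r + 1) (M + 1 + 1) = Gg (r + 1) (M + 1) + geomSeries (M + r + 3) by
        rw [Gg_succ, show r + 1 + 1 + (M + 1) = M + r + 3 by omega]]
    have h1 : (1 - (X : K) ^ (r + 1)) * geomSeries (r + 1) = X ^ (r + 1) :=
      geom_rel (r + 1) (by omega)
    have h2 : (1 - (X : K) ^ (M + r + 3)) * geomSeries (M + r + 3) = X ^ (M + r + 3) :=
      geom_rel (M + r + 3) (by omega)
    have E1 : (X : K) ^ ((M + 1 + 1) * (r + 1) + 1)
        = X ^ ((M + 1) * (r + 1) + 1) * X ^ (r + 1) := pow_eq _ _ _ (by ring)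
    have E2 : (X : K) ^ (3 * r + 5) * X ^ (M * (r + 1 + 1) + 1)
        = X ^ ((M + 1) * (r + 1) + 1) * (X ^ (r + 1) * X ^ (M + r + 3)) := by
      rw [← pow_add, ← pow_add, ← pow_add]; congr 1; ring
    have E3 : (X : K) ^ (3 * r + 6) * X ^ (M * (r + 1 + 1))
        = X ^ ((M + 1) * (r + 1) + 1) * (X ^ (r + 1) * X ^ (M + r + 3)) := by
      rw [← pow_add, ← pow_add, ← pow_add]; congr 1; ring
    push_cast
    simp only [map_add, map_one]
    set u := (X : K) ^ ((M + 1) * (r + 1) + 1) with hu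
    set y := (X : K) ^ (r + 1) with hy
    set z := (X : K) ^ (M + r + 3) with hz
    set Q' := Qp (r + 1) (M + 1) with hQ
    set G' := Gg (r + 1) (M + 1) with hG
    linear_combination (-(u * Q')) * h1 - (u * y * Q') * h2 + (3 * Q') * E3
      + (Q' * (C (R := ℤ) M - G')) * E2
      + (Q' * (1 - z) * (G' + geomSeries (M + r + 3) - (C (R := ℤ) M + 2))) * E1

/-- pentagonal exponents -/
def dlt (r : ℕ) : ℕ → ℕ
  | 0 => 0
  | s + 1 => dlt r s + (3 * (r + s) + 5)

def ee (r : ℕ) : ℕ → ℕ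
  | 0 => 2 * r + 4
  | s + 1 => ee r s + (3 * (r + s) + 7)

lemma I1 (r s : ℕ) : dlt r (s + 1) = 3 * r + 5 + dlt (r + 1) s := by
  induction s with
  | zero => simp [dlt]
  | succ s ih => rw [show dlt r (s+1+1) = dlt r (s+1) + (3*(r+(s+1))+5) from rfl, ih,
      show dlt (r+1) (s+1) = dlt (r+1) s + (3*((r+1)+s)+5) from rfl]; omega

lemma I2 (r s : ℕ) : ee r (s + 1) = 3 * r + 5 + ee (r + 1) s := by
  induction s with
  | zero => simp [ee]; omega
  | succ s ih => rw [show ee r (s+1+1) = ee r (s+1) + (3*(r+(s+1))+7) from rfl, ih,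
      show ee (r+1) (s+1) = ee (r+1) s + (3*((r+1)+s)+7) from rfl]; omega

lemma I3 (r s : ℕ) : 3 * r + 6 + dlt (r + 1) s = ee r s + (r + s + 2) := by
  induction s with
  | zero => simp [dlt, ee]; omega
  | succ s ih => rw [show dlt (r+1) (s+1) = dlt (r+1) s + (3*((r+1)+s)+5) from rfl,
      show ee r (s+1) = ee r s + (3*(r+s)+7) from rfl]; omega

lemma I4 (r s : ℕ) : 3 * r + 6 + (dlt (r + 1) s + (2 * (r + 1 + s) + 3)) = ee r (s + 1) := by
  have := I3 r s
  rw [show ee r (s+1) = ee r s + (3*(r+s)+7) from rfl]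
  omega

lemma dlt_ge (r s : ℕ) : s ≤ dlt r s := by
  induction s with
  | zero => simp [dlt]
  | succ s ih => rw [show dlt r (s+1) = dlt r s + (3*(r+s)+5) from rfl]; omega

lemma ee_ge (r s : ℕ) : s ≤ ee r s := by
  induction s with
  | zero => simp [ee]
  | succ s ih => rw [show ee r (s+1) = ee r s + (3*(r+s)+7) from rfl]; omega

lemma ee_ge' (r s : ℕ) : 2 * r + 4 ≤ ee r s := by
  induction s with
  | zero => simp [ee]
  | succ s ih => rw [show ee r (s+1) = ee r s + (3*(r+s)+7) from rfl]; omega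

lemma dlt_ge' (r s : ℕ) : 1 ≤ s → 3 * r + 5 ≤ dlt r s := by
  intro hs
  induction s with
  | zero => omega
  | succ s ih => rw [show dlt r (s+1) = dlt r s + (3*(r+s)+5) from rfl]; omega


noncomputable def vterm (r s : ℕ) : K :=
  C (R := ℤ) ((-1) ^ (s + 1) * (3 * s + 2)) * (X : K) ^ (ee r s) +
    C (R := ℤ) ((-1) ^ (s + 1) * (3 * s + 3)) * (X : K) ^ (ee r s + (r + s + 2))

noncomputable def w1term (r s : ℕ) : K := C (R := ℤ) ((-1) ^ s * 3) * (X : K) ^ (ee r s + (r + s + 2))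

noncomputable def w2term (r s : ℕ) : K := C (R := ℤ) ((-1) ^ s * 3) * (X : K) ^ (ee r (s + 1))

noncomputable def zzterm (r s : ℕ) : K :=
  C (R := ℤ) ((-1) ^ (s + 1) * (3 * s + 2)) * (X : K) ^ (ee r (s + 1)) +
    C (R := ℤ) ((-1) ^ (s + 1) * (3 * s + 3)) * (X : K) ^ (ee r (s + 1) + (r + (s + 1) + 2))

section PentN

variable (N : ℕ)

/-- partial pentagonal series for `Aa` -/
noncomputable def Pa (r : ℕ) : K :=
  ∑ s ∈ Finset.range (N + 1),
    C (R := ℤ) ((-1) ^ s) * ((X : K) ^ (dlt r s) - X ^ (dlt r s + (2 * (r + s) + 3)))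

/-- partial pentagonal series for `Bb` -/
noncomputable def Pb (r : ℕ) : K := ∑ s ∈ Finset.range (N + 1), vterm r s

lemma RA (r : ℕ) :
    (X : K) ^ (N + 1) ∣ Pa N r - (1 - X ^ (2 * r + 3) - X ^ (3 * r + 5) * Pa N (r + 1)) := by
  have key : ∀ s : ℕ, (X : K) ^ (3 * r + 5) *
      (C (R := ℤ) ((-1) ^ s) * ((X : K) ^ (dlt (r + 1) s) - X ^ (dlt (r + 1) s + (2 * (r + 1 + s) + 3))))
      = -(C (R := ℤ) ((-1) ^ (s + 1)) *
          ((X : K) ^ (dlt r (s + 1)) - X ^ (dlt r (s + 1) + (2 * (r + (s + 1)) + 3)))) := by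
    intro s
    rw [pow_eq (dlt r (s + 1)) (3 * r + 5) (dlt (r + 1) s) (by rw [I1]),
      pow_eq (dlt r (s + 1) + (2 * (r + (s + 1)) + 3)) (3 * r + 5)
        (dlt (r + 1) s + (2 * (r + 1 + s) + 3)) (by have := I1 r s; omega),
      pow_succ]
    simp only [map_mul, map_pow, map_neg, map_one]
    ring
  have hmul : (X : K) ^ (3 * r + 5) * Pa N (r + 1) = ∑ s ∈ Finset.range (N + 1),
      -(C (R := ℤ) ((-1) ^ (s + 1)) *
        ((X : K) ^ (dlt r (s + 1)) - X ^ (dlt r (s + 1) + (2 * (r + (s + 1)) + 3)))) := by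
    rw [Pa, Finset.mul_sum]
    exact Finset.sum_congr rfl fun s _ => key s
  have hPa : Pa N r = C (R := ℤ) ((-1) ^ 0) * ((X : K) ^ (dlt r 0) - X ^ (dlt r 0 + (2 * (r + 0) + 3)))
      + ∑ s ∈ Finset.range N, C (R := ℤ) ((-1) ^ (s + 1)) *
        ((X : K) ^ (dlt r (s + 1)) - X ^ (dlt r (s + 1) + (2 * (r + (s + 1)) + 3))) := by
    rw [Pa, Finset.sum_range_succ']
    ring
  have ht0 : C (R := ℤ) ((-1 : ℤ) ^ 0) * ((X : K) ^ (dlt r 0) - X ^ (dlt r 0 + (2 * (r + 0) + 3)))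
      = 1 - (X : K) ^ (2 * r + 3) := by
    simp only [dlt, pow_zero, map_one, one_mul]
    rw [show 0 + (2 * (r + 0) + 3) = 2 * r + 3 by omega]
  have heq : Pa N r - (1 - X ^ (2 * r + 3) - X ^ (3 * r + 5) * Pa N (r + 1))
      = -(C (R := ℤ) ((-1) ^ (N + 1)) *
          ((X : K) ^ (dlt r (N + 1)) - X ^ (dlt r (N + 1) + (2 * (r + (N + 1)) + 3)))) := by
    rw [hmul, hPa, ht0, Finset.sum_neg_distrib, Finset.sum_range_succ]
    ring
  rw [heq, dvd_neg]
  exact Dvd.dvd.mul_left (dvd_sub (pow_dvd_pow X (dlt_ge r (N + 1)))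
    (pow_dvd_pow X (by have := dlt_ge r (N + 1); omega))) _


lemma RB (r : ℕ) :
    (X : K) ^ (N + 1) ∣ Pb N r - (-(2 : K) * X ^ (2 * r + 4)
      - 3 * (X ^ (3 * r + 6) * Pa N (r + 1)) - X ^ (3 * r + 5) * Pb N (r + 1)) := by
  have kA : ∀ s : ℕ, (3 : K) * ((X : K) ^ (3 * r + 6) *
      (C (R := ℤ) ((-1) ^ s) * ((X : K) ^ (dlt (r + 1) s) - X ^ (dlt (r + 1) s + (2 * (r + 1 + s) + 3)))))
      = w1term r s - w2term r s := by
    intro s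
    unfold w1term w2term
    rw [pow_eq (ee r s + (r + s + 2)) (3 * r + 6) (dlt (r + 1) s) (by have := I3 r s; omega),
      pow_eq (ee r (s + 1)) (3 * r + 6) (dlt (r + 1) s + (2 * (r + 1 + s) + 3))
        (by have := I4 r s; omega)]
    simp only [map_mul, map_pow, map_neg, map_one, map_ofNat]
    ring
  have kB : ∀ s : ℕ, (X : K) ^ (3 * r + 5) * vterm (r + 1) s = zzterm r s := by
    intro s
    unfold vterm zzterm
    rw [pow_eq (ee r (s + 1)) (3 * r + 5) (ee (r + 1) s) (by have := I2 r s; omega),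
      pow_eq (ee r (s + 1) + (r + (s + 1) + 2)) (3 * r + 5) (ee (r + 1) s + (r + 1 + s + 2))
        (by have := I2 r s; omega)]
    ring
  have kE0 : vterm r 0 + (2 : K) * X ^ (2 * r + 4) + w1term r 0 = 0 := by
    unfold vterm w1term
    rw [show ee r 0 = 2 * r + 4 from rfl]
    simp only [map_mul, map_pow, map_neg, map_one, map_ofNat, map_add]
    norm_num
  have kEs : ∀ s : ℕ, vterm r (s + 1) + w1term r (s + 1) - w2term r s + zzterm r s = 0 := by
    intro s
    unfold vterm w1term w2term zzterm
    push_cast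
    simp only [map_mul, map_pow, map_neg, map_one, map_add, map_natCast, map_ofNat]
    ring
  have hA : (3 : K) * ((X : K) ^ (3 * r + 6) * Pa N (r + 1))
      = ∑ s ∈ Finset.range (N + 1), (w1term r s - w2term r s) := by
    rw [Pa, Finset.mul_sum, Finset.mul_sum]
    exact Finset.sum_congr rfl fun s _ => kA s
  have hB : (X : K) ^ (3 * r + 5) * Pb N (r + 1) = ∑ s ∈ Finset.range (N + 1), zzterm r s := by
    rw [Pb, Finset.mul_sum]
    exact Finset.sum_congr rfl fun s _ => kB s
  have hsum : (∑ s ∈ Finset.range N, vterm r (s + 1)) + (∑ s ∈ Finset.range N, w1term r (s + 1))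
      - (∑ s ∈ Finset.range N, w2term r s) + (∑ s ∈ Finset.range N, zzterm r s) = 0 := by
    rw [← Finset.sum_add_distrib, ← Finset.sum_sub_distrib, ← Finset.sum_add_distrib]
    exact Finset.sum_eq_zero fun s _ => kEs s
  have main : Pb N r - (-(2 : K) * X ^ (2 * r + 4)
      - 3 * (X ^ (3 * r + 6) * Pa N (r + 1)) - X ^ (3 * r + 5) * Pb N (r + 1))
      = zzterm r N - w2term r N := by
    rw [hA, hB, Pb, Finset.sum_range_succ' (fun s => vterm r s) N,
      Finset.sum_sub_distrib,
      Finset.sum_range_succ' (fun s => w1term r s) N,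
      Finset.sum_range_succ (fun s => w2term r s) N,
      Finset.sum_range_succ (fun s => zzterm r s) N]
    linear_combination hsum + kE0
  rw [main]
  have h1 : N + 1 ≤ ee r (N + 1) := ee_ge r (N + 1)
  unfold zzterm w2term
  exact dvd_sub
    (dvd_add (Dvd.dvd.mul_left (pow_dvd_pow X h1) _)
      (Dvd.dvd.mul_left (pow_dvd_pow X (by omega)) _))
    (Dvd.dvd.mul_left (pow_dvd_pow X h1) _)


end PentN

lemma Xg (N c k : ℕ) (h : N < c + k) : (X : K) ^ (N + 1) ∣ (X : K) ^ c * geomSeries k := by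
  rw [PowerSeries.X_pow_dvd_iff]
  intro m hm
  rw [mul_comm, PowerSeries.coeff_mul_X_pow']
  split_ifs with h1
  · simp only [geomSeries, PowerSeries.coeff_mk]
    rw [if_neg]
    rintro ⟨hd, hne⟩
    have := Nat.le_of_dvd (Nat.pos_of_ne_zero hne) hd
    omega
  · rfl

lemma CA0 (N r M : ℕ) (hr : N < r + 1) (hM : N + 1 ≤ M) :
    (X : K) ^ (N + 1) ∣ Aa r M - Pa N r := by
  obtain ⟨M', rfl⟩ : ∃ M', M = M' + 1 := ⟨M - 1, by omega⟩
  have hA : (X : K) ^ (N + 1) ∣ Aa r (M' + 1) - 1 := by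
    have : Aa r (M' + 1) - 1
        = -(X : K) ^ (r + 1) + ∑ n ∈ Finset.range M', (X : K) ^ ((n + 1) * (r + 1)) * Qp r (n + 1 + 1) := by
      rw [Aa, Finset.sum_range_succ']
      simp only [Nat.zero_mul, pow_zero, one_mul, zero_add]
      rw [Qp_one]
      ring
    rw [this]
    refine dvd_add (dvd_neg.mpr (pow_dvd_pow X (by omega))) (Finset.dvd_sum fun n _ => ?_)
    exact Dvd.dvd.mul_right (pow_dvd_pow X (by nlinarith)) _
  have hP : (X : K) ^ (N + 1) ∣ Pa N r - 1 := by
    have : Pa N r - 1 = -(X : K) ^ (2 * r + 3)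
        + ∑ s ∈ Finset.range N, C (R := ℤ) ((-1) ^ (s + 1)) *
          ((X : K) ^ (dlt r (s + 1)) - X ^ (dlt r (s + 1) + (2 * (r + (s + 1)) + 3))) := by
      rw [Pa, Finset.sum_range_succ']
      simp only [dlt, pow_zero, map_one, one_mul]
      rw [show (0:ℕ) + (2 * (r + 0) + 3) = 2 * r + 3 by omega]
      ring
    rw [this]
    refine dvd_add (dvd_neg.mpr (pow_dvd_pow X (by omega))) (Finset.dvd_sum fun s _ => ?_)
    refine Dvd.dvd.mul_left (dvd_sub (pow_dvd_pow X ?_) (pow_dvd_pow X ?_)) _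
    · have := dlt_ge' r (s + 1) (by omega); omega
    · have := dlt_ge' r (s + 1) (by omega); omega
  have : Aa r (M' + 1) - Pa N r = (Aa r (M' + 1) - 1) - (Pa N r - 1) := by ring
  rw [this]
  exact dvd_sub hA hP

lemma CA (N : ℕ) : ∀ fuel r M, N + 1 + fuel ≤ M → N < r + 1 + fuel →
    (X : K) ^ (N + 1) ∣ Aa r M - Pa N r := by
  intro fuel
  induction fuel with
  | zero => exact fun r M h1 h2 => CA0 N r M (by omega) (by omega)
  | succ fuel ih =>
    intro r M h1 h2
    by_cases hr : N < r + 1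
    · exact CA0 N r M hr (by omega)
    · obtain ⟨M', rfl⟩ : ∃ M', M = M' + 1 := ⟨M - 1, by omega⟩
      have IH := ih (r + 1) M' (by omega) (by omega)
      have hQ : (X : K) ^ (N + 1) ∣ (X : K) ^ ((M' + 1) * (r + 1)) * Qp (r + 1) (M' + 1) :=
        Dvd.dvd.mul_right (pow_dvd_pow X (by nlinarith)) _
      have heq : Aa r (M' + 1) - Pa N r
          = -(Pa N r - (1 - X ^ (2 * r + 3) - X ^ (3 * r + 5) * Pa N (r + 1)))
            - X ^ (3 * r + 5) * (Aa (r + 1) M' - Pa N (r + 1))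
            - X ^ ((M' + 1) * (r + 1)) * Qp (r + 1) (M' + 1) := by
        rw [FE]
        ring
      rw [heq]
      exact dvd_sub (dvd_sub (dvd_neg.mpr (RA N r)) (Dvd.dvd.mul_left IH _)) hQ

lemma CB0 (N r M : ℕ) (hr : N < r + 2) (hM : N + 1 ≤ M) :
    (X : K) ^ (N + 1) ∣ Bb r M - Pb N r := by
  have hB : (X : K) ^ (N + 1) ∣ Bb r M := by
    refine Finset.dvd_sum fun n _ => ?_
    have hsplit : (X : K) ^ (n * (r + 1) + 1) * Qp r (n + 1) * (C (R := ℤ) n - Gg r (n + 1))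
        = (X : K) ^ (n * (r + 1) + 1) * C (R := ℤ) n * Qp r (n + 1)
          - ∑ j ∈ Finset.range (n + 1),
            ((X : K) ^ (n * (r + 1) + 1) * geomSeries (r + 1 + j)) * Qp r (n + 1) := by
      rw [Gg, mul_sub, Finset.mul_sum]
      congr 1
      · ring
      · exact Finset.sum_congr rfl fun j _ => by ring
    rw [hsplit]
    refine dvd_sub ?_ (Finset.dvd_sum fun j _ => Dvd.dvd.mul_right (Xg N _ _ (by omega)) _)
    rcases Nat.eq_zero_or_pos n with rfl | hn
    · simp
    · exact Dvd.dvd.mul_right (Dvd.dvd.mul_right (pow_dvd_pow X (by nlinarith)) _) _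
  have hP : (X : K) ^ (N + 1) ∣ Pb N r := by
    refine Finset.dvd_sum fun s _ => ?_
    unfold vterm
    have h1 : N + 1 ≤ ee r s := by have := ee_ge' r s; omega
    exact dvd_add (Dvd.dvd.mul_left (pow_dvd_pow X h1) _)
      (Dvd.dvd.mul_left (pow_dvd_pow X (by omega)) _)
  exact dvd_sub hB hP

lemma CB (N : ℕ) : ∀ fuel r M, N + 2 + fuel ≤ M → N < r + 2 + fuel →
    (X : K) ^ (N + 1) ∣ Bb r M - Pb N r := by
  intro fuel
  induction fuel with
  | zero => exact fun r M h1 h2 => CB0 N r M (by omega) (by omega)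
  | succ fuel ih =>
    intro r M h1 h2
    by_cases hr : N < r + 2
    · exact CB0 N r M hr (by omega)
    · obtain ⟨M', rfl⟩ : ∃ M', M = M' + 1 := ⟨M - 1, by omega⟩
      have IHb := ih (r + 1) M' (by omega) (by omega)
      have IHa := CA N (fuel + 1) (r + 1) M' (by omega) (by omega)
      have hQ : (X : K) ^ (N + 1) ∣ (X : K) ^ ((M' + 1) * (r + 1) + 1)
          * Qp (r + 1) (M' + 1) * (Gg (r + 1) (M' + 1) - C (R := ℤ) (M' + 1)) :=
        Dvd.dvd.mul_right (Dvd.dvd.mul_right (pow_dvd_pow X (by nlinarith)) _) _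
      have heq : Bb r (M' + 1) - Pb N r
          = -(Pb N r - (-(2 : K) * X ^ (2 * r + 4)
              - 3 * (X ^ (3 * r + 6) * Pa N (r + 1)) - X ^ (3 * r + 5) * Pb N (r + 1)))
            - 3 * (X ^ (3 * r + 6) * (Aa (r + 1) M' - Pa N (r + 1)))
            - X ^ (3 * r + 5) * (Bb (r + 1) M' - Pb N (r + 1))
            + X ^ ((M' + 1) * (r + 1) + 1) * Qp (r + 1) (M' + 1)
              * (Gg (r + 1) (M' + 1) - C (R := ℤ) (M' + 1)) := by
        rw [dFE]
        ring
      rw [heq]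
      exact dvd_add (dvd_sub (dvd_sub (dvd_neg.mpr (RB N r))
        ((Dvd.dvd.mul_left IHa _).mul_left 3)) (Dvd.dvd.mul_left IHb _)) hQ

lemma coeff_eq_of_dvd {a b : K} {N : ℕ} (h : (X : K) ^ (N + 1) ∣ a - b) :
    PowerSeries.coeff N a = PowerSeries.coeff N b := by
  have := (PowerSeries.X_pow_dvd_iff.mp h) N (lt_add_one N)
  rw [map_sub] at this
  linarith

lemma qPoch_Qp (n : ℕ) : qPoch n = Qp 0 n :=
  Finset.prod_congr rfl fun k _ => by rw [show 0 + 1 + k = k + 1 by omega]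

lemma Qp_dvd (j d : ℕ) : (X : K) ^ (j + 1) ∣ Qp 0 (j + d) - Qp 0 j := by
  induction d with
  | zero => simp
  | succ d ih =>
    have : Qp 0 (j + (d + 1)) - Qp 0 j
        = (Qp 0 (j + d) - Qp 0 j) - (X : K) ^ (0 + 1 + (j + d)) * Qp 0 (j + d) := by
      rw [show j + (d + 1) = (j + d) + 1 by omega, Qp_succ]
      ring
    rw [this]
    exact dvd_sub ih (Dvd.dvd.mul_right (pow_dvd_pow X (by omega)) _)

lemma euler_coeff (j M : ℕ) (h : j ≤ M) :
    PowerSeries.coeff j eulerProd = PowerSeries.coeff j (Qp 0 M) := by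
  unfold eulerProd
  rw [PowerSeries.coeff_mk, qPoch_Qp]
  obtain ⟨d, rfl⟩ : ∃ d, M = j + d := ⟨M - j, by omega⟩
  exact (coeff_eq_of_dvd (Qp_dvd j d)).symm

lemma lambert_coeff (j M : ℕ) (h : j ≤ M) :
    PowerSeries.coeff j lambertSum = PowerSeries.coeff j (Gg 0 M) := by
  unfold lambertSum
  rw [PowerSeries.coeff_mk, Gg, map_sum]
  have h1 : ∀ k ∈ Finset.range M,
      PowerSeries.coeff j (geomSeries (0 + 1 + k)) = PowerSeries.coeff j (geomSeries (1 + k)) :=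
    fun k _ => by rw [show 0 + 1 + k = 1 + k by omega]
  rw [Finset.sum_congr rfl h1]
  have h2 : ∑ x ∈ Finset.range M, PowerSeries.coeff j (geomSeries (1 + x))
      = ∑ k ∈ Finset.Icc 1 M, PowerSeries.coeff j (geomSeries k) := by
    rw [← Finset.Ico_add_one_right_eq_Icc, Finset.sum_Ico_eq_sum_range, show M + 1 - 1 = M by omega]
  rw [h2]
  apply Finset.sum_subset
  · intro k hk
    simp only [Finset.mem_Icc] at *
    omega
  · intro k hk hk2
    simp only [Finset.mem_Icc] at hk hk2
    simp only [geomSeries, PowerSeries.coeff_mk]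
    rw [if_neg]
    rintro ⟨hd, hne⟩
    have := Nat.le_of_dvd (Nat.pos_of_ne_zero hne) hd
    omega

lemma prod_coeff (N M : ℕ) (hM : N ≤ M) :
    PowerSeries.coeff N (eulerProd * lambertSum)
      = PowerSeries.coeff N (Qp 0 M * Gg 0 M) := by
  rw [PowerSeries.coeff_mul, PowerSeries.coeff_mul]
  apply Finset.sum_congr rfl
  intro p hp
  have hmem := Finset.HasAntidiagonal.mem_antidiagonal.mp hp
  rw [euler_coeff p.1 M (by omega), lambert_coeff p.2 M (by omega)]

lemma claim2 : ∀ M : ℕ, ∑ m ∈ Finset.range M, (X : K) ^ (m + 1) * Qp 0 m * (1 - Gg 0 m)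
    = Qp 0 M * Gg 0 M := by
  intro M
  induction M with
  | zero => simp
  | succ M ih =>
    rw [Finset.sum_range_succ, ih, Qp_succ, Gg_succ, show 0 + 1 + M = M + 1 by omega]
    have hg := geom_rel (M + 1) (by omega)
    linear_combination (-(Qp 0 M)) * hg

lemma idII (M' : ℕ) : ∑ m ∈ Finset.range (M' + 1), (X : K) ^ (m + 1) * Qp 0 m
    = X ^ 2 * Aa 0 M' + X := by
  rw [Finset.sum_range_succ']
  congr 1
  · rw [Aa, Finset.mul_sum]
    apply Finset.sum_congr rfl
    intro n _
    rw [pow_eq (n + 1 + 1) 2 (n * (0 + 1)) (by ring)]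
    ring
  · simp

lemma idIII (M' : ℕ) : ∑ m ∈ Finset.range (M' + 1),
      (X : K) ^ (m + 1) * Qp 0 m * (C (R := ℤ) m - 1 - Gg 0 m)
    = X * Bb 0 M' + (-X) := by
  rw [Finset.sum_range_succ']
  congr 1
  · rw [Bb, Finset.mul_sum]
    apply Finset.sum_congr rfl
    intro n _
    rw [pow_eq (n + 1 + 1) 1 (n * (0 + 1) + 1) (by ring), pow_one,
      show (C (R := ℤ) (n + 1 : ℕ) : K) = C (R := ℤ) n + 1 by push_cast; rw [map_add, map_one]]
    ring
  · simp

lemma assembly (M' : ℕ) :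
    -∑ m ∈ Finset.range (M' + 1), (C (R := ℤ) m + 1) * ((X : K) ^ (m + 1) * Qp 0 m)
      = Qp 0 (M' + 1) * Gg 0 (M' + 1)
        + (-(2 : K) * X - X * Bb 0 M' - 3 * (X ^ 2 * Aa 0 M')) := by
  have hsplit : ∀ m ∈ Finset.range (M' + 1), (C (R := ℤ) m + 1) * ((X : K) ^ (m + 1) * Qp 0 m)
      = ((X : K) ^ (m + 1) * Qp 0 m * (C (R := ℤ) m - 1 - Gg 0 m))
        + 3 * ((X : K) ^ (m + 1) * Qp 0 m)
        - ((X : K) ^ (m + 1) * Qp 0 m * (1 - Gg 0 m)) := fun m _ => by ring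
  rw [Finset.sum_congr rfl hsplit, Finset.sum_sub_distrib, Finset.sum_add_distrib,
    ← Finset.mul_sum, idII, idIII, claim2 (M' + 1)]
  ring

lemma teleLHS : ∀ Nn : ℕ, ∑ n ∈ Finset.range Nn, (Qp 0 Nn - Qp 0 n)
    = -∑ m ∈ Finset.range Nn, (C (R := ℤ) m + 1) * ((X : K) ^ (m + 1) * Qp 0 m) := by
  intro Nn
  induction Nn with
  | zero => simp
  | succ N ih =>
    have hQ : Qp 0 (N + 1) = Qp 0 N - (X : K) ^ (N + 1) * Qp 0 N := by
      rw [Qp_succ, show 0 + 1 + N = N + 1 by omega]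
      ring
    have h1 : ∑ n ∈ Finset.range (N + 1), (Qp 0 (N + 1) - Qp 0 n)
        = (∑ n ∈ Finset.range (N + 1), (Qp 0 N - Qp 0 n))
          - (N + 1) • ((X : K) ^ (N + 1) * Qp 0 N) := by
      have hterm : ∀ n ∈ Finset.range (N + 1), Qp 0 (N + 1) - Qp 0 n
          = (Qp 0 N - Qp 0 n) - (X : K) ^ (N + 1) * Qp 0 N := fun n _ => by rw [hQ]; ring
      rw [Finset.sum_congr rfl hterm, Finset.sum_sub_distrib, Finset.sum_const,
        Finset.card_range]
    have h2 : ∑ n ∈ Finset.range (N + 1), (Qp 0 N - Qp 0 n)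
        = ∑ n ∈ Finset.range N, (Qp 0 N - Qp 0 n) := by
      rw [Finset.sum_range_succ]
      simp
    have hc : ((N + 1 : ℕ) : K) = C (R := ℤ) N + 1 := by
      rw [map_natCast]
      push_cast
      ring
    rw [h1, h2, ih, Finset.sum_range_succ, nsmul_eq_mul, hc]
    ring

lemma zagcoeff (N : ℕ) : PowerSeries.coeff N zagierLHS
    = PowerSeries.coeff N (-∑ m ∈ Finset.range N, (C (R := ℤ) m + 1) * ((X : K) ^ (m + 1) * Qp 0 m)) := by
  unfold zagierLHS
  rw [PowerSeries.coeff_mk]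
  have h1 : ∀ n ∈ Finset.range N, PowerSeries.coeff N (eulerProd - qPoch n)
      = PowerSeries.coeff N (Qp 0 N - Qp 0 n) := by
    intro n hn
    rw [map_sub, map_sub, euler_coeff N N le_rfl, qPoch_Qp]
  rw [Finset.sum_congr rfl h1, ← map_sum, teleLHS]

lemma ext1 (N M' : ℕ) (h : N ≤ M' + 1) :
    (X : K) ^ (N + 1) ∣ (∑ m ∈ Finset.range (M' + 1), (C (R := ℤ) m + 1) * ((X : K) ^ (m + 1) * Qp 0 m))
      - ∑ m ∈ Finset.range N, (C (R := ℤ) m + 1) * ((X : K) ^ (m + 1) * Qp 0 m) := by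
  rw [Finset.range_eq_Ico, ← Finset.sum_Ico_consecutive _ (Nat.zero_le N) h,
    ← Finset.range_eq_Ico, add_sub_cancel_left]
  refine Finset.dvd_sum fun m hm => ?_
  have hmem := Finset.mem_Ico.mp hm
  exact Dvd.dvd.mul_left (Dvd.dvd.mul_right (pow_dvd_pow X (by omega)) _) _

/-- pentagonal number exponents -/
def al : ℕ → ℕ
  | 0 => 0
  | r + 1 => al r + (3 * r + 1)

lemma al_pent (r : ℕ) : 2 * al r + r = 3 * r * r := by
  induction r with
  | zero => simp [al]
  | succ r ih => rw [show al (r + 1) = al r + (3 * r + 1) from rfl]; nlinarith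

lemma al_ge (r : ℕ) : r ≤ al r + 1 := by
  induction r with
  | zero => simp
  | succ r ih => rw [show al (r + 1) = al r + (3 * r + 1) from rfl]; omega

lemma J1 (s : ℕ) : ee 0 s + 1 = al (s + 2) := by
  induction s with
  | zero => rfl
  | succ s ih =>
    rw [show ee 0 (s + 1) = ee 0 s + (3 * (0 + s) + 7) from rfl,
      show al (s + 1 + 2) = al (s + 2) + (3 * (s + 2) + 1) from rfl]
    omega

lemma J3 (s : ℕ) : dlt 0 s + 2 = al (s + 1) + (s + 1) := by
  induction s with
  | zero => rfl
  | succ s ih =>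
    rw [show dlt 0 (s + 1) = dlt 0 s + (3 * (0 + s) + 5) from rfl,
      show al (s + 1 + 1) = al (s + 1) + (3 * (s + 1) + 1) from rfl]
    omega

lemma J4 (s : ℕ) : dlt 0 s + (2 * (0 + s) + 3) + 2 = al (s + 2) := by
  have h3 := J3 s
  rw [show al (s + 2) = al (s + 1) + (3 * (s + 1) + 1) from rfl]
  omega

/-- the normalized pentagonal-derivative term -/
noncomputable def theta (r : ℕ) : K :=
  C (R := ℤ) ((-1) ^ r * (3 * r - 1)) * (X : K) ^ (al r) + C (R := ℤ) ((-1) ^ r * (3 * r)) * (X : K) ^ (al r + r)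

noncomputable def Theta (N : ℕ) : K := ∑ s ∈ Finset.range (N + 2), theta (s + 1)

lemma GoalD (N : ℕ) :
    (X : K) ^ (N + 1) ∣ (-(2 : K) * X - X * Pb N 0 - 3 * (X ^ 2 * Pa N 0)) - Theta N := by
  have hXPb : (X : K) * Pb N 0 = ∑ s ∈ Finset.range (N + 1),
      (C (R := ℤ) ((-1) ^ (s + 1) * (3 * s + 2)) * (X : K) ^ (al (s + 2)) +
       C (R := ℤ) ((-1) ^ (s + 1) * (3 * s + 3)) * (X : K) ^ (al (s + 2) + (s + 2))) := by
    rw [Pb, Finset.mul_sum]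
    apply Finset.sum_congr rfl
    intro s _
    unfold vterm
    rw [pow_eq (al (s + 2)) 1 (ee 0 s) (by have := J1 s; omega), pow_one,
      pow_eq (al (s + 2) + (s + 2)) 1 (ee 0 s + (0 + s + 2)) (by have := J1 s; omega)]
    ring
  have hXPa : (3 : K) * ((X : K) ^ 2 * Pa N 0) = ∑ s ∈ Finset.range (N + 1),
      (C (R := ℤ) ((-1) ^ s * 3) * (X : K) ^ (al (s + 1) + (s + 1))
        - C (R := ℤ) ((-1) ^ s * 3) * (X : K) ^ (al (s + 2))) := by
    rw [Pa, Finset.mul_sum, Finset.mul_sum]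
    apply Finset.sum_congr rfl
    intro s _
    rw [pow_eq (al (s + 1) + (s + 1)) 2 (dlt 0 s) (by have := J3 s; omega),
      pow_eq (al (s + 2)) 2 (dlt 0 s + (2 * (0 + s) + 3)) (by have := J4 s; omega)]
    simp only [map_mul, map_pow, map_neg, map_one, map_ofNat]
    ring
  have hTheta : Theta N = theta 1 + ∑ s ∈ Finset.range (N + 1), theta (s + 2) := by
    rw [Theta, Finset.sum_range_succ']
    ring
  have hEs : ∀ s : ℕ,
      (C (R := ℤ) ((-1) ^ (s + 1) * (3 * s + 2)) * (X : K) ^ (al (s + 2)) +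
        C (R := ℤ) ((-1) ^ (s + 1) * (3 * s + 3)) * (X : K) ^ (al (s + 2) + (s + 2)))
      + C (R := ℤ) ((-1) ^ (s + 1) * 3) * (X : K) ^ (al (s + 1 + 1) + (s + 1 + 1))
      - C (R := ℤ) ((-1) ^ s * 3) * (X : K) ^ (al (s + 2))
      + theta (s + 2) = 0 := by
    intro s
    unfold theta
    have hcast : ((3 : ℤ) * (s + 2 : ℕ) - 1) = 3 * (s : ℤ) + 5 := by push_cast; ring
    have hcast2 : ((3 : ℤ) * (s + 2 : ℕ)) = 3 * (s : ℤ) + 6 := by push_cast; ring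
    rw [hcast, hcast2, show s + 1 + 1 = s + 2 from rfl]
    simp only [map_mul, map_pow, map_neg, map_one, map_add, map_ofNat, map_natCast]
    ring
  have hE0 : -(2 : K) * X - C (R := ℤ) ((-1 : ℤ) ^ 0 * 3) * (X : K) ^ (al 1 + 1) - theta 1 = 0 := by
    unfold theta
    rw [show al 1 = 1 from rfl]
    simp only [pow_zero, one_mul, map_ofNat, pow_one]
    norm_num
    ring
  have hswap : (∑ s ∈ Finset.range (N + 1),
        C (R := ℤ) ((-1) ^ s * 3) * (X : K) ^ (al (s + 1) + (s + 1)))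
      + C (R := ℤ) ((-1) ^ (N + 1) * 3) * (X : K) ^ (al (N + 1 + 1) + (N + 1 + 1))
      = C (R := ℤ) ((-1 : ℤ) ^ 0 * 3) * (X : K) ^ (al 1 + 1)
        + ∑ s ∈ Finset.range (N + 1),
          C (R := ℤ) ((-1) ^ (s + 1) * 3) * (X : K) ^ (al (s + 1 + 1) + (s + 1 + 1)) := by
    rw [Finset.sum_range_succ'
      (fun s => C (R := ℤ) ((-1) ^ s * 3) * (X : K) ^ (al (s + 1) + (s + 1))) N,
      Finset.sum_range_succ
      (fun s => C (R := ℤ) ((-1) ^ (s + 1) * 3) * (X : K) ^ (al (s + 1 + 1) + (s + 1 + 1))) N]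
    rw [show (0 : ℕ) + 1 = 1 from rfl]
    ring
  have hPa_split : ∑ s ∈ Finset.range (N + 1),
      (C (R := ℤ) ((-1) ^ s * 3) * (X : K) ^ (al (s + 1) + (s + 1))
        - C (R := ℤ) ((-1) ^ s * 3) * (X : K) ^ (al (s + 2)))
      = (∑ s ∈ Finset.range (N + 1), C (R := ℤ) ((-1) ^ s * 3) * (X : K) ^ (al (s + 1) + (s + 1)))
        - ∑ s ∈ Finset.range (N + 1), C (R := ℤ) ((-1) ^ s * 3) * (X : K) ^ (al (s + 2)) :=
    Finset.sum_sub_distrib _ _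
  have hsplitsum : (∑ s ∈ Finset.range (N + 1),
        (C (R := ℤ) ((-1) ^ (s + 1) * (3 * s + 2)) * (X : K) ^ (al (s + 2)) +
         C (R := ℤ) ((-1) ^ (s + 1) * (3 * s + 3)) * (X : K) ^ (al (s + 2) + (s + 2))))
      + (∑ s ∈ Finset.range (N + 1),
          C (R := ℤ) ((-1) ^ (s + 1) * 3) * (X : K) ^ (al (s + 1 + 1) + (s + 1 + 1)))
      - (∑ s ∈ Finset.range (N + 1), C (R := ℤ) ((-1) ^ s * 3) * (X : K) ^ (al (s + 2)))
      + (∑ s ∈ Finset.range (N + 1), theta (s + 2)) = 0 := by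
    rw [← Finset.sum_add_distrib, ← Finset.sum_sub_distrib, ← Finset.sum_add_distrib]
    exact Finset.sum_eq_zero fun s _ => hEs s
  have main : (-(2 : K) * X - X * Pb N 0 - 3 * (X ^ 2 * Pa N 0)) - Theta N
      = C (R := ℤ) ((-1) ^ (N + 1) * 3) * (X : K) ^ (al (N + 1 + 1) + (N + 1 + 1)) := by
    rw [hXPb, hXPa, hTheta, hPa_split]
    linear_combination hE0 - hsplitsum - hswap
  rw [main]
  exact Dvd.dvd.mul_left (pow_dvd_pow X (by omega)) _

lemma thetaCoeff (N : ℕ) :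
    PowerSeries.coeff N (Theta N) = PowerSeries.coeff N pentagonalDerivSeries := by
  unfold pentagonalDerivSeries
  rw [PowerSeries.coeff_mk, Theta, map_sum]
  have hstep1 : ∑ r ∈ Finset.Icc 1 N, (-1 : ℤ) ^ r *
      ((if 2 * N = 3 * r * r - r then 3 * (r : ℤ) - 1 else 0) +
       (if 2 * N = 3 * r * r + r then 3 * (r : ℤ) else 0))
      = ∑ r ∈ Finset.Icc 1 (N + 2), (-1 : ℤ) ^ r *
      ((if 2 * N = 3 * r * r - r then 3 * (r : ℤ) - 1 else 0) +
       (if 2 * N = 3 * r * r + r then 3 * (r : ℤ) else 0)) := by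
    apply Finset.sum_subset
    · intro k hk
      simp only [Finset.mem_Icc] at *
      omega
    · intro r hr hr2
      simp only [Finset.mem_Icc] at hr hr2
      have hrN : N + 1 ≤ r := by omega
      have hbig : 2 * N < 3 * r * r - r := by
        have h1 : (N + 1) * (3 * N + 2) ≤ r * (3 * r - 1) := by
          apply Nat.mul_le_mul hrN
          omega
        have h2 : r * (3 * r - 1) = 3 * r * r - r := by
          have : 1 ≤ 3 * r := by omega
          rw [Nat.mul_sub, Nat.mul_one]
          ring_nf
        nlinarith
      rw [if_neg (by omega), if_neg (by omega)]
      ring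
  rw [hstep1, show Finset.Icc 1 (N + 2) = Finset.Ico 1 (N + 3) by rw [← Finset.Ico_add_one_right_eq_Icc]; rfl,
    Finset.sum_Ico_eq_sum_range, show N + 3 - 1 = N + 2 by omega]
  apply Finset.sum_congr rfl
  intro s _
  rw [show 1 + s = s + 1 by omega]
  unfold theta
  rw [map_add, PowerSeries.coeff_C_mul, PowerSeries.coeff_C_mul,
    PowerSeries.coeff_X_pow, PowerSeries.coeff_X_pow]
  have hp := al_pent (s + 1)
  rw [show 3 * (s + 1) * (s + 1) = 2 * al (s + 1) + (s + 1) from (al_pent (s + 1)).symm]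
  simp only [show (2 * N = 2 * al (s + 1) + (s + 1) - (s + 1)) ↔ (N = al (s + 1)) from
      by omega,
    show (2 * N = 2 * al (s + 1) + (s + 1) + (s + 1)) ↔ (N = al (s + 1) + (s + 1)) from
      by omega]
  split_ifs <;> push_cast <;> ring

end ZagierAux


/-- Zagier's identity: `Σ_{n=0}^∞ [(q)_∞ - (q)_n]
= (q)_∞ · Σ_{k=1}^∞ q^k/(1-q^k) + Σ_{r=1}^∞ (-1)^r [(3r-1) q^{r(3r-1)/2} + 3r q^{r(3r+1)/2}]`. -/
theorem zagier_identity :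
    zagierLHS = eulerProd * lambertSum + pentagonalDerivSeries := by
  ext N
  rw [map_add]
  set M' := 2 * N + 2 with hM'
  have step1 : PowerSeries.coeff N zagierLHS = PowerSeries.coeff N
      (-∑ m ∈ Finset.range (M' + 1), (PowerSeries.C (R := ℤ) m + 1)
        * ((X : PowerSeries ℤ) ^ (m + 1) * ZagierAux.Qp 0 m)) := by
    rw [ZagierAux.zagcoeff N]
    refine ZagierAux.coeff_eq_of_dvd ?_
    rw [neg_sub_neg]
    exact ZagierAux.ext1 N M' (by omega)
  rw [step1, ZagierAux.assembly M']
  have hA := ZagierAux.CA N N 0 M' (by omega) (by omega)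
  have hB := ZagierAux.CB N N 0 M' (by omega) (by omega)
  have step2 : PowerSeries.coeff N
      (ZagierAux.Qp 0 (M' + 1) * ZagierAux.Gg 0 (M' + 1)
        + (-(2 : PowerSeries ℤ) * X - X * ZagierAux.Bb 0 M'
          - 3 * (X ^ 2 * ZagierAux.Aa 0 M')))
      = PowerSeries.coeff N
      (ZagierAux.Qp 0 (M' + 1) * ZagierAux.Gg 0 (M' + 1)
        + (-(2 : PowerSeries ℤ) * X - X * ZagierAux.Pb N 0
          - 3 * (X ^ 2 * ZagierAux.Pa N 0))) := by
    apply ZagierAux.coeff_eq_of_dvd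
    have heq : (ZagierAux.Qp 0 (M' + 1) * ZagierAux.Gg 0 (M' + 1)
        + (-(2 : PowerSeries ℤ) * X - X * ZagierAux.Bb 0 M'
          - 3 * (X ^ 2 * ZagierAux.Aa 0 M')))
      - (ZagierAux.Qp 0 (M' + 1) * ZagierAux.Gg 0 (M' + 1)
        + (-(2 : PowerSeries ℤ) * X - X * ZagierAux.Pb N 0
          - 3 * (X ^ 2 * ZagierAux.Pa N 0)))
      = -(X * (ZagierAux.Bb 0 M' - ZagierAux.Pb N 0))
        - 3 * (X ^ 2 * (ZagierAux.Aa 0 M' - ZagierAux.Pa N 0)) := by ring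
    rw [heq]
    exact dvd_sub (dvd_neg.mpr (hB.mul_left X)) ((hA.mul_left (X ^ 2)).mul_left 3)
  rw [step2, map_add]
  congr 1
  · exact (ZagierAux.prod_coeff N (M' + 1) (by omega)).symm
  · rw [ZagierAux.coeff_eq_of_dvd (ZagierAux.GoalD N), ZagierAux.thetaCoeff N]
end

section
/- In the ring of formal power series in q with integer coefficients, Σ_{λ ∈ 𝒟} (−1)^{n_λ} (m_λ + n_λ) q^{N_λ} = Σ_{r=1}^∞ (−1)^r [(3r−1) q^{r(3r−1)/2} + 3r q^{r(3r+1)/2}]; equivalently, for every N ≥ 1, Σ_{λ ∈ 𝒟_N} (−1)^{n_λ} (m_λ + n_λ) equals (−1)^r (3r−1) if N = r(3r−1)/2 for a positive integer r, equals (−1)^r · 3r if N = r(3r+1)/2 for a positive integer r, and equals 0 otherwise. -/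
open Finset

/-- The signed sum `Σ_{λ ∈ 𝒟_N} (-1)^{n_λ} (m_λ + n_λ)`, where `n_λ = s.card` is the
number of parts and `m_λ = s.sup id` is the largest part. -/
def signedSumMN (N : ℕ) : ℤ :=
  ∑ s ∈ distinctPartitions N, (-1 : ℤ) ^ s.card * (((s.sup (id : ℕ → ℕ) : ℕ) : ℤ) + (s.card : ℤ))

namespace Franklin

noncomputable def amin (s : Finset ℕ) : ℕ := sInf (↑s : Set ℕ)
noncomputable def tln (s : Finset ℕ) : ℕ := sInf {j : ℕ | s.sup id - j ∉ s}

noncomputable def frank (s : Finset ℕ) : Finset ℕ :=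
  if amin s ≤ tln s then
    insert (s.sup id + 1) ((s.erase (amin s)).erase (s.sup id - amin s + 1))
  else
    insert (s.sup id - tln s) (insert (tln s) (s.erase (s.sup id)))

lemma frank_if (s : Finset ℕ) : frank s =
  if amin s ≤ tln s then
    insert (s.sup id + 1) ((s.erase (amin s)).erase (s.sup id - amin s + 1))
  else
    insert (s.sup id - tln s) (insert (tln s) (s.erase (s.sup id))) := rfl

lemma sum_insert' {s : Finset ℕ} {x : ℕ} (h : x ∉ s) :
    (insert x s).sum id = x + s.sum id := by
  simpa using Finset.sum_insert h

lemma sum_erase_add' {s : Finset ℕ} {x : ℕ} (h : x ∈ s) :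
    (s.erase x).sum id + x = s.sum id := by
  simpa using Finset.sum_erase_add s id h

def bad (s : Finset ℕ) : Prop :=
  ∃ r : ℕ, 0 < r ∧ (s = Icc r (2*r-1) ∨ s = Icc (r+1) (2*r))

lemma sInf_eq' {S : Set ℕ} {k : ℕ} (h1 : k ∈ S) (h2 : ∀ j < k, j ∉ S) : sInf S = k := by
  refine le_antisymm (Nat.sInf_le h1) ?_
  by_contra h
  push_neg at h
  exact h2 _ h (Nat.sInf_mem ⟨k, h1⟩)

lemma sup_mem {s : Finset ℕ} (hne : s.Nonempty) : s.sup id ∈ s := by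
  have := s.max'_mem hne
  rwa [Finset.max'_eq_sup', Finset.sup'_eq_sup] at this

lemma le_sup' {s : Finset ℕ} {x : ℕ} (hx : x ∈ s) : x ≤ s.sup id :=
  Finset.le_sup (f := id) hx

lemma amin_mem {s : Finset ℕ} (hne : s.Nonempty) : amin s ∈ s := by
  obtain ⟨x, hx⟩ := hne
  exact Nat.sInf_mem ⟨x, hx⟩

lemma amin_le {s : Finset ℕ} {x : ℕ} (hx : x ∈ s) : amin s ≤ x :=
  Nat.sInf_le hx

lemma sup_Icc {a b : ℕ} (h : a ≤ b) : (Icc a b).sup id = b := by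
  refine le_antisymm (Finset.sup_le fun x hx => (mem_Icc.mp hx).2) ?_
  exact le_sup' (mem_Icc.mpr ⟨h, le_rfl⟩)

lemma amin_Icc {a b : ℕ} (h : a ≤ b) : amin (Icc a b) = a := by
  refine sInf_eq' (by simp [h]) fun j hj hmem => ?_
  simp only [Finset.coe_Icc, Set.mem_Icc] at hmem
  omega

lemma tln_Icc {a b : ℕ} (h1 : 1 ≤ a) (h : a ≤ b) : tln (Icc a b) = b + 1 - a := by
  unfold tln
  rw [sup_Icc h]
  refine sInf_eq' ?_ fun j hj hmem => ?_
  · simp only [Set.mem_setOf_eq, mem_Icc]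
    omega
  · simp only [Set.mem_setOf_eq, mem_Icc] at hmem
    omega

lemma caseA_s4 {N : ℕ} {s : Finset ℕ} (hN : 1 ≤ N) (hsub : s ⊆ Icc 1 N) (hsum : s.sum id = N)
    (hA : amin s ≤ tln s) (hneq : s.sup id - amin s + 1 ≠ amin s) :
    (frank s ⊆ Icc 1 N ∧ (frank s).sum id = N) ∧
    (frank s).sup id = s.sup id + 1 ∧
    (frank s).card + 1 = s.card ∧
    tln (frank s) = amin s ∧
    (∀ x ∈ frank s, amin s < x) ∧
    frank (frank s) = s := by
  have hne : s.Nonempty := by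
    rcases s.eq_empty_or_nonempty with rfl | h
    · simp at hsum; omega
    · exact h
  have h1 : ∀ x ∈ s, 1 ≤ x ∧ x ≤ N := fun x hx => mem_Icc.mp (hsub hx)
  set m := s.sup id with hm_def
  set a := amin s with ha_def
  set t := tln s with ht_def
  have hm : m ∈ s := sup_mem hne
  have ha : a ∈ s := amin_mem hne
  have ha1 : 1 ≤ a := (h1 a ha).1
  have ham : a ≤ m := amin_le hm
  have h0 : (0 : ℕ) ∉ s := fun h => by have := (h1 0 h).1; omega
  have hSne : {j : ℕ | m - j ∉ s}.Nonempty := ⟨m, by simp [Nat.sub_self, h0]⟩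
  have htdef : t = sInf {j : ℕ | m - j ∉ s} := rfl
  have htm : m - t ∉ s := Nat.sInf_mem hSne
  have hmem_lt : ∀ j < t, m - j ∈ s := by
    intro j hj
    by_contra hc
    have h2 : sInf {j : ℕ | m - j ∉ s} ≤ j := Nat.sInf_le hc
    rw [← htdef] at h2
    omega
  have hp : m - a + 1 ∈ s := by
    have := hmem_lt (a - 1) (by omega)
    have he : m - (a - 1) = m - a + 1 := by omega
    rwa [he] at this
  have hpa : a < m - a + 1 := lt_of_le_of_ne (amin_le hp) (Ne.symm hneq)
  have ham2 : 2 * a ≤ m := by omega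
  have halm : a < m := by omega
  have hm1 : m + 1 ∉ s := fun h => by have := le_sup' h; omega
  have hfr : frank s = insert (m + 1) ((s.erase a).erase (m - a + 1)) := by
    rw [frank_if s, if_pos hA]
  have hmem : ∀ x, x ∈ frank s ↔ x = m + 1 ∨ (x ∈ s ∧ x ≠ a ∧ x ≠ m - a + 1) := by
    intro x
    rw [hfr]
    simp only [mem_insert, mem_erase]
    tauto
  -- sup
  have hsup : (frank s).sup id = m + 1 := by
    refine le_antisymm (Finset.sup_le fun x hx => ?_) (le_sup' ((hmem _).2 (Or.inl rfl)))
    rcases (hmem x).1 hx with rfl | ⟨hx', _⟩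
    · exact le_rfl
    · have := le_sup' hx'; simp only [id]; omega
  -- card
  have hcard2 : 2 ≤ s.card := by
    have hss : ({a, m - a + 1} : Finset ℕ) ⊆ s := by
      intro x hx; rcases mem_insert.mp hx with rfl | hx
      · exact ha
      · rwa [mem_singleton.mp hx]
    have := Finset.card_le_card hss
    rwa [Finset.card_pair (by omega)] at this
  have hpe : m - a + 1 ∈ s.erase a := mem_erase.mpr ⟨by omega, hp⟩
  have hnm : m + 1 ∉ (s.erase a).erase (m - a + 1) :=
    fun h => hm1 (Finset.mem_of_mem_erase (Finset.mem_of_mem_erase h))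
  have hcard : (frank s).card + 1 = s.card := by
    rw [hfr, Finset.card_insert_of_notMem hnm, Finset.card_erase_of_mem hpe,
      Finset.card_erase_of_mem ha]
    omega
  -- sum
  have hsum' : (frank s).sum id = N := by
    have e1 : (frank s).sum id = (m + 1) + ((s.erase a).erase (m - a + 1)).sum id := by
      rw [hfr, sum_insert' hnm]
    have e2 : ((s.erase a).erase (m - a + 1)).sum id + (m - a + 1) = (s.erase a).sum id :=
      sum_erase_add' hpe
    have e3 : (s.erase a).sum id + a = s.sum id := sum_erase_add' ha
    omega
  -- subset
  have hsub' : frank s ⊆ Icc 1 N := by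
    intro x hx
    rcases (hmem x).1 hx with rfl | ⟨hx', _, _⟩
    · refine mem_Icc.mpr ⟨by omega, ?_⟩
      have hsum2 : ({a, m} : Finset ℕ).sum id ≤ s.sum id := by
        refine Finset.sum_le_sum_of_subset ?_
        intro x hx; rcases mem_insert.mp hx with rfl | hx
        · exact ha
        · rwa [mem_singleton.mp hx]
      rw [Finset.sum_pair (by omega : a ≠ m)] at hsum2
      simp only [id_eq] at hsum2
      have hsum0 : (∑ x ∈ s, x) = N := hsum
      omega
    · exact hsub hx'
  -- tln of frank s
  have htln : tln (frank s) = a := by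
    unfold tln
    rw [hsup]
    refine sInf_eq' ?_ fun j hj hmem' => ?_
    · simp only [Set.mem_setOf_eq]
      have he : m + 1 - a = m - a + 1 := by omega
      rw [he, hmem]
      push_neg
      exact ⟨by omega, fun _ _ => rfl⟩
    · simp only [Set.mem_setOf_eq, hmem] at hmem'
      rcases Nat.eq_zero_or_pos j with rfl | hj1
      · exact hmem' (Or.inl (by omega))
      · refine hmem' (Or.inr ⟨?_, by omega, by omega⟩)
        have := hmem_lt (j - 1) (by omega)
        have he : m - (j - 1) = m + 1 - j := by omega
        rwa [he] at this
  -- all elements > a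
  have hgt : ∀ x ∈ frank s, a < x := by
    intro x hx
    rcases (hmem x).1 hx with rfl | ⟨hx', hxa, _⟩
    · omega
    · exact lt_of_le_of_ne (amin_le hx') (Ne.symm hxa)
  -- involution
  have hinv : frank (frank s) = s := by
    have hne' : (frank s).Nonempty := ⟨m + 1, (hmem _).2 (Or.inl rfl)⟩
    have hcond : ¬ amin (frank s) ≤ tln (frank s) := by
      rw [htln]
      have := hgt _ (amin_mem hne')
      omega
    rw [frank_if (frank s), if_neg hcond, hsup, htln]
    have he1 : m + 1 - a = m - a + 1 := by omega
    have he2 : (frank s).erase (m + 1) = (s.erase a).erase (m - a + 1) := by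
      rw [hfr, Finset.erase_insert hnm]
    rw [he1, he2, Finset.erase_right_comm]
    rw [Finset.insert_erase (mem_erase.mpr ⟨by omega, ha⟩), Finset.insert_erase hp]
  exact ⟨⟨hsub', hsum'⟩, hsup, hcard, htln, hgt, hinv⟩

lemma caseB_s4 {N : ℕ} {s : Finset ℕ} (hN : 1 ≤ N) (hsub : s ⊆ Icc 1 N) (hsum : s.sum id = N)
    (hB : tln s < amin s) (hneq2 : s.sup id ≠ 2 * tln s) :
    (frank s ⊆ Icc 1 N ∧ (frank s).sum id = N) ∧
    (frank s).sup id + 1 = s.sup id ∧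
    (frank s).card = s.card + 1 ∧
    amin (frank s) = tln s ∧
    tln s ≤ tln (frank s) ∧
    frank (frank s) = s := by
  have hne : s.Nonempty := by
    rcases s.eq_empty_or_nonempty with rfl | h
    · simp at hsum; omega
    · exact h
  have h1 : ∀ x ∈ s, 1 ≤ x ∧ x ≤ N := fun x hx => mem_Icc.mp (hsub hx)
  set m := s.sup id with hm_def
  set a := amin s with ha_def
  set t := tln s with ht_def
  have hm : m ∈ s := sup_mem hne
  have ha : a ∈ s := amin_mem hne
  have ha1 : 1 ≤ a := (h1 a ha).1
  have ham : a ≤ m := amin_le hm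
  have h0 : (0 : ℕ) ∉ s := fun h => by have := (h1 0 h).1; omega
  have hSne : {j : ℕ | m - j ∉ s}.Nonempty := ⟨m, by simp [Nat.sub_self, h0]⟩
  have htdef : t = sInf {j : ℕ | m - j ∉ s} := rfl
  have htm : m - t ∉ s := Nat.sInf_mem hSne
  have hmem_lt : ∀ j < t, m - j ∈ s := by
    intro j hj
    by_contra hc
    have h2 : sInf {j : ℕ | m - j ∉ s} ≤ j := Nat.sInf_le hc
    rw [← htdef] at h2
    omega
  have ht1 : 1 ≤ t := by
    by_contra hc
    push_neg at hc
    interval_cases t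
    · simp at htm; exact htm hm
  have htlem : t ≤ m := by
    have : m ∈ {j : ℕ | m - j ∉ s} := by simp [Nat.sub_self, h0]
    have := Nat.sInf_le this
    omega
  have h2t : 2 * t < m := by
    have h3 := hmem_lt (t - 1) (by omega)
    have h4 := amin_le h3
    omega
  have htns : t ∉ s := fun h => by have := amin_le h; omega
  set q := m - t with hq_def
  have hqns : q ∉ s := htm
  have htq : t < q := by omega
  have hfr : frank s = insert q (insert t (s.erase m)) := by
    rw [frank_if s, if_neg (by omega)]
  have hmem : ∀ x, x ∈ frank s ↔ x = q ∨ x = t ∨ (x ∈ s ∧ x ≠ m) := by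
    intro x
    rw [hfr]
    simp only [mem_insert, mem_erase]
    tauto
  -- card
  have hq_nmem : q ∉ insert t (s.erase m) := by
    simp only [mem_insert, mem_erase]
    push_neg
    exact ⟨by omega, fun _ => hqns⟩
  have ht_nmem : t ∉ s.erase m := fun h => htns (Finset.mem_of_mem_erase h)
  have hcard : (frank s).card = s.card + 1 := by
    rw [hfr, Finset.card_insert_of_notMem hq_nmem, Finset.card_insert_of_notMem ht_nmem,
      Finset.card_erase_of_mem hm]
    have : 1 ≤ s.card := Finset.card_pos.mpr hne
    omega
  -- sum
  have hsum' : (frank s).sum id = N := by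
    have e1 : (frank s).sum id = q + (insert t (s.erase m)).sum id := by
      rw [hfr, sum_insert' hq_nmem]
    have e2 : (insert t (s.erase m)).sum id = t + (s.erase m).sum id := sum_insert' ht_nmem
    have e3 : (s.erase m).sum id + m = s.sum id := sum_erase_add' hm
    omega
  -- sup
  have hsup : (frank s).sup id = m - 1 := by
    refine le_antisymm (Finset.sup_le fun x hx => ?_) ?_
    · rcases (hmem x).1 hx with rfl | rfl | ⟨hx', hxm⟩
      · simp only [id]; omega
      · simp only [id]; omega
      · have := le_sup' hx'; simp only [id]; omega
    · have hm1 : m - 1 ∈ frank s := by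
        rcases Nat.eq_or_lt_of_le ht1 with h | h
        · exact (hmem _).2 (Or.inl (by omega))
        · refine (hmem _).2 (Or.inr (Or.inr ⟨?_, by omega⟩))
          have := hmem_lt 1 (by omega)
          rwa [show m - 1 = m - 1 from rfl] at this
      exact le_sup' hm1
  -- subset
  have hsub' : frank s ⊆ Icc 1 N := by
    intro x hx
    have hmN : m ≤ N := (h1 m hm).2
    rcases (hmem x).1 hx with rfl | rfl | ⟨hx', _⟩
    · exact mem_Icc.mpr ⟨by omega, by omega⟩
    · exact mem_Icc.mpr ⟨by omega, by omega⟩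
    · exact hsub hx'
  -- amin
  have hamin : amin (frank s) = t := by
    refine sInf_eq' ((hmem _).2 (Or.inr (Or.inl rfl))) fun j hj hmem' => ?_
    rw [Finset.mem_coe, hmem] at hmem'
    rcases hmem' with rfl | rfl | ⟨hj', _⟩
    · omega
    · omega
    · have := amin_le hj'; omega
  -- tln lower bound
  have htln : t ≤ tln (frank s) := by
    by_contra hc
    push_neg at hc
    have hSne' : {j : ℕ | (frank s).sup id - j ∉ frank s}.Nonempty := by
      refine ⟨(frank s).sup id, ?_⟩
      simp only [Set.mem_setOf_eq, Nat.sub_self]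
      rw [hmem]
      push_neg
      refine ⟨by omega, by omega, fun h => absurd ((h1 0 h).1) (by omega)⟩
    have hmem0 : (frank s).sup id - tln (frank s) ∉ frank s := Nat.sInf_mem hSne'
    rw [hsup] at hmem0
    set j := tln (frank s) with hj_def
    -- show m - 1 - j ∈ frank s for j < t
    apply hmem0
    rcases Nat.eq_or_lt_of_le (show j + 1 ≤ t by omega) with h | h
    · refine (hmem _).2 (Or.inl ?_)
      omega
    · refine (hmem _).2 (Or.inr (Or.inr ⟨?_, by omega⟩))
      have := hmem_lt (j + 1) h
      have he : m - (j + 1) = m - 1 - j := by omega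
      rwa [he] at this
  -- involution
  have hinv : frank (frank s) = s := by
    have hcond : amin (frank s) ≤ tln (frank s) := by rw [hamin]; exact htln
    rw [frank_if (frank s), if_pos hcond, hsup, hamin]
    have he1 : m - 1 + 1 = m := by omega
    have he2 : m - 1 - t + 1 = q := by omega
    rw [he1, he2]
    have he3 : (frank s).erase t = insert q (s.erase m) := by
      rw [hfr, Finset.insert_comm, Finset.erase_insert]
      simp only [mem_insert, mem_erase]
      push_neg
      exact ⟨by omega, fun _ => htns⟩
    rw [he3, Finset.erase_insert (fun h => hqns (Finset.mem_of_mem_erase h)),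
      Finset.insert_erase hm]
  exact ⟨⟨hsub', hsum'⟩, by omega, hcard, hamin, htln, hinv⟩

lemma mem_distinct {N : ℕ} {s : Finset ℕ} :
    s ∈ distinctPartitions N ↔ s ⊆ Icc 1 N ∧ s.sum id = N := by
  simp [distinctPartitions, Finset.mem_filter, Finset.mem_powerset]

lemma frank_spec {N : ℕ} {s : Finset ℕ} (hN : 1 ≤ N) (hs : s ∈ distinctPartitions N)
    (hbad : ¬ bad s) :
    frank s ∈ distinctPartitions N ∧
    ((frank s).card + 1 = s.card ∨ s.card + 1 = (frank s).card) ∧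
    (frank s).sup id + (frank s).card = s.sup id + s.card ∧
    frank (frank s) = s ∧
    ¬ bad (frank s) := by
  obtain ⟨hsub, hsum⟩ := mem_distinct.mp hs
  have hne : s.Nonempty := by
    rcases s.eq_empty_or_nonempty with rfl | h
    · simp at hsum; omega
    · exact h
  have h1 : ∀ x ∈ s, 1 ≤ x ∧ x ≤ N := fun x hx => mem_Icc.mp (hsub hx)
  set m := s.sup id with hm_def
  set a := amin s with ha_def
  set t := tln s with ht_def
  have hm : m ∈ s := sup_mem hne
  have ha : a ∈ s := amin_mem hne
  have ha1 : 1 ≤ a := (h1 a ha).1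
  have ham : a ≤ m := amin_le hm
  have h0 : (0 : ℕ) ∉ s := fun h => by have := (h1 0 h).1; omega
  have hSne : {j : ℕ | m - j ∉ s}.Nonempty := ⟨m, by simp [Nat.sub_self, h0]⟩
  have htdef : t = sInf {j : ℕ | m - j ∉ s} := rfl
  have htm : m - t ∉ s := Nat.sInf_mem hSne
  have hmem_lt : ∀ j < t, m - j ∈ s := by
    intro j hj
    by_contra hc
    have h2 : sInf {j : ℕ | m - j ∉ s} ≤ j := Nat.sInf_le hc
    rw [← htdef] at h2
    omega
  have htlem : t ≤ m := by
    have : m ∈ {j : ℕ | m - j ∉ s} := by simp [Nat.sub_self, h0]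
    have := Nat.sInf_le this
    omega
  by_cases hA : a ≤ t
  · -- Case A
    have hneq : m - a + 1 ≠ a := by
      intro heq
      refine hbad ⟨a, by omega, Or.inl ?_⟩
      ext x
      rw [mem_Icc]
      constructor
      · intro hx
        exact ⟨amin_le hx, by have := le_sup' hx; omega⟩
      · rintro ⟨hx1, hx2⟩
        have h5 : m - (m - x) ∈ s := hmem_lt (m - x) (by omega)
        have h6 : m - (m - x) = x := by omega
        rwa [h6] at h5
    obtain ⟨⟨hsub', hsum'⟩, hsup, hcard, htln, hgt, hinv⟩ := caseA_s4 hN hsub hsum hA hneq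
    refine ⟨mem_distinct.mpr ⟨hsub', hsum'⟩, Or.inl hcard, by omega, hinv, ?_⟩
    rintro ⟨r, hr, hb | hb⟩
    · have h5 : amin (frank s) = r := by rw [hb]; exact amin_Icc (by omega)
      have h6 : tln (frank s) = 2*r - 1 + 1 - r := by rw [hb]; exact tln_Icc (by omega) (by omega)
      have h7 : (frank s).Nonempty := by
        rw [hb]; exact ⟨r, mem_Icc.mpr ⟨le_rfl, by omega⟩⟩
      have h8 := hgt _ (amin_mem h7)
      omega
    · have h6 : tln (frank s) = 2*r + 1 - (r+1) := by
        rw [hb]; exact tln_Icc (by omega) (by omega)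
      have h7 : (frank s).sup id = 2*r := by rw [hb]; exact sup_Icc (by omega)
      exact hneq (by omega)
  · -- Case B
    have hB : t < a := by omega
    have ht1 : 1 ≤ t := by
      by_contra hc
      push_neg at hc
      interval_cases t
      · simp at htm; exact htm hm
    have h2t : 2 * t ≤ m := by
      have h3 := hmem_lt (t - 1) (by omega)
      have h4 := amin_le h3
      omega
    have hneq2 : m ≠ 2 * t := by
      intro heq
      refine hbad ⟨t, by omega, Or.inr ?_⟩
      ext x
      rw [mem_Icc]
      constructor
      · intro hx
        have := amin_le hx
        have := le_sup' hx
        omega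
      · rintro ⟨hx1, hx2⟩
        have h5 : m - (m - x) ∈ s := hmem_lt (m - x) (by omega)
        have h6 : m - (m - x) = x := by omega
        rwa [h6] at h5
    obtain ⟨⟨hsub', hsum'⟩, hsup, hcard, hamin, htln, hinv⟩ := caseB_s4 hN hsub hsum hB hneq2
    refine ⟨mem_distinct.mpr ⟨hsub', hsum'⟩, Or.inr (by omega), by omega, hinv, ?_⟩
    rintro ⟨r, hr, hb | hb⟩
    · have h5 : amin (frank s) = r := by rw [hb]; exact amin_Icc (by omega)
      have h7 : (frank s).sup id = 2*r - 1 := by rw [hb]; exact sup_Icc (by omega)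
      omega
    · have h5 : amin (frank s) = r + 1 := by rw [hb]; exact amin_Icc (by omega)
      have h7 : (frank s).sup id = 2*r := by rw [hb]; exact sup_Icc (by omega)
      omega

lemma sum_Icc_two {a b : ℕ} (h : a ≤ b + 1) :
    (Icc a b).sum id * 2 = (a + b) * (b + 1 - a) := by
  obtain ⟨c, hc⟩ := Nat.le.dest h
  show (∑ x ∈ Icc a b, x) * 2 = _
  rw [← Finset.Ico_add_one_right_eq_Icc, Finset.sum_Ico_eq_sum_range]
  have h1 : b + 1 - a = c := by omega
  rw [h1, Finset.sum_add_distrib, Finset.sum_const, add_mul,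
    Finset.sum_range_id_mul_two c]
  cases c with
  | zero => simp
  | succ d =>
    have hb : b = a + d := by omega
    subst hb
    simp only [smul_eq_mul, Nat.succ_sub_one, Finset.card_range]
    ring

lemma pent1_sum {r : ℕ} (hr : 0 < r) : (Icc r (2*r-1)).sum id * 2 = 3*r*r - r := by
  rw [sum_Icc_two (by omega)]
  have h1 : 2*r - 1 + 1 - r = r := by omega
  have h2 : r + (2*r - 1) = 3*r - 1 := by omega
  rw [h1, h2, Nat.sub_mul, one_mul]

lemma pent2_sum {r : ℕ} (hr : 0 < r) : (Icc (r+1) (2*r)).sum id * 2 = 3*r*r + r := by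
  rw [sum_Icc_two (by omega)]
  have h1 : 2*r + 1 - (r + 1) = r := by omega
  rw [h1]
  ring

lemma pent_r_le {r : ℕ} (hr : 0 < r) : r ≤ 3*r*r := by nlinarith

lemma pent_inj1 {r r' : ℕ} (hr : 0 < r) (hr' : 0 < r')
    (h : 3*r*r - r = 3*r'*r' - r') : r = r' := by
  have h1 : (3*(r:ℤ)*r - r = 3*(r':ℤ)*r' - r') := by
    have c1 : ((3*r*r - r : ℕ) : ℤ) = 3*(r:ℤ)*r - r := by
      have := pent_r_le hr; push_cast [Nat.cast_sub this]; ring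
    have c2 : ((3*r'*r' - r' : ℕ) : ℤ) = 3*(r':ℤ)*r' - r' := by
      have := pent_r_le hr'; push_cast [Nat.cast_sub this]; ring
    rw [← c1, ← c2, h]
  have h2 : ((r:ℤ) - r') * (3*((r:ℤ) + r') - 1) = 0 := by linear_combination h1
  rcases mul_eq_zero.mp h2 with h3 | h3
  · have : (r : ℤ) = r' := by linarith
    exact_mod_cast this
  · exfalso
    have hr1 : (1 : ℤ) ≤ r := by exact_mod_cast hr
    have hr2 : (1 : ℤ) ≤ r' := by exact_mod_cast hr'
    linarith

lemma pent_inj2 {r r' : ℕ} (h : 3*r*r + r = 3*r'*r' + r') : r = r' := by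
  have h1 : (3*(r:ℤ)*r + r = 3*(r':ℤ)*r' + r') := by exact_mod_cast h
  have h2 : ((r:ℤ) - r') * (3*((r:ℤ) + r') + 1) = 0 := by linear_combination h1
  rcases mul_eq_zero.mp h2 with h3 | h3
  · have : (r : ℤ) = r' := by linarith
    exact_mod_cast this
  · exfalso
    have hr1 : (0 : ℤ) ≤ r := by positivity
    have hr2 : (0 : ℤ) ≤ r' := by positivity
    linarith

lemma pent_disj {r r' : ℕ} (hr : 0 < r) (hr' : 0 < r')
    (h : 3*r*r - r = 3*r'*r' + r') : False := by
  have h1 : (3*(r:ℤ)*r - r = 3*(r':ℤ)*r' + r') := by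
    have c1 : ((3*r*r - r : ℕ) : ℤ) = 3*(r:ℤ)*r - r := by
      have := pent_r_le hr; push_cast [Nat.cast_sub this]; ring
    rw [← c1, h]; push_cast; ring
  have h2 : ((r:ℤ) + r') * (3*((r:ℤ) - r') - 1) = 0 := by linear_combination h1
  have hr1 : (1 : ℤ) ≤ r := by exact_mod_cast hr
  have hr2 : (1 : ℤ) ≤ r' := by exact_mod_cast hr'
  rcases mul_eq_zero.mp h2 with h3 | h3
  · linarith
  · have h4 : 3*((r:ℤ) - r') = 1 := by linarith
    omega

/-- sum of `f` over a frank-closed set of non-bad partitions is zero -/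
lemma sum_zero_of_closed {N : ℕ} (hN : 1 ≤ N) (E : Finset (Finset ℕ))
    (hE : E ⊆ distinctPartitions N) (hnb : ∀ s ∈ E, ¬ bad s) (hcl : ∀ s ∈ E, frank s ∈ E) :
    ∑ s ∈ E, (-1 : ℤ) ^ s.card * (((s.sup id : ℕ) : ℤ) + s.card) = 0 := by
  apply Finset.sum_involution (g := fun s _ => frank s)
  · intro s hs
    obtain ⟨_, hc, hsc, _, _⟩ := frank_spec hN (hE hs) (hnb s hs)
    have hx : (((frank s).sup id : ℕ) : ℤ) + (frank s).card = ((s.sup id : ℕ) : ℤ) + s.card := by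
      exact_mod_cast congrArg (Nat.cast : ℕ → ℤ) hsc
    rw [hx]
    rcases hc with h | h
    · rw [← h, pow_succ]; ring
    · rw [← h, pow_succ]; ring
  · intro s hs _
    obtain ⟨_, hc, _, _, _⟩ := frank_spec hN (hE hs) (hnb s hs)
    intro heq
    rw [heq] at hc
    omega
  · exact hcl
  · intro s hs
    exact (frank_spec hN (hE hs) (hnb s hs)).2.2.2.1

end Franklin

open Franklin in
/-- For every `N ≥ 1`, `Σ_{λ ∈ 𝒟_N} (-1)^{n_λ}(m_λ + n_λ)` equals `(-1)^r (3r-1)`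
if `N = r(3r-1)/2` (i.e. `2N = 3r² - r`) for a positive integer `r`, equals
`(-1)^r · 3r` if `N = r(3r+1)/2` (i.e. `2N = 3r² + r`) for a positive integer `r`,
and equals `0` otherwise. -/
theorem signed_sum_m_plus_n (N : ℕ) (hN : 1 ≤ N) :
    (∀ r : ℕ, 0 < r → 2 * N = 3 * r * r - r →
      signedSumMN N = (-1) ^ r * (3 * (r : ℤ) - 1)) ∧
    (∀ r : ℕ, 0 < r → 2 * N = 3 * r * r + r →
      signedSumMN N = (-1) ^ r * (3 * (r : ℤ))) ∧
    ((∀ r : ℕ, 0 < r → ¬(2 * N = 3 * r * r - r ∨ 2 * N = 3 * r * r + r)) →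
      signedSumMN N = 0) := by
  -- the sum of N over a bad partition determines its pentagonal type
  have badsum : ∀ s ∈ distinctPartitions N, bad s →
      ∃ r' : ℕ, 0 < r' ∧ ((2*N = 3*r'*r' - r' ∧ s = Icc r' (2*r'-1)) ∨
        (2*N = 3*r'*r' + r' ∧ s = Icc (r'+1) (2*r'))) := by
    intro s hs hbb
    obtain ⟨r', hr', hb | hb⟩ := hbb
    · refine ⟨r', hr', Or.inl ⟨?_, hb⟩⟩
      have hsum : s.sum id = N := (mem_distinct.mp hs).2
      rw [hb] at hsum
      have := pent1_sum hr'
      rw [hsum] at this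
      omega
    · refine ⟨r', hr', Or.inr ⟨?_, hb⟩⟩
      have hsum : s.sum id = N := (mem_distinct.mp hs).2
      rw [hb] at hsum
      have := pent2_sum hr'
      rw [hsum] at this
      omega
  refine ⟨?_, ?_, ?_⟩
  · -- first pentagonal case
    intro r hr h2N
    set P := Icc r (2*r-1) with hP_def
    have hNle : 2*r ≤ N + 1 := by
      have h1 : (2*(N:ℤ) + r = 3*(r:ℤ)*r) := by
        have hle := pent_r_le hr
        have h2N' : 2*N + r = 3*r*r := by omega
        exact_mod_cast h2N'
      have hr1 : (1:ℤ) ≤ r := by exact_mod_cast hr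
      have key : (2*(r:ℤ)) ≤ (N:ℤ) + 1 := by nlinarith [mul_nonneg (by linarith : (0:ℤ) ≤ (r:ℤ) - 1) (by linarith : (0:ℤ) ≤ 3*(r:ℤ) - 2)]
      exact_mod_cast key
    have hPmem : P ∈ distinctPartitions N := by
      refine mem_distinct.mpr ⟨?_, ?_⟩
      · intro x hx
        rw [mem_Icc] at hx ⊢
        omega
      · have := pent1_sum hr
        rw [← hP_def, ← h2N] at this
        omega
    have hPbad : bad P := ⟨r, hr, Or.inl rfl⟩
    have hfP : (-1 : ℤ) ^ P.card * (((P.sup id : ℕ) : ℤ) + P.card) = (-1)^r * (3*(r:ℤ) - 1) := by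
      have hc : P.card = r := by rw [hP_def, Nat.card_Icc]; omega
      have hsupP : P.sup id = 2*r - 1 := by rw [hP_def]; exact sup_Icc (by omega)
      rw [hc, hsupP]
      have : ((2*r - 1 : ℕ) : ℤ) = 2*(r:ℤ) - 1 := by omega
      rw [this]
      ring
    have hsplit : signedSumMN N = (-1 : ℤ) ^ P.card * (((P.sup id : ℕ) : ℤ) + P.card) +
        ∑ s ∈ (distinctPartitions N).erase P, (-1 : ℤ) ^ s.card * (((s.sup id : ℕ) : ℤ) + s.card) := by
      rw [signedSumMN]
      exact (Finset.add_sum_erase _ _ hPmem).symm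
    have hzero : ∑ s ∈ (distinctPartitions N).erase P,
        (-1 : ℤ) ^ s.card * (((s.sup id : ℕ) : ℤ) + s.card) = 0 := by
      have hnb : ∀ s ∈ (distinctPartitions N).erase P, ¬ bad s := by
        intro s hs hb
        have hsD := Finset.mem_of_mem_erase hs
        obtain ⟨r', hr', ⟨he, hse⟩ | ⟨he, hse⟩⟩ := badsum s hsD hb
        · have : r' = r := pent_inj1 hr' hr (by omega)
          subst this
          exact (Finset.ne_of_mem_erase hs) hse
        · exact pent_disj hr hr' (by omega)
      refine sum_zero_of_closed hN _ (Finset.erase_subset _ _) hnb ?_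
      intro s hs
      obtain ⟨hmem', _, _, _, hnb'⟩ := frank_spec hN (Finset.mem_of_mem_erase hs) (hnb s hs)
      refine Finset.mem_erase.mpr ⟨?_, hmem'⟩
      intro heq
      rw [heq] at hnb'
      exact hnb' hPbad
    rw [hsplit, hzero, add_zero, hfP]
  · -- second pentagonal case
    intro r hr h2N
    set P := Icc (r+1) (2*r) with hP_def
    have hNle : 2*r ≤ N := by
      have h1 : (2*(N:ℤ) = 3*r*r + r) := by exact_mod_cast h2N
      have hr1 : (1:ℤ) ≤ r := by exact_mod_cast hr
      have key : (2*(r:ℤ)) ≤ (N:ℤ) := by nlinarith [mul_nonneg (by linarith : (0:ℤ) ≤ (r:ℤ) - 1) (by linarith : (0:ℤ) ≤ (r:ℤ))]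
      exact_mod_cast key
    have hPmem : P ∈ distinctPartitions N := by
      refine mem_distinct.mpr ⟨?_, ?_⟩
      · intro x hx
        rw [mem_Icc] at hx ⊢
        omega
      · have := pent2_sum hr
        rw [← hP_def, ← h2N] at this
        omega
    have hPbad : bad P := ⟨r, hr, Or.inr rfl⟩
    have hfP : (-1 : ℤ) ^ P.card * (((P.sup id : ℕ) : ℤ) + P.card) = (-1)^r * (3*(r:ℤ)) := by
      have hc : P.card = r := by rw [hP_def, Nat.card_Icc]; omega
      have hsupP : P.sup id = 2*r := by rw [hP_def]; exact sup_Icc (by omega)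
      rw [hc, hsupP]
      push_cast
      ring
    have hsplit : signedSumMN N = (-1 : ℤ) ^ P.card * (((P.sup id : ℕ) : ℤ) + P.card) +
        ∑ s ∈ (distinctPartitions N).erase P, (-1 : ℤ) ^ s.card * (((s.sup id : ℕ) : ℤ) + s.card) := by
      rw [signedSumMN]
      exact (Finset.add_sum_erase _ _ hPmem).symm
    have hzero : ∑ s ∈ (distinctPartitions N).erase P,
        (-1 : ℤ) ^ s.card * (((s.sup id : ℕ) : ℤ) + s.card) = 0 := by
      have hnb : ∀ s ∈ (distinctPartitions N).erase P, ¬ bad s := by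
        intro s hs hb
        have hsD := Finset.mem_of_mem_erase hs
        obtain ⟨r', hr', ⟨he, hse⟩ | ⟨he, hse⟩⟩ := badsum s hsD hb
        · exact pent_disj hr' hr (by omega)
        · have : r' = r := pent_inj2 (by omega)
          subst this
          exact (Finset.ne_of_mem_erase hs) hse
      refine sum_zero_of_closed hN _ (Finset.erase_subset _ _) hnb ?_
      intro s hs
      obtain ⟨hmem', _, _, _, hnb'⟩ := frank_spec hN (Finset.mem_of_mem_erase hs) (hnb s hs)
      refine Finset.mem_erase.mpr ⟨?_, hmem'⟩
      intro heq
      rw [heq] at hnb'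
      exact hnb' hPbad
    rw [hsplit, hzero, add_zero, hfP]
  · -- non-pentagonal case
    intro h
    have hnb : ∀ s ∈ distinctPartitions N, ¬ bad s := by
      intro s hs hb
      obtain ⟨r', hr', ⟨he, _⟩ | ⟨he, _⟩⟩ := badsum s hs hb
      · exact h r' hr' (Or.inl he)
      · exact h r' hr' (Or.inr he)
    rw [signedSumMN]
    refine sum_zero_of_closed hN _ (le_refl _) hnb ?_
    intro s hs
    exact (frank_spec hN hs (hnb s hs)).1
end

section
/- In the ring of formal power series in q with integer coefficients, Σ_{n=0}^∞ [(q)_∞ − (q)_n] = Σ_{λ ∈ 𝒟} (−1)^{n_λ} m_λ q^{N_λ}; equivalently, for every N ≥ 0, Σ_{n=0}^∞ (coefficient of q^N in (q)_∞ − (q)_n) = Σ_{λ ∈ 𝒟_N} (−1)^{n_λ} m_λ (the outer sum on the left has only finitely many nonzero terms since the coefficient vanishes for n ≥ N). -/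
open PowerSeries Finset

lemma qPoch_eq (n : ℕ) : qPoch n = ∏ k ∈ Finset.Icc 1 n, (1 - (PowerSeries.X : PowerSeries ℤ) ^ k) := by
  unfold qPoch
  have h : Finset.Icc 1 n = (Finset.range n).map ⟨Nat.succ, Nat.succ_injective⟩ := by
    ext x
    simp only [Finset.mem_Icc, Finset.mem_map, Finset.mem_range, Function.Embedding.coeFn_mk]
    constructor
    · rintro ⟨h1, h2⟩; exact ⟨x - 1, by omega, by omega⟩
    · rintro ⟨a, ha, rfl⟩; omega
  rw [h, Finset.prod_map]
  rfl

lemma coeff_qPoch (n N : ℕ) :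
    PowerSeries.coeff N (qPoch n)
      = ∑ s ∈ (Finset.Icc 1 n).powerset.filter (fun s => s.sum id = N), (-1 : ℤ) ^ s.card := by
  rw [qPoch_eq]
  have key : ∏ k ∈ Finset.Icc 1 n, (1 - (PowerSeries.X : PowerSeries ℤ) ^ k)
      = ∑ t ∈ (Finset.Icc 1 n).powerset,
          ((-1 : ℤ) ^ t.card) • PowerSeries.X ^ (t.sum id) := by
    have h0 := Finset.prod_add (fun k => -(PowerSeries.X : PowerSeries ℤ) ^ k)
      (fun _ => (1 : PowerSeries ℤ)) (Finset.Icc 1 n)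
    simp only [Finset.prod_const_one, mul_one] at h0
    calc ∏ k ∈ Finset.Icc 1 n, (1 - (PowerSeries.X : PowerSeries ℤ) ^ k)
        = ∏ k ∈ Finset.Icc 1 n, (-(PowerSeries.X : PowerSeries ℤ) ^ k + 1) := by
          refine Finset.prod_congr rfl fun k _ => by ring
      _ = ∑ t ∈ (Finset.Icc 1 n).powerset, ∏ i ∈ t, -(PowerSeries.X : PowerSeries ℤ) ^ i := h0
      _ = _ := by
          refine Finset.sum_congr rfl fun t _ => ?_
          have : ∀ i : ℕ, -(PowerSeries.X : PowerSeries ℤ) ^ i = (-1) * PowerSeries.X ^ i := by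
            intro i; ring
          simp_rw [this]
          rw [Finset.prod_mul_distrib, Finset.prod_const, Finset.prod_pow_eq_pow_sum]
          rw [zsmul_eq_mul]
          push_cast
          ring_nf
          rfl
  rw [key, map_sum, Finset.sum_filter]
  refine Finset.sum_congr rfl fun t _ => ?_
  rw [map_smul, PowerSeries.coeff_X_pow, smul_eq_mul, mul_ite, mul_one, mul_zero]
  split_ifs with h1 h2 <;> simp_all [eq_comm]

lemma filter_eq_distinctPartitions_filter (n N : ℕ) (hn : n ≤ N) :
    (Finset.Icc 1 n).powerset.filter (fun s => s.sum id = N)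
      = (distinctPartitions N).filter (fun s => s.sup id ≤ n) := by
  unfold distinctPartitions
  rw [Finset.filter_filter]
  ext s
  simp only [Finset.mem_filter, Finset.mem_powerset, Finset.subset_iff, Finset.mem_Icc]
  constructor
  · rintro ⟨hs, hsum⟩
    refine ⟨fun x hx => ⟨(hs hx).1, le_trans (hs hx).2 hn⟩, hsum, Finset.sup_le fun x hx => (hs hx).2⟩
  · rintro ⟨hs, hsum, hsup⟩
    exact ⟨fun x hx => ⟨(hs hx).1, le_trans (Finset.le_sup (f := id) hx) hsup⟩, hsum⟩

lemma sup_le_of_mem_distinctPartitions {N : ℕ} {s : Finset ℕ}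
    (h : s ∈ distinctPartitions N) : s.sup id ≤ N := by
  simp only [distinctPartitions, Finset.mem_filter, Finset.mem_powerset] at h
  exact Finset.sup_le fun x hx => (Finset.mem_Icc.mp (h.1 hx)).2

/-- `Σ_{n=0}^∞ [(q)_∞ - (q)_n] = Σ_{λ ∈ 𝒟} (-1)^{n_λ} m_λ q^{N_λ}`: for every `N ≥ 0`,
`Σ_{n=0}^∞ (coefficient of q^N in (q)_∞ - (q)_n) = Σ_{λ ∈ 𝒟_N} (-1)^{n_λ} m_λ`,
where `m_λ = s.sup id` is the largest part (`0` for the empty partition).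
The outer sum on the left has only finitely many nonzero terms since the
coefficient vanishes for `n ≥ N`. -/
theorem sum_qPoch_diff_eq_signed_sum_largest_part (N : ℕ) :
    ∑ n ∈ Finset.range N, PowerSeries.coeff N (eulerProd - qPoch n)
      = ∑ s ∈ distinctPartitions N, (-1 : ℤ) ^ s.card * ((s.sup (id : ℕ → ℕ) : ℕ) : ℤ) := by
  have hE : PowerSeries.coeff N eulerProd = ∑ s ∈ distinctPartitions N, (-1 : ℤ) ^ s.card := by
    rw [eulerProd, PowerSeries.coeff_mk, coeff_qPoch]; rfl
  have step : ∀ n ∈ Finset.range N,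
      PowerSeries.coeff N (eulerProd - qPoch n)
        = ∑ s ∈ (distinctPartitions N).filter (fun s => n < s.sup id), (-1 : ℤ) ^ s.card := by
    intro n hn
    rw [map_sub, hE, coeff_qPoch,
      filter_eq_distinctPartitions_filter n N (le_of_lt (Finset.mem_range.mp hn))]
    have := Finset.sum_filter_add_sum_filter_not (distinctPartitions N)
      (fun s => s.sup id ≤ n) (fun s => (-1 : ℤ) ^ s.card)
    simp only [not_le] at this
    linarith [this]
  rw [Finset.sum_congr rfl step]
  simp_rw [Finset.sum_filter]
  rw [Finset.sum_comm]
  refine Finset.sum_congr rfl fun s hs => ?_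
  rw [← Finset.sum_filter]
  rw [Finset.sum_const]
  have hfil : (Finset.range N).filter (fun n => n < s.sup id) = Finset.range (s.sup id) := by
    ext x
    simp only [Finset.mem_filter, Finset.mem_range]
    have := sup_le_of_mem_distinctPartitions hs
    omega
  rw [hfil, Finset.card_range]
  rw [nsmul_eq_mul]
  ring
end

section
/- In the ring of formal power series in q with integer coefficients, −(q)_∞ · Σ_{k=1}^∞ q^k/(1 − q^k) = Σ_{λ ∈ 𝒟} (−1)^{n_λ} n_λ q^{N_λ}; equivalently, for every N ≥ 0, the coefficient of q^N in −(q)_∞ · Σ_{k=1}^∞ q^k/(1 − q^k) equals Σ_{λ ∈ 𝒟_N} (−1)^{n_λ} n_λ. -/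
open PowerSeries Finset

lemma coeff_qPoch_stable {a M N : ℕ} (hM : a ≤ M) (hMN : M ≤ N) :
    PowerSeries.coeff a (qPoch N) = PowerSeries.coeff a (qPoch M) := by
  induction N, hMN using Nat.le_induction with
  | base => rfl
  | succ n hn ih =>
    rw [qPoch, Finset.prod_range_succ, ← qPoch, mul_sub, mul_one, map_sub,
      PowerSeries.coeff_mul_X_pow', if_neg (by omega), sub_zero, ih]

lemma qPoch_eq_Icc (N : ℕ) :
    qPoch N = ∏ j ∈ Finset.Icc 1 N, (1 - (PowerSeries.X : PowerSeries ℤ) ^ j) := by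
  rw [qPoch, ← Finset.Ico_add_one_right_eq_Icc, Finset.prod_Ico_eq_prod_range]
  simp [add_comm]

lemma geom_mul (k : ℕ) (hk : 1 ≤ k) :
    geomSeries k * (1 - (PowerSeries.X : PowerSeries ℤ) ^ k) = X ^ k := by
  ext n
  rw [mul_sub, mul_one, map_sub, PowerSeries.coeff_mul_X_pow', PowerSeries.coeff_X_pow]
  simp only [geomSeries, PowerSeries.coeff_mk]
  rcases le_or_gt k n with h | h
  · rw [if_pos h]
    rcases eq_or_lt_of_le h with rfl | h2
    · rw [if_pos ⟨dvd_rfl, by omega⟩, Nat.sub_self, if_neg (by simp), if_pos rfl]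
      ring
    · by_cases hd : k ∣ n
      · have hd2 : k ∣ n - k := (Nat.dvd_sub hd dvd_rfl)
        rw [if_pos ⟨hd, by omega⟩, if_pos ⟨hd2, by omega⟩, if_neg (by omega)]
        ring
      · have hd2 : ¬ k ∣ n - k := fun h3 => hd (by
          have := Nat.dvd_add h3 (dvd_refl k); rwa [Nat.sub_add_cancel h] at this)
        rw [if_neg (by tauto), if_neg (by tauto), if_neg (by omega)]
        ring
  · have h1 : ¬ (k ∣ n ∧ n ≠ 0) := by
      rintro ⟨hd, hn⟩
      have := Nat.le_of_dvd (by omega) hd; omega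
    rw [if_neg h1, if_neg (by omega), if_neg (by omega)]
    ring

lemma prod_one_sub_X (S : Finset ℕ) :
    ∏ j ∈ S, (1 - (PowerSeries.X : PowerSeries ℤ) ^ j)
      = ∑ T ∈ S.powerset, (PowerSeries.C) ((-1) ^ T.card) * X ^ (T.sum id) := by
  have : ∀ j : ℕ, (1 - (PowerSeries.X : PowerSeries ℤ) ^ j)
      = (-(X ^ j)) + 1 := fun j => by ring
  simp_rw [this]
  rw [Finset.prod_add]
  refine Finset.sum_congr rfl fun T hT => ?_
  rw [Finset.prod_const_one, mul_one]
  have : ∀ i ∈ T, (-(X:PowerSeries ℤ) ^ i) = (-1) * X ^ i := fun i _ => by ring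
  rw [Finset.prod_congr rfl this, Finset.prod_mul_distrib, Finset.prod_const,
    Finset.prod_pow_eq_pow_sum]
  congr 1
  simp [map_pow]

lemma coeff_prod_one_sub (S : Finset ℕ) (m : ℕ) :
    PowerSeries.coeff m (∏ j ∈ S, (1 - (PowerSeries.X : PowerSeries ℤ) ^ j))
      = ∑ T ∈ S.powerset.filter (fun T => T.sum id = m), (-1 : ℤ) ^ T.card := by
  rw [prod_one_sub_X, map_sum, Finset.sum_filter]
  refine Finset.sum_congr rfl fun T hT => ?_
  rw [PowerSeries.coeff_C_mul, PowerSeries.coeff_X_pow]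
  by_cases h : T.sum id = m
  · rw [if_pos h, if_pos h.symm, mul_one]
  · rw [if_neg h, if_neg (fun h2 => h h2.symm), mul_zero]

/-- `-(q)_∞ · Σ_{k=1}^∞ q^k/(1-q^k) = Σ_{λ ∈ 𝒟} (-1)^{n_λ} n_λ q^{N_λ}`: for every
`N ≥ 0`, the coefficient of `q^N` in `-(q)_∞ · Σ_{k=1}^∞ q^k/(1-q^k)` equals
`Σ_{λ ∈ 𝒟_N} (-1)^{n_λ} n_λ`, where `n_λ = s.card` is the number of parts. -/
theorem neg_eulerProd_mul_lambertSum_coeff (N : ℕ) :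
    PowerSeries.coeff N (-(eulerProd * lambertSum))
      = ∑ s ∈ distinctPartitions N, (-1 : ℤ) ^ s.card * (s.card : ℤ) := by
  classical
  set G : PowerSeries ℤ := ∑ k ∈ Finset.Icc 1 N, geomSeries k with hG
  have hE : ∀ a ≤ N, PowerSeries.coeff a eulerProd = PowerSeries.coeff a (qPoch N) := by
    intro a ha
    rw [eulerProd, PowerSeries.coeff_mk]
    exact (coeff_qPoch_stable le_rfl ha).symm
  have hL : ∀ b ≤ N, PowerSeries.coeff b lambertSum = PowerSeries.coeff b G := by
    intro b hb
    rw [lambertSum, PowerSeries.coeff_mk, hG, map_sum]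
    refine Finset.sum_subset (Finset.Icc_subset_Icc_right hb) fun k hk hk' => ?_
    simp only [Finset.mem_Icc] at hk hk'
    rw [geomSeries, PowerSeries.coeff_mk, if_neg]
    rintro ⟨hd, hb0⟩
    have := Nat.le_of_dvd (by omega) hd
    omega
  have step1 : PowerSeries.coeff N (eulerProd * lambertSum)
      = PowerSeries.coeff N (qPoch N * G) := by
    rw [PowerSeries.coeff_mul, PowerSeries.coeff_mul]
    refine Finset.sum_congr rfl fun p hp => ?_
    rw [Finset.HasAntidiagonal.mem_antidiagonal] at hp
    rw [hE p.1 (by omega), hL p.2 (by omega)]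
  have step2 : qPoch N * G = ∑ k ∈ Finset.Icc 1 N,
      (∏ j ∈ (Finset.Icc 1 N).erase k, (1 - (PowerSeries.X : PowerSeries ℤ) ^ j)) * X ^ k := by
    rw [hG, Finset.mul_sum]
    refine Finset.sum_congr rfl fun k hk => ?_
    have hk1 : 1 ≤ k := (Finset.mem_Icc.mp hk).1
    calc qPoch N * geomSeries k
        = (∏ j ∈ (Finset.Icc 1 N).erase k, (1 - (PowerSeries.X : PowerSeries ℤ) ^ j))
            * (geomSeries k * (1 - X ^ k)) := by
          rw [qPoch_eq_Icc, ← Finset.mul_prod_erase _ _ hk]; ring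
      _ = _ := by rw [geom_mul k hk1]
  rw [map_neg, step1, step2, map_sum]
  have step3 : ∀ k ∈ Finset.Icc 1 N,
      PowerSeries.coeff N
        ((∏ j ∈ (Finset.Icc 1 N).erase k, (1 - (PowerSeries.X : PowerSeries ℤ) ^ j)) * X ^ k)
      = ∑ T ∈ ((Finset.Icc 1 N).erase k).powerset.filter (fun T => T.sum id = N - k),
          (-1 : ℤ) ^ T.card := by
    intro k hk
    rw [PowerSeries.coeff_mul_X_pow', if_pos (Finset.mem_Icc.mp hk).2, coeff_prod_one_sub]
  rw [Finset.sum_congr rfl step3]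
  simp only [← Finset.sum_neg_distrib]
  have hRHS : ∀ s ∈ distinctPartitions N,
      ((-1 : ℤ) ^ s.card * (s.card : ℤ)) = ∑ k ∈ s, (-1 : ℤ) ^ s.card := by
    intro s hs
    rw [Finset.sum_const, nsmul_eq_mul, mul_comm]
  rw [Finset.sum_congr rfl hRHS, Finset.sum_sigma', Finset.sum_sigma']
  refine Finset.sum_nbij' (fun p => ⟨insert p.1 p.2, p.1⟩) (fun p => ⟨p.2, p.1.erase p.2⟩)
    ?_ ?_ ?_ ?_ ?_
  · rintro ⟨k, T⟩ hp
    simp only [Finset.mem_sigma, Finset.mem_filter, Finset.mem_powerset] at hp ⊢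
    obtain ⟨hk, hT, hsum⟩ := hp
    rw [Finset.mem_Icc] at hk
    have hkT : k ∉ T := fun h => (Finset.mem_erase.mp (hT h)).1 rfl
    constructor
    · rw [distinctPartitions, Finset.mem_filter, Finset.mem_powerset]
      constructor
      · intro x hx
        rcases Finset.mem_insert.mp hx with rfl | hx
        · exact Finset.mem_Icc.mpr hk
        · exact Finset.mem_of_mem_erase (hT hx)
      · rw [Finset.sum_insert hkT]
        simp only [id_eq] at hsum ⊢
        omega
    · exact Finset.mem_insert_self _ _
  · rintro ⟨s, k⟩ hp
    simp only [Finset.mem_sigma] at hp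
    obtain ⟨hs, hks⟩ := hp
    rw [distinctPartitions, Finset.mem_filter, Finset.mem_powerset] at hs
    obtain ⟨hsub, hsum⟩ := hs
    simp only [Finset.mem_sigma, Finset.mem_filter, Finset.mem_powerset]
    have hk1 := Finset.mem_Icc.mp (hsub hks)
    refine ⟨hsub hks, fun x hx => ?_, ?_⟩
    · exact Finset.mem_erase.mpr ⟨(Finset.mem_erase.mp hx).1, hsub (Finset.mem_of_mem_erase hx)⟩
    · have h2 := Finset.sum_erase_add s id hks
      simp only [id_eq] at h2 hsum ⊢
      omega
  · rintro ⟨k, T⟩ hp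
    simp only [Finset.mem_sigma, Finset.mem_filter, Finset.mem_powerset] at hp
    have hkT : k ∉ T := fun h => (Finset.mem_erase.mp (hp.2.1 h)).1 rfl
    simp [Finset.erase_insert hkT]
  · rintro ⟨s, k⟩ hp
    simp only [Finset.mem_sigma] at hp
    simp [Finset.insert_erase hp.2]
  · rintro ⟨k, T⟩ hp
    simp only [Finset.mem_sigma, Finset.mem_filter, Finset.mem_powerset] at hp
    have hkT : k ∉ T := fun h => (Finset.mem_erase.mp (hp.2.1 h)).1 rfl
    simp only
    rw [Finset.card_insert_of_notMem hkT, pow_succ]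
    ring
end

section
/- In the ring of formal power series in two variables x and q with integer coefficients, Σ_{λ ∈ 𝒟} (−1)^{n_λ} x^{m_λ + n_λ} q^{N_λ} = 1 + Σ_{r=1}^∞ (−1)^r [x^{3r−1} q^{r(3r−1)/2} + x^{3r} q^{r(3r+1)/2}]. -/
open PowerSeries Finset

/-- `ℤ⟦x,q⟧`, realized as `(ℤ⟦q⟧)⟦x⟧`: power series in `x` whose coefficients are
power series in `q` over `ℤ`. -/
abbrev Zxq : Type := PowerSeries (PowerSeries ℤ)

/-- The variable `x`. -/
noncomputable def xv : Zxq := PowerSeries.X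

/-- The variable `q`. -/
noncomputable def qv : Zxq := PowerSeries.C (PowerSeries.X : PowerSeries ℤ)

/-- `Σ_{λ ∈ 𝒟} (-1)^{n_λ} x^{m_λ+n_λ} q^{N_λ}`, summed over all partitions `λ` into
distinct parts (encoded as finsets of positive integers, with `n_λ = s.card`,
`m_λ = s.sup id`, `N_λ = s.sum id`). The coefficient of `x^a` collects the finitely
many partitions with `m_λ + n_λ = a` (all of whose parts are at most `a`, so they
are subsets of `{1,…,a}`). -/
noncomputable def signedPartitionSeries : Zxq :=
  PowerSeries.mk fun a =>
    ∑ s ∈ (Finset.Icc 1 a).powerset.filter (fun s => s.sup (id : ℕ → ℕ) + s.card = a),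
      (-1 : PowerSeries ℤ) ^ s.card * (PowerSeries.X : PowerSeries ℤ) ^ s.sum id

/-- `1 + Σ_{r=1}^∞ (-1)^r [x^{3r-1} q^{r(3r-1)/2} + x^{3r} q^{r(3r+1)/2}]`, defined by
its coefficient of `x^a`: only terms with `r ≤ a` contribute. -/
noncomputable def pentagonalXqSeries : Zxq :=
  PowerSeries.mk fun a =>
    (if a = 0 then 1 else 0) +
      ∑ r ∈ Finset.Icc 1 a, (-1 : PowerSeries ℤ) ^ r *
        ((if a = 3 * r - 1 then (PowerSeries.X : PowerSeries ℤ) ^ (r * (3 * r - 1) / 2) else 0) +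
         (if a = 3 * r then (PowerSeries.X : PowerSeries ℤ) ^ (r * (3 * r + 1) / 2) else 0))

section FranklinAux

noncomputable def stair (s : Finset ℕ) (m : ℕ) : ℕ :=
  Nat.find (p := fun j => 0 < j ∧ (m - j ∉ s ∨ m < j)) ⟨m + 1, by omega, Or.inr (by omega)⟩

lemma stair_pos (s : Finset ℕ) (m : ℕ) : 0 < stair s m :=
  (Nat.find_spec (p := fun j => 0 < j ∧ (m - j ∉ s ∨ m < j)) ⟨m + 1, by omega, Or.inr (by omega)⟩).1

lemma stair_le (s : Finset ℕ) {m : ℕ} (h0 : 0 ∉ s) (hm : 0 < m) : stair s m ≤ m :=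
  Nat.find_le ⟨hm, Or.inl (by simpa using h0)⟩

lemma stair_not_mem (s : Finset ℕ) {m : ℕ} (h0 : 0 ∉ s) (hm : 0 < m) :
    m - stair s m ∉ s := by
  have h : 0 < stair s m ∧ (m - stair s m ∉ s ∨ m < stair s m) :=
    Nat.find_spec (p := fun j => 0 < j ∧ (m - j ∉ s ∨ m < j)) ⟨m + 1, by omega, Or.inr (by omega)⟩
  rcases h.2 with h2 | h2
  · exact h2
  · exact absurd (stair_le s h0 hm) (by omega)

lemma mem_of_lt_stair (s : Finset ℕ) {m j : ℕ} (hj : 0 < j) (hjt : j < stair s m)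
    (_hjm : j ≤ m) : m - j ∈ s := by
  have h := Nat.find_min (p := fun j => 0 < j ∧ (m - j ∉ s ∨ m < j))
    (H := ⟨m + 1, by omega, Or.inr (by omega)⟩) hjt
  simp only [not_and_or, not_or, not_not, not_lt] at h
  rcases h with h | ⟨h1, h2⟩
  · omega
  · exact h1

lemma stair_eq (s : Finset ℕ) {m t : ℕ} (ht : 0 < t) (htm : m - t ∉ s ∨ m < t)
    (hmem : ∀ j, 0 < j → j < t → (m - j ∈ s ∧ j ≤ m)) : stair s m = t := by
  rw [stair, Nat.find_eq_iff]
  refine ⟨⟨ht, htm⟩, fun j hj => ?_⟩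
  simp only [not_and_or, not_or, not_not, not_lt]
  rcases Nat.eq_zero_or_pos j with h | h
  · exact Or.inl (by omega)
  · exact Or.inr ⟨(hmem j h hj).1, (hmem j h hj).2⟩

lemma sup_id_mem {s : Finset ℕ} (h : s.Nonempty) : s.sup id ∈ s := by
  rw [← Finset.sup'_eq_sup h id, ← Finset.max'_eq_sup']
  exact Finset.max'_mem s h

noncomputable def frank (s : Finset ℕ) : Finset ℕ :=
  if h : s.Nonempty then
    if s.min' h ≤ stair s (s.sup id) then
      insert (s.sup id + 1) ((s.erase (s.min' h)).erase (s.sup id - s.min' h + 1))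
    else
      insert (stair s (s.sup id)) (insert (s.sup id - stair s (s.sup id)) (s.erase (s.sup id)))
  else ∅

def isExc (s : Finset ℕ) : Prop :=
  if h : s.Nonempty then
    if s.min' h ≤ stair s (s.sup id) then s.sup id + 1 = 2 * s.min' h
    else s.sup id = 2 * stair s (s.sup id)
  else False

lemma frank_pos (s : Finset ℕ) (h : s.Nonempty)
    (hc : s.min' h ≤ stair s (s.sup id)) :
    frank s = insert (s.sup id + 1) ((s.erase (s.min' h)).erase (s.sup id - s.min' h + 1)) := by
  rw [frank, dif_pos h, if_pos hc]

lemma frank_neg (s : Finset ℕ) (h : s.Nonempty)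
    (hc : ¬ s.min' h ≤ stair s (s.sup id)) :
    frank s = insert (stair s (s.sup id))
      (insert (s.sup id - stair s (s.sup id)) (s.erase (s.sup id))) := by
  rw [frank, dif_pos h, if_neg hc]

lemma isExc_pos (s : Finset ℕ) (h : s.Nonempty)
    (hc : s.min' h ≤ stair s (s.sup id)) :
    isExc s ↔ s.sup id + 1 = 2 * s.min' h := by
  rw [isExc, dif_pos h, if_pos hc]

lemma isExc_neg (s : Finset ℕ) (h : s.Nonempty)
    (hc : ¬ s.min' h ≤ stair s (s.sup id)) :
    isExc s ↔ s.sup id = 2 * stair s (s.sup id) := by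
  rw [isExc, dif_pos h, if_neg hc]

lemma caseA (s : Finset ℕ) (h : s.Nonempty) (h0 : 0 ∉ s)
    (hkt : s.min' h ≤ stair s (s.sup id)) (hne : s.sup id + 1 ≠ 2 * s.min' h) :
    (frank s).Nonempty ∧ 0 ∉ frank s ∧ ¬ isExc (frank s) ∧
    (frank s).sup id = s.sup id + 1 ∧ (frank s).card + 1 = s.card ∧
    (frank s).sum id = s.sum id ∧ frank (frank s) = s := by
  set m := s.sup id with hmdef
  set k := s.min' h with hkdef
  set t := stair s m with htdef
  have hks : k ∈ s := Finset.min'_mem s h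
  have hk1 : 1 ≤ k := by rcases Nat.eq_zero_or_pos k with h' | h' <;> [exact absurd (h' ▸ hks) h0; omega]
  have hkm : k ≤ m := Finset.le_sup (f := id) hks
  have hm : 0 < m := by omega
  have hms : m ∈ s := sup_id_mem h
  have hq : m - k + 1 ∈ s := by
    rcases Nat.eq_or_lt_of_le hk1 with h' | h'
    · have : m - k + 1 = m := by omega
      rw [this]; exact hms
    · have hmem : m - (k - 1) ∈ s := mem_of_lt_stair s (by omega) (by omega) (by omega)
      have : m - (k - 1) = m - k + 1 := by omega
      rwa [this] at hmem
  have hkq : k < m - k + 1 := by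
    have hle : k ≤ m - k + 1 := Finset.min'_le s _ hq
    rcases Nat.eq_or_lt_of_le hle with h' | h'
    · exfalso; apply hne; omega
    · exact h'
  have hm1 : m + 1 ∉ s := fun hmem => by
    have := Finset.le_sup (f := id) hmem; simp only [id] at this; omega
  set A : Finset ℕ := (s.erase k).erase (m - k + 1) with hAdef
  have hmemA : ∀ x, x ∈ A ↔ x ∈ s ∧ x ≠ k ∧ x ≠ m - k + 1 := by
    intro x; simp only [hAdef, Finset.mem_erase]; tauto
  have hqek : m - k + 1 ∈ s.erase k := Finset.mem_erase.2 ⟨by omega, hq⟩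
  have hcardA : A.card + 2 = s.card := by
    have h1 : A.card = (s.erase k).card - 1 := by
      rw [hAdef]; exact Finset.card_erase_of_mem hqek
    have h2 := Finset.card_erase_of_mem hks
    have h3 : 0 < (s.erase k).card := Finset.card_pos.2 ⟨_, hqek⟩
    have h4 : 0 < s.card := Finset.card_pos.2 h
    omega
  have hm1A : m + 1 ∉ A := fun hx => hm1 ((hmemA _).1 hx).1
  set s1 : Finset ℕ := insert (m + 1) A with hs1def
  have hfr : frank s = s1 := frank_pos s h hkt
  have hmem1 : ∀ x, x ∈ s1 ↔ x = m + 1 ∨ (x ∈ s ∧ x ≠ k ∧ x ≠ m - k + 1) := by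
    intro x; simp only [hs1def, Finset.mem_insert, hmemA]
  have hne1 : s1.Nonempty := Finset.insert_nonempty _ _
  have h01 : 0 ∉ s1 := by
    rw [hmem1]; rintro (h' | ⟨h', -⟩) <;> [omega; exact h0 h']
  have hsub1 : ∀ x ∈ s1, x ≤ m + 1 := by
    intro x hx; rcases (hmem1 x).1 hx with h' | ⟨h', -⟩
    · omega
    · have := Finset.le_sup (f := id) h'; simp only [id] at this; omega
  have hsup1 : s1.sup id = m + 1 := by
    apply le_antisymm (Finset.sup_le fun x hx => hsub1 x hx)
    exact Finset.le_sup (f := id) (Finset.mem_insert_self _ _)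
  have hcard1 : s1.card + 1 = s.card := by
    rw [hs1def, Finset.card_insert_of_notMem hm1A]; omega
  have hsum1 : s1.sum id = s.sum id := by
    have e1 : s1.sum id = (m + 1) + A.sum id := by
      rw [hs1def, Finset.sum_insert hm1A]; rfl
    have e2 : (m - k + 1) + A.sum id = (s.erase k).sum id := Finset.add_sum_erase _ id hqek
    have e3 : k + (s.erase k).sum id = s.sum id := Finset.add_sum_erase _ id hks
    omega
  have hgt1 : ∀ x ∈ s1, k < x := by
    intro x hx; rcases (hmem1 x).1 hx with h' | ⟨h1', h2', -⟩
    · omega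
    · have := Finset.min'_le s x h1'; omega
  have hstair1 : stair s1 (m + 1) = k := by
    apply stair_eq
    · omega
    · left
      have : m + 1 - k = m - k + 1 := by omega
      rw [this, hmem1]; rintro (h' | ⟨-, -, h'⟩) <;> omega
    · intro j hj hjk
      refine ⟨?_, by omega⟩
      rw [hmem1]; right
      rcases Nat.eq_or_lt_of_le hj with h' | h'
      · have : m + 1 - j = m := by omega
        rw [this]; exact ⟨hms, by omega, by omega⟩
      · have hmem' : m - (j - 1) ∈ s := mem_of_lt_stair s (by omega) (by omega) (by omega)
        have heq : m + 1 - j = m - (j - 1) := by omega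
        rw [heq]; exact ⟨hmem', by omega, by omega⟩
  -- frank s1
  have hmin1 : k < s1.min' hne1 := hgt1 _ (Finset.min'_mem _ _)
  have hcond1 : ¬ s1.min' hne1 ≤ stair s1 (s1.sup id) := by
    rw [hsup1, hstair1]; omega
  have hxc1 : ¬ isExc s1 := by
    rw [isExc_neg s1 hne1 hcond1, hsup1, hstair1]; omega
  have hff : frank s1 = s := by
    rw [frank_neg s1 hne1 hcond1, hsup1, hstair1]
    have e1 : s1.erase (m + 1) = A := by rw [hs1def, Finset.erase_insert hm1A]
    have e2 : m + 1 - k = m - k + 1 := by omega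
    rw [e1, e2, hAdef, Finset.insert_erase hqek, Finset.insert_erase hks]
  rw [hfr]
  exact ⟨hne1, h01, hxc1, hsup1, hcard1, hsum1, hff⟩

lemma caseB (s : Finset ℕ) (h : s.Nonempty) (h0 : 0 ∉ s)
    (hkt : ¬ s.min' h ≤ stair s (s.sup id)) (hne : s.sup id ≠ 2 * stair s (s.sup id)) :
    (frank s).Nonempty ∧ 0 ∉ frank s ∧ ¬ isExc (frank s) ∧
    (frank s).sup id + 1 = s.sup id ∧ (frank s).card = s.card + 1 ∧
    (frank s).sum id = s.sum id ∧ frank (frank s) = s := by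
  set m := s.sup id with hmdef
  set k := s.min' h with hkdef
  set t := stair s m with htdef
  have hks : k ∈ s := Finset.min'_mem s h
  have hk1 : 1 ≤ k := by rcases Nat.eq_zero_or_pos k with h' | h' <;> [exact absurd (h' ▸ hks) h0; omega]
  have hkm : k ≤ m := Finset.le_sup (f := id) hks
  have hm : 0 < m := by omega
  have hms : m ∈ s := sup_id_mem h
  have ht1 : 1 ≤ t := stair_pos s m
  have htm : t ≤ m := stair_le s h0 hm
  have htns : m - t ∉ s := stair_not_mem s h0 hm
  have htk : t < k := by omega
  have htnm : t ∉ s := fun h' => by have := Finset.min'_le s t h'; omega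
  have h2t : 2 * t < m := by
    rcases Nat.eq_or_lt_of_le ht1 with h' | h'
    · omega
    · have hmem : m - (t - 1) ∈ s := mem_of_lt_stair s (by omega) (by omega) (by omega)
      have := Finset.min'_le s _ hmem
      omega
  set B : Finset ℕ := insert (m - t) (s.erase m) with hBdef
  have hmtne : m - t ∉ s.erase m := fun h' => htns (Finset.mem_of_mem_erase h')
  have hmemB : ∀ x, x ∈ B ↔ x = m - t ∨ (x ∈ s ∧ x ≠ m) := by
    intro x; simp only [hBdef, Finset.mem_insert, Finset.mem_erase]; tauto
  have htnB : t ∉ B := by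
    rw [hmemB]; rintro (h' | ⟨h', -⟩) <;> [omega; exact htnm h']
  set s2 : Finset ℕ := insert t B with hs2def
  have hfr : frank s = s2 := frank_neg s h hkt
  have hmem2 : ∀ x, x ∈ s2 ↔ x = t ∨ x = m - t ∨ (x ∈ s ∧ x ≠ m) := by
    intro x; simp only [hs2def, Finset.mem_insert, hmemB]
  have hne2 : s2.Nonempty := Finset.insert_nonempty _ _
  have h02 : 0 ∉ s2 := by
    rw [hmem2]; rintro (h' | h' | ⟨h', -⟩) <;> [omega; omega; exact h0 h']
  have hle2 : ∀ x ∈ s2, x ≤ m - 1 := by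
    intro x hx; rcases (hmem2 x).1 hx with h' | h' | ⟨h1', h2'⟩
    · omega
    · omega
    · have := Finset.le_sup (f := id) h1'; simp only [id] at this; omega
  have hm1mem : m - 1 ∈ s2 := by
    rw [hmem2]
    rcases Nat.eq_or_lt_of_le ht1 with h' | h'
    · right; left; omega
    · have hmem' : m - 1 ∈ s := mem_of_lt_stair s (by omega) (by omega) (by omega)
      right; right; exact ⟨hmem', by omega⟩
  have hsup2 : s2.sup id = m - 1 := by
    apply le_antisymm (Finset.sup_le fun x hx => hle2 x hx)
    exact Finset.le_sup (f := id) hm1mem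
  have hcard2 : s2.card = s.card + 1 := by
    have h1 : s2.card = B.card + 1 := Finset.card_insert_of_notMem htnB
    have h2 : B.card = (s.erase m).card + 1 := Finset.card_insert_of_notMem hmtne
    have h3 := Finset.card_erase_of_mem hms
    have h4 : 0 < s.card := Finset.card_pos.2 h
    omega
  have hsum2 : s2.sum id = s.sum id := by
    have e1 : s2.sum id = t + B.sum id := by rw [hs2def, Finset.sum_insert htnB]; rfl
    have e2 : B.sum id = (m - t) + (s.erase m).sum id := by
      rw [hBdef, Finset.sum_insert hmtne]; rfl
    have e3 : m + (s.erase m).sum id = s.sum id := Finset.add_sum_erase _ id hms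
    omega
  have hge2 : ∀ x ∈ s2, t ≤ x := by
    intro x hx; rcases (hmem2 x).1 hx with h' | h' | ⟨h1', -⟩
    · omega
    · omega
    · have := Finset.min'_le s x h1'; omega
  have hmin2 : s2.min' hne2 = t := by
    apply le_antisymm
    · exact Finset.min'_le _ _ (by rw [hmem2]; left; rfl)
    · exact hge2 _ (Finset.min'_mem _ _)
  have hstair2 : t ≤ stair s2 (m - 1) := by
    by_contra hcon
    push_neg at hcon
    have hu1 : 0 < stair s2 (m - 1) := stair_pos _ _
    have hns := stair_not_mem s2 h02 (by omega : 0 < m - 1)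
    apply hns
    set u := stair s2 (m - 1) with hudef
    rw [hmem2]
    rcases Nat.eq_or_lt_of_le (by omega : u + 1 ≤ t) with h' | h'
    · right; left; omega
    · have hmem' : m - (u + 1) ∈ s := mem_of_lt_stair s (by omega) (by omega) (by omega)
      right; right; exact ⟨by rwa [show m - 1 - u = m - (u + 1) by omega], by omega⟩
  have hcond2 : s2.min' hne2 ≤ stair s2 (s2.sup id) := by rw [hsup2, hmin2]; exact hstair2
  have hxc2 : ¬ isExc s2 := by
    rw [isExc_pos s2 hne2 hcond2, hsup2, hmin2]; omega
  have hff : frank s2 = s := by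
    rw [frank_pos s2 hne2 hcond2, hsup2, hmin2]
    have e0 : m - 1 + 1 = m := by omega
    have e1 : m - 1 - t + 1 = m - t := by omega
    have e2 : s2.erase t = B := by rw [hs2def, Finset.erase_insert htnB]
    rw [e0, e1, e2, hBdef, Finset.erase_insert hmtne, Finset.insert_erase hms]
  rw [hfr]
  exact ⟨hne2, h02, hxc2, by omega, hcard2, hsum2, hff⟩

lemma frank_main (s : Finset ℕ) (h : s.Nonempty) (h0 : 0 ∉ s) (hx : ¬ isExc s) :
    (frank s).Nonempty ∧ 0 ∉ frank s ∧ ¬ isExc (frank s) ∧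
    (frank s).sup id + (frank s).card = s.sup id + s.card ∧
    (frank s).sum id = s.sum id ∧
    ((frank s).card + 1 = s.card ∨ (frank s).card = s.card + 1) ∧
    frank (frank s) = s := by
  by_cases hc : s.min' h ≤ stair s (s.sup id)
  · have hne := (not_iff_not.2 (isExc_pos s h hc)).1 hx
    obtain ⟨a1, a2, a3, a4, a5, a6, a7⟩ := caseA s h h0 hc hne
    exact ⟨a1, a2, a3, by omega, a6, Or.inl a5, a7⟩
  · have hne := (not_iff_not.2 (isExc_neg s h hc)).1 hx
    obtain ⟨a1, a2, a3, a4, a5, a6, a7⟩ := caseB s h h0 hc hne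
    exact ⟨a1, a2, a3, by omega, a6, Or.inr a5, a7⟩

lemma exc_char (s : Finset ℕ) (h : s.Nonempty) (h0 : 0 ∉ s) (hx : isExc s) :
    ∃ r, 1 ≤ r ∧
      ((s = Finset.Icc r (2 * r - 1) ∧ s.sup id + s.card = 3 * r - 1) ∨
       (s = Finset.Icc (r + 1) (2 * r) ∧ s.sup id + s.card = 3 * r)) := by
  set m := s.sup id with hmdef
  set k := s.min' h with hkdef
  set t := stair s m with htdef
  have hks : k ∈ s := Finset.min'_mem s h
  have hk1 : 1 ≤ k := by rcases Nat.eq_zero_or_pos k with h' | h' <;> [exact absurd (h' ▸ hks) h0; omega]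
  have hkm : k ≤ m := Finset.le_sup (f := id) hks
  have hm : 0 < m := by omega
  have hms : m ∈ s := sup_id_mem h
  have ht1 : 1 ≤ t := stair_pos s m
  by_cases hc : k ≤ t
  · have hmk : m + 1 = 2 * k := (isExc_pos s h hc).1 hx
    refine ⟨k, hk1, Or.inl ⟨?_, ?_⟩⟩
    · have hseq : s = Finset.Icc k m := by
        ext x
        rw [Finset.mem_Icc]
        constructor
        · intro hxs
          exact ⟨Finset.min'_le s x hxs, Finset.le_sup (f := id) hxs⟩
        · rintro ⟨hx1, hx2⟩
          rcases Nat.eq_or_lt_of_le hx2 with h' | h'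
          · rwa [h']
          · have hmem' : m - (m - x) ∈ s := mem_of_lt_stair s (by omega) (by omega) (by omega)
            rwa [show m - (m - x) = x by omega] at hmem'
      rw [hseq, show m = 2 * k - 1 by omega]
    · have hcard : s.card = k := by
        have : s = Finset.Icc k m := by
          ext x
          rw [Finset.mem_Icc]
          constructor
          · intro hxs
            exact ⟨Finset.min'_le s x hxs, Finset.le_sup (f := id) hxs⟩
          · rintro ⟨hx1, hx2⟩
            rcases Nat.eq_or_lt_of_le hx2 with h' | h'
            · rwa [h']
            · have hmem' : m - (m - x) ∈ s := mem_of_lt_stair s (by omega) (by omega) (by omega)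
              rwa [show m - (m - x) = x by omega] at hmem'
        rw [this, Nat.card_Icc]; omega
      omega
  · have hmt : m = 2 * t := (isExc_neg s h hc).1 hx
    have htk : t < k := by omega
    refine ⟨t, ht1, Or.inr ⟨?_, ?_⟩⟩
    · have hseq : s = Finset.Icc (t + 1) m := by
        ext x
        rw [Finset.mem_Icc]
        constructor
        · intro hxs
          have := Finset.min'_le s x hxs
          exact ⟨by omega, Finset.le_sup (f := id) hxs⟩
        · rintro ⟨hx1, hx2⟩
          rcases Nat.eq_or_lt_of_le hx2 with h' | h'
          · rwa [h']
          · have hmem' : m - (m - x) ∈ s := mem_of_lt_stair s (by omega) (by omega) (by omega)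
            rwa [show m - (m - x) = x by omega] at hmem'
      rw [hseq, hmt]
    · have hcard : s.card = t := by
        have hseq : s = Finset.Icc (t + 1) m := by
          ext x
          rw [Finset.mem_Icc]
          constructor
          · intro hxs
            have := Finset.min'_le s x hxs
            exact ⟨by omega, Finset.le_sup (f := id) hxs⟩
          · rintro ⟨hx1, hx2⟩
            rcases Nat.eq_or_lt_of_le hx2 with h' | h'
            · rwa [h']
            · have hmem' : m - (m - x) ∈ s := mem_of_lt_stair s (by omega) (by omega) (by omega)
              rwa [show m - (m - x) = x by omega] at hmem'
        rw [hseq, Nat.card_Icc]; omega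
      omega

lemma sum_Icc_id_mul_two' (a b : ℕ) (ha : 1 ≤ a) (hab : a ≤ b) :
    (∑ i ∈ Finset.Icc a b, i) * 2 = (a + b) * (b + 1 - a) := by
  have h1 : Finset.Icc a b = Finset.Ico a (b + 1) := by rw [Finset.Ico_add_one_right_eq_Icc]
  have h2 : (∑ i ∈ Finset.range a, i) + ∑ i ∈ Finset.Ico a (b + 1), i
      = ∑ i ∈ Finset.range (b + 1), i := by
    rw [Finset.range_eq_Ico, Finset.range_eq_Ico]
    exact Finset.sum_Ico_consecutive (fun i : ℕ => i) (Nat.zero_le a) (by omega : a ≤ b + 1)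
  have h3 := Finset.sum_range_id_mul_two a
  have h4 := Finset.sum_range_id_mul_two (b + 1)
  rw [show b + 1 - 1 = b from rfl] at h4
  rw [h1]
  zify [ha, show a ≤ b + 1 by omega] at *
  linear_combination h4 - h3 + 2 * h2

lemma excA (r : ℕ) (hr : 1 ≤ r) :
    isExc (Finset.Icc r (2 * r - 1)) ∧
    (Finset.Icc r (2 * r - 1)).sup id + (Finset.Icc r (2 * r - 1)).card = 3 * r - 1 ∧
    (Finset.Icc r (2 * r - 1)).sum id = r * (3 * r - 1) / 2 ∧
    (Finset.Icc r (2 * r - 1)).card = r := by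
  set S := Finset.Icc r (2 * r - 1) with hSdef
  have hne : S.Nonempty := ⟨r, by rw [hSdef, Finset.mem_Icc]; omega⟩
  have hsup : S.sup id = 2 * r - 1 := by
    apply le_antisymm
    · exact Finset.sup_le fun x hx => by rw [hSdef, Finset.mem_Icc] at hx; exact hx.2
    · exact Finset.le_sup (f := id) (by rw [hSdef, Finset.mem_Icc]; omega)
  have hmin : S.min' hne = r := by
    apply le_antisymm
    · exact Finset.min'_le _ _ (by rw [hSdef, Finset.mem_Icc]; omega)
    · apply Finset.le_min'
      intro x hx; rw [hSdef, Finset.mem_Icc] at hx; omega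
  have hstair : stair S (2 * r - 1) = r := by
    apply stair_eq
    · omega
    · left; rw [hSdef, Finset.mem_Icc]; omega
    · intro j hj hjr
      constructor
      · rw [hSdef, Finset.mem_Icc]; omega
      · omega
  have hcard : S.card = r := by rw [hSdef, Nat.card_Icc]; omega
  have hcond : S.min' hne ≤ stair S (S.sup id) := by rw [hsup, hstair, hmin]
  refine ⟨?_, by omega, ?_, hcard⟩
  · rw [isExc_pos S hne hcond, hsup, hmin]; omega
  · have h2 := sum_Icc_id_mul_two' r (2 * r - 1) hr (by omega)
    have hsum : S.sum id = ∑ i ∈ Finset.Icc r (2 * r - 1), i := by rw [hSdef]; rfl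
    have heq : (r + (2 * r - 1)) * (2 * r - 1 + 1 - r) = r * (3 * r - 1) := by
      zify [show 1 ≤ 2 * r by omega, show r ≤ 2 * r - 1 + 1 by omega, show 1 ≤ 3 * r by omega]
      ring
    omega

lemma excB (r : ℕ) (hr : 1 ≤ r) :
    isExc (Finset.Icc (r + 1) (2 * r)) ∧
    (Finset.Icc (r + 1) (2 * r)).sup id + (Finset.Icc (r + 1) (2 * r)).card = 3 * r ∧
    (Finset.Icc (r + 1) (2 * r)).sum id = r * (3 * r + 1) / 2 ∧
    (Finset.Icc (r + 1) (2 * r)).card = r := by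
  set S := Finset.Icc (r + 1) (2 * r) with hSdef
  have hne : S.Nonempty := ⟨r + 1, by rw [hSdef, Finset.mem_Icc]; omega⟩
  have hsup : S.sup id = 2 * r := by
    apply le_antisymm
    · exact Finset.sup_le fun x hx => by rw [hSdef, Finset.mem_Icc] at hx; exact hx.2
    · exact Finset.le_sup (f := id) (by rw [hSdef, Finset.mem_Icc]; omega)
  have hmin : S.min' hne = r + 1 := by
    apply le_antisymm
    · exact Finset.min'_le _ _ (by rw [hSdef, Finset.mem_Icc]; omega)
    · apply Finset.le_min'
      intro x hx; rw [hSdef, Finset.mem_Icc] at hx; omega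
  have hstair : stair S (2 * r) = r := by
    apply stair_eq
    · omega
    · left; rw [hSdef, Finset.mem_Icc]; omega
    · intro j hj hjr
      constructor
      · rw [hSdef, Finset.mem_Icc]; omega
      · omega
  have hcard : S.card = r := by rw [hSdef, Nat.card_Icc]; omega
  have hcond : ¬ S.min' hne ≤ stair S (S.sup id) := by rw [hsup, hstair, hmin]; omega
  refine ⟨?_, by omega, ?_, hcard⟩
  · rw [isExc_neg S hne hcond, hsup, hstair]
  · have h2 := sum_Icc_id_mul_two' (r + 1) (2 * r) (by omega) (by omega)
    have hsum : S.sum id = ∑ i ∈ Finset.Icc (r + 1) (2 * r), i := by rw [hSdef]; rfl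
    have heq : ((r + 1) + 2 * r) * (2 * r + 1 - (r + 1)) = r * (3 * r + 1) := by
      zify [show r + 1 ≤ 2 * r + 1 by omega]
      ring
    omega

end FranklinAux

/-- `Σ_{λ ∈ 𝒟} (-1)^{n_λ} x^{m_λ+n_λ} q^{N_λ}
= 1 + Σ_{r=1}^∞ (-1)^r [x^{3r-1} q^{r(3r-1)/2} + x^{3r} q^{r(3r+1)/2}]` in `ℤ⟦x,q⟧`. -/

theorem signedPartitionSeries_eq_pentagonalXqSeries :
    signedPartitionSeries = pentagonalXqSeries := by
  classical
  apply PowerSeries.ext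
  intro a
  rw [signedPartitionSeries, pentagonalXqSeries, PowerSeries.coeff_mk, PowerSeries.coeff_mk]
  rcases Nat.eq_zero_or_pos a with rfl | ha
  · rw [Finset.Icc_eq_empty (by omega), Finset.powerset_empty, Finset.filter_singleton,
      if_pos (by simp)]
    simp
  · set T := (Finset.Icc 1 a).powerset.filter (fun s => s.sup (id : ℕ → ℕ) + s.card = a) with hT
    have hTmem : ∀ s ∈ T, s.Nonempty ∧ 0 ∉ s ∧ s.sup id + s.card = a := by
      intro s hs
      rw [hT, Finset.mem_filter, Finset.mem_powerset] at hs
      refine ⟨?_, fun h0 => by have := hs.1 h0; rw [Finset.mem_Icc] at this; omega, hs.2⟩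
      rcases Finset.eq_empty_or_nonempty s with rfl | h
      · exfalso
        have := hs.2
        simp at this
        omega
      · exact h
    rw [← Finset.sum_filter_add_sum_filter_not T (fun s => isExc s)]
    have hzero : ∑ s ∈ T.filter (fun s => ¬ isExc s),
        (-1 : PowerSeries ℤ) ^ s.card * (PowerSeries.X : PowerSeries ℤ) ^ s.sum id = 0 := by
      apply Finset.sum_involution (g := fun s _ => frank s)
      · intro s hs
        rw [Finset.mem_filter] at hs
        obtain ⟨hne, h0, hsc⟩ := hTmem s hs.1
        obtain ⟨b1, b2, b3, b4, b5, b6, b7⟩ := frank_main s hne h0 hs.2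
        rw [b5]
        have hsgn : ((-1 : PowerSeries ℤ)) ^ (frank s).card = -(-1 : PowerSeries ℤ) ^ s.card := by
          rcases b6 with h' | h'
          · rw [← h', pow_succ]; ring
          · rw [h', pow_succ]; ring
        rw [hsgn]; ring
      · intro s hs _
        rw [Finset.mem_filter] at hs
        obtain ⟨hne, h0, hsc⟩ := hTmem s hs.1
        obtain ⟨b1, b2, b3, b4, b5, b6, b7⟩ := frank_main s hne h0 hs.2
        intro heq
        rw [heq] at b6
        omega
      · intro s hs
        rw [Finset.mem_filter] at hs
        obtain ⟨hne, h0, hsc⟩ := hTmem s hs.1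
        obtain ⟨b1, b2, b3, b4, b5, b6, b7⟩ := frank_main s hne h0 hs.2
        rw [Finset.mem_filter]
        refine ⟨?_, b3⟩
        rw [hT, Finset.mem_filter, Finset.mem_powerset]
        constructor
        · intro x hx
          rw [Finset.mem_Icc]
          constructor
          · rcases Nat.eq_zero_or_pos x with rfl | h' <;> [exact absurd hx b2; omega]
          · have hle : x ≤ (frank s).sup id := Finset.le_sup (f := id) hx
            omega
        · omega
      · intro s hs
        rw [Finset.mem_filter] at hs
        obtain ⟨hne, h0, hsc⟩ := hTmem s hs.1
        exact (frank_main s hne h0 hs.2).2.2.2.2.2.2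
    rw [hzero, add_zero]
    have h3 : a % 3 = 0 ∨ a % 3 = 1 ∨ a % 3 = 2 := by omega
    rcases h3 with h3 | h3 | h3
    · -- a = 3 * r0
      set r0 := a / 3 with hr0def
      have hr0 : 1 ≤ r0 ∧ a = 3 * r0 := by omega
      have hE : T.filter (fun s => isExc s) = {Finset.Icc (r0 + 1) (2 * r0)} := by
        ext u
        rw [Finset.mem_filter, Finset.mem_singleton]
        constructor
        · rintro ⟨hu, hexc⟩
          obtain ⟨hne, h0, hsc⟩ := hTmem u hu
          obtain ⟨r, hr, hcase⟩ := exc_char u hne h0 hexc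
          rcases hcase with ⟨he, h'⟩ | ⟨he, h'⟩
          · omega
          · have : r = r0 := by omega
            rw [he, this]
        · rintro rfl
          obtain ⟨e1, e2, e3, e4⟩ := excB r0 hr0.1
          refine ⟨?_, e1⟩
          rw [hT, Finset.mem_filter, Finset.mem_powerset]
          constructor
          · intro x hx
            rw [Finset.mem_Icc] at hx ⊢
            omega
          · omega
      rw [hE, Finset.sum_singleton]
      obtain ⟨e1, e2, e3, e4⟩ := excB r0 hr0.1
      rw [e3, e4]
      rw [if_neg (by omega), Finset.sum_eq_single_of_mem r0 (by rw [Finset.mem_Icc]; omega)]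
      · rw [if_neg (by omega), if_pos (by omega)]; ring
      · intro r' hr' hner'
        rw [Finset.mem_Icc] at hr'
        rw [if_neg (by omega), if_neg (by omega)]; ring
    · -- a % 3 = 1 : no exceptional terms
      have hE : T.filter (fun s => isExc s) = ∅ := by
        rw [Finset.eq_empty_iff_forall_notMem]
        intro u hu
        rw [Finset.mem_filter] at hu
        obtain ⟨hne, h0, hsc⟩ := hTmem u hu.1
        obtain ⟨r, hr, hcase⟩ := exc_char u hne h0 hu.2
        rcases hcase with ⟨-, h'⟩ | ⟨-, h'⟩ <;> omega
      rw [hE, Finset.sum_empty, if_neg (by omega)]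
      rw [Finset.sum_eq_zero, add_zero]
      intro r' hr'
      rw [Finset.mem_Icc] at hr'
      rw [if_neg (by omega), if_neg (by omega)]; ring
    · -- a = 3 * r0 - 1
      set r0 := (a + 1) / 3 with hr0def
      have hr0 : 1 ≤ r0 ∧ a = 3 * r0 - 1 := by omega
      have hE : T.filter (fun s => isExc s) = {Finset.Icc r0 (2 * r0 - 1)} := by
        ext u
        rw [Finset.mem_filter, Finset.mem_singleton]
        constructor
        · rintro ⟨hu, hexc⟩
          obtain ⟨hne, h0, hsc⟩ := hTmem u hu
          obtain ⟨r, hr, hcase⟩ := exc_char u hne h0 hexc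
          rcases hcase with ⟨he, h'⟩ | ⟨he, h'⟩
          · have : r = r0 := by omega
            rw [he, this]
          · omega
        · rintro rfl
          obtain ⟨e1, e2, e3, e4⟩ := excA r0 hr0.1
          refine ⟨?_, e1⟩
          rw [hT, Finset.mem_filter, Finset.mem_powerset]
          constructor
          · intro x hx
            rw [Finset.mem_Icc] at hx ⊢
            omega
          · omega
      rw [hE, Finset.sum_singleton]
      obtain ⟨e1, e2, e3, e4⟩ := excA r0 hr0.1
      rw [e3, e4]
      rw [if_neg (by omega), Finset.sum_eq_single_of_mem r0 (by rw [Finset.mem_Icc]; omega)]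
      · rw [if_pos (by omega), if_neg (by omega)]; ring
      · intro r' hr' hner'
        rw [Finset.mem_Icc] at hr'
        rw [if_neg (by omega), if_neg (by omega)]; ring
end

section
/- The series T(x) = 1 + Σ_{r=1}^∞ (−1)^r [x^{3r−1} q^{r(3r−1)/2} + x^{3r} q^{r(3r+1)/2}] ∈ ℤ⟦x, q⟧ satisfies the functional equation T(x) = 1 − q x² − q² x³ T(qx), where T(qx) denotes the series obtained from T(x) by substituting qx for x. -/
open PowerSeries Finset

/-- The `r`-th term of the coefficient of `x^a`. -/
noncomputable def pterm (a r : ℕ) : PowerSeries ℤ :=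
  (-1 : PowerSeries ℤ) ^ r *
    ((if a = 3 * r - 1 then (PowerSeries.X : PowerSeries ℤ) ^ (r * (3 * r - 1) / 2) else 0) +
     (if a = 3 * r then (PowerSeries.X : PowerSeries ℤ) ^ (r * (3 * r + 1) / 2) else 0))

/-- The coefficient of `x^a` in `T`. -/
noncomputable def Fc (a : ℕ) : PowerSeries ℤ :=
  (if a = 0 then 1 else 0) + ∑ r ∈ Finset.Icc 1 a, pterm a r

lemma pent_eq : pentagonalXqSeries = PowerSeries.mk Fc := rfl

lemma pterm_eq_zero {a r : ℕ} (h1 : a ≠ 3 * r - 1) (h2 : a ≠ 3 * r) : pterm a r = 0 := by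
  simp [pterm, h1, h2]

lemma exp1 (i : ℕ) : (i+2) * (3*(i+2)-1) / 2 = (3*i+4) + (i+1)*(3*(i+1)-1)/2 := by
  obtain ⟨k, hk⟩ : 2 ∣ (i+1) * (3*i+2) := by
    rcases Nat.even_or_odd i with ⟨j, rfl⟩ | ⟨j, rfl⟩
    · exact ⟨(j+j+1)*(3*j+1), by ring⟩
    · exact ⟨(j+1)*(6*j+5), by ring⟩
  have h1 : 3*(i+1)-1 = 3*i+2 := by omega
  have h2 : 3*(i+2)-1 = 3*i+5 := by omega
  rw [h1, h2]
  have h3 : (i+2)*(3*i+5) = (i+1)*(3*i+2) + (6*i+8) := by ring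
  rw [h3, hk]
  omega

lemma exp2 (i : ℕ) : (i+2) * (3*(i+2)+1) / 2 = (3*i+5) + (i+1)*(3*(i+1)+1)/2 := by
  obtain ⟨k, hk⟩ : 2 ∣ (i+1) * (3*(i+1)+1) := by
    rcases Nat.even_or_odd i with ⟨j, rfl⟩ | ⟨j, rfl⟩
    · exact ⟨(j+j+1)*(3*j+2), by ring⟩
    · exact ⟨(j+1)*(6*j+7), by ring⟩
  have h3 : (i+2)*(3*(i+2)+1) = (i+1)*(3*(i+1)+1) + (6*i+10) := by ring
  rw [h3, hk]
  omega

lemma pterm_rec (a i : ℕ) :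
    pterm (a+3) (i+2) = -((PowerSeries.X : PowerSeries ℤ) ^ (a+2) * pterm a (i+1)) := by
  by_cases h1 : a = 3*(i+1) - 1
  · have ha : a = 3*i+2 := by omega
    subst ha
    have c1 : 3*i+2+3 = 3*(i+2)-1 := by omega
    have c2 : 3*i+2+3 ≠ 3*(i+2) := by omega
    have c3 : 3*i+2 ≠ 3*(i+1) := by omega
    simp only [pterm, if_pos c1, if_neg c2, if_pos h1, if_neg c3]
    rw [exp1 i, show (3*i+2+2 : ℕ) = 3*i+4 from by omega, pow_add]
    ring
  · by_cases h2 : a = 3*(i+1)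
    · subst h2
      have c1 : 3*(i+1)+3 ≠ 3*(i+2)-1 := by omega
      have c2 : 3*(i+1)+3 = 3*(i+2) := by omega
      have c3 : 3*(i+1) ≠ 3*(i+1)-1 := by omega
      simp only [pterm, if_neg c1, if_pos c2, if_neg c3, eq_self_iff_true, if_true]
      rw [exp2 i, show (3*(i+1)+2 : ℕ) = 3*i+5 from by omega, pow_add]
      ring
    · have c1 : a+3 ≠ 3*(i+2)-1 := by omega
      have c2 : a+3 ≠ 3*(i+2) := by omega
      rw [pterm_eq_zero c1 c2, pterm_eq_zero h1 h2, mul_zero, neg_zero]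

lemma pterm_one (a : ℕ) :
    pterm (a+3) 1 = -((PowerSeries.X : PowerSeries ℤ) ^ (a+2) *
      (if a = 0 then 1 else 0)) := by
  by_cases h : a = 0
  · subst h
    norm_num [pterm]
  · have c1 : a+3 ≠ 3*1-1 := by omega
    have c2 : a+3 ≠ 3*1 := by omega
    rw [pterm_eq_zero c1 c2]
    simp [h]

lemma Fc_rec (a : ℕ) : Fc (a+3) = -((PowerSeries.X : PowerSeries ℤ) ^ (a+2) * Fc a) := by
  unfold Fc
  rw [← Finset.Ico_add_one_right_eq_Icc, ← Finset.Ico_add_one_right_eq_Icc, Finset.sum_Ico_eq_sum_range,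
    Finset.sum_Ico_eq_sum_range]
  have e1 : a+3+1-1 = a+2+1 := by omega
  have e2 : a+1-1 = a := by omega
  rw [e1, e2, Finset.sum_range_succ']
  have hcongr : ∀ i ∈ Finset.range (a+2), pterm (a+3) (1+(i+1)) =
      -((PowerSeries.X : PowerSeries ℤ) ^ (a+2) * pterm a (1+i)) := by
    intro i _
    rw [show 1+(i+1) = i+2 from by omega, show 1+i = i+1 from by omega]
    exact pterm_rec a i
  rw [Finset.sum_congr rfl hcongr]
  have hzero1 : pterm a (1+a) = 0 := by
    apply pterm_eq_zero <;> omega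
  have hzero2 : pterm a (1+(a+1)) = 0 := by
    apply pterm_eq_zero <;> omega
  rw [show a+2 = (a+1)+1 from rfl, Finset.sum_range_succ, Finset.sum_range_succ,
    hzero1, hzero2, pterm_one]
  rw [Finset.sum_neg_distrib, ← Finset.mul_sum]
  rw [if_neg (show ¬(a + 3 = 0) from by omega)]
  ring

/-- `T(x) = 1 - q x² - q² x³ T(qx)`, where `T(qx)` is obtained by substituting `qx` for
`x`, i.e. by `rescale q` on `(ℤ⟦q⟧)⟦x⟧` (which multiplies the coefficient of `x^n` by `q^n`). -/
theorem pentagonalXqSeries_functional_equation :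
    pentagonalXqSeries = 1 - qv * xv ^ 2 - qv ^ 2 * xv ^ 3 *
      PowerSeries.rescale (PowerSeries.X : PowerSeries ℤ) pentagonalXqSeries := by
  rw [pent_eq]
  refine PowerSeries.ext fun a => ?_
  rw [map_sub, map_sub, PowerSeries.coeff_one, PowerSeries.coeff_mk]
  have h2 : (PowerSeries.coeff a) (qv * xv ^ 2) =
      PowerSeries.X * (if a = 2 then 1 else 0) := by
    simp [qv, xv, PowerSeries.coeff_C_mul, PowerSeries.coeff_X_pow]
  have h3 : (PowerSeries.coeff a)
      (qv ^ 2 * xv ^ 3 * PowerSeries.rescale PowerSeries.X (PowerSeries.mk Fc)) =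
      if 3 ≤ a then (PowerSeries.X : PowerSeries ℤ) ^ 2 *
        ((PowerSeries.X : PowerSeries ℤ) ^ (a-3) * Fc (a-3)) else 0 := by
    have hre : qv ^ 2 * xv ^ 3 * PowerSeries.rescale PowerSeries.X (PowerSeries.mk Fc) =
        (PowerSeries.C (PowerSeries.X ^ 2 : PowerSeries ℤ) *
          PowerSeries.rescale PowerSeries.X (PowerSeries.mk Fc)) * PowerSeries.X ^ 3 := by
      simp only [qv, xv, map_pow]
      ring
    rw [hre, PowerSeries.coeff_mul_X_pow']
    split_ifs with h
    · rw [PowerSeries.coeff_C_mul, PowerSeries.coeff_rescale, PowerSeries.coeff_mk]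
    · rfl
  rw [h2, h3]
  match a with
  | 0 => simp [Fc]
  | 1 => norm_num [Fc, show Finset.Icc 1 1 = {1} from rfl, pterm]
  | 2 => norm_num [Fc, show Finset.Icc 1 2 = {1, 2} from rfl, pterm]
  | (a+3) =>
    rw [Fc_rec]
    have : a+3-3 = a := by omega
    rw [this]
    have c1 : a+3 ≠ 0 := by omega
    have c2 : a+3 ≠ 2 := by omega
    simp only [if_neg c1, if_neg c2, if_pos (show 3 ≤ a+3 from by omega)]
    rw [show a+2 = 2+a from by omega, pow_add]
    ring
end
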